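/- arXiv:1303.6706 — 11 statements merged into one kernel-verified Lean document; each statement's English description precedes it below -/
import Mathlib

section
/- Let a₁, a₂, a₃, a₄, a₆ be integers. There exists a unique formal power series w(z) = Σ_{n≥0} sₙ zⁿ ∈ ℤ⟦z⟧ with zero constant term satisfying the functional equation w(z) = z³ + a₁ z w(z) + a₂ z² w(z) + a₃ w(z)² + a₄ z w(z)² + a₆ w(z)³. Moreover its coefficients satisfy s₀ = s₁ = s₂ = 0, s₃ = 1, and for n ≥ 4, sₙ = a₁ s_{n−1} + a₂ s_{n−2} + a₃ Σ_{k+l=n} s_k s_l + a₄ Σ_{k+l=n−1} s_k s_l + a₆ Σ_{k+l+m=n} s_k s_l s_m. -/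
open PowerSeries Finset

/-- The functional equation satisfied by the formal expansion `w(z) = -1/y`
associated to the Weierstrass equation `y² + a₁xy + a₃y = x³ + a₂x² + a₄x + a₆`. -/
def WeierstrassFunEq (a₁ a₂ a₃ a₄ a₆ : ℤ) (w : PowerSeries ℤ) : Prop :=
  PowerSeries.constantCoeff w = 0 ∧
    w = X ^ 3 + C a₁ * X * w + C a₂ * X ^ 2 * w + C a₃ * w ^ 2 +
      C a₄ * X * w ^ 2 + C a₆ * w ^ 3

lemma conv₂ (f g : ℕ → ℤ) (hf : f 0 = 0) (hg : g 0 = 0) (n : ℕ) :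
    ∑ p ∈ Finset.HasAntidiagonal.antidiagonal n, f p.1 * g p.2 = ∑ k ∈ Finset.Ico 1 n, f k * g (n - k) := by
  rw [Finset.Nat.sum_antidiagonal_eq_sum_range_succ_mk]
  cases n with
  | zero => simp [hf]
  | succ m =>
      rw [Finset.sum_range_succ, Nat.sub_self, hg, mul_zero, add_zero,
        Finset.range_eq_Ico, Finset.sum_eq_sum_Ico_succ_bot (by omega), hf, zero_mul, zero_add]

def Fn (a₁ a₂ a₃ a₄ a₆ : ℤ) (n : ℕ) (s : ℕ → ℤ) : ℤ :=
  (if n = 3 then 1 else 0) + a₁ * s (n - 1) + a₂ * s (n - 2) +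
    a₃ * ∑ k ∈ Finset.Ico 1 n, s k * s (n - k) +
    a₄ * ∑ k ∈ Finset.Ico 1 (n - 1), s k * s (n - 1 - k) +
    a₆ * ∑ k ∈ Finset.Ico 1 n, s k * ∑ l ∈ Finset.Ico 1 (n - k), s l * s (n - k - l)

def An (a₁ a₂ a₃ a₄ a₆ : ℤ) (n : ℕ) (s : ℕ → ℤ) : ℤ :=
  (if n = 3 then 1 else 0) + a₁ * s (n - 1) + a₂ * s (n - 2) +
    a₃ * ∑ p ∈ Finset.HasAntidiagonal.antidiagonal n, s p.1 * s p.2 +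
    a₄ * ∑ p ∈ Finset.HasAntidiagonal.antidiagonal (n - 1), s p.1 * s p.2 +
    a₆ * ∑ p ∈ Finset.HasAntidiagonal.antidiagonal n, s p.1 * ∑ q ∈ Finset.HasAntidiagonal.antidiagonal p.2, s q.1 * s q.2

lemma An_eq_Fn (a₁ a₂ a₃ a₄ a₆ : ℤ) (s : ℕ → ℤ) (h0 : s 0 = 0) (n : ℕ) :
    An a₁ a₂ a₃ a₄ a₆ n s = Fn a₁ a₂ a₃ a₄ a₆ n s := by
  have hg : (fun m => ∑ q ∈ Finset.HasAntidiagonal.antidiagonal m, s q.1 * s q.2) 0 = 0 := by simp [h0]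
  unfold An Fn
  rw [conv₂ s s h0 h0 n, conv₂ s s h0 h0 (n - 1),
    conv₂ s (fun m => ∑ q ∈ Finset.HasAntidiagonal.antidiagonal m, s q.1 * s q.2) h0 hg n]
  congr 2
  refine Finset.sum_congr rfl fun k hk => ?_
  rw [conv₂ s s h0 h0 (n - k)]

lemma rhs_coeff (a₁ a₂ a₃ a₄ a₆ : ℤ) (w : PowerSeries ℤ)
    (h0 : PowerSeries.constantCoeff w = 0) (n : ℕ) :
    PowerSeries.coeff n (X ^ 3 + C a₁ * X * w + C a₂ * X ^ 2 * w + C a₃ * w ^ 2 +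
      C a₄ * X * w ^ 2 + C a₆ * w ^ 3) =
    An a₁ a₂ a₃ a₄ a₆ n (fun i => PowerSeries.coeff i w) := by
  have hXw : ∀ v : PowerSeries ℤ, PowerSeries.constantCoeff v = 0 →
      PowerSeries.coeff n (X * v) = PowerSeries.coeff (n - 1) v := by
    intro v hv
    cases n with
    | zero => simp [hv]
    | succ m => simpa using PowerSeries.coeff_succ_X_mul m v
  have h2 : PowerSeries.coeff n (X ^ 2 * w) = PowerSeries.coeff (n - 2) w := by
    match n with
    | 0 => simp [h0]
    | 1 =>
        rw [show (X ^ 2 * w : PowerSeries ℤ) = X * (X * w) by ring]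
        rw [PowerSeries.coeff_succ_X_mul]
        simp [h0]
    | (m + 2) => simpa using PowerSeries.coeff_X_pow_mul w 2 m
  have hsq0 : PowerSeries.constantCoeff (w ^ 2) = 0 := by simp [h0]
  have hsq : ∀ m : ℕ, PowerSeries.coeff m (w ^ 2) =
      ∑ p ∈ Finset.HasAntidiagonal.antidiagonal m, PowerSeries.coeff p.1 w * PowerSeries.coeff p.2 w := by
    intro m; rw [sq, PowerSeries.coeff_mul]
  have hcube : PowerSeries.coeff n (w ^ 3) =
      ∑ p ∈ Finset.HasAntidiagonal.antidiagonal n, PowerSeries.coeff p.1 w *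
        ∑ q ∈ Finset.HasAntidiagonal.antidiagonal p.2, PowerSeries.coeff q.1 w * PowerSeries.coeff q.2 w := by
    rw [pow_succ', PowerSeries.coeff_mul]
    exact Finset.sum_congr rfl fun p hp => by rw [hsq]
  unfold An
  rw [map_add, map_add, map_add, map_add, map_add, PowerSeries.coeff_X_pow,
    mul_assoc (C a₁), mul_assoc (C a₂), mul_assoc (C a₄),
    PowerSeries.coeff_C_mul, PowerSeries.coeff_C_mul, PowerSeries.coeff_C_mul,
    PowerSeries.coeff_C_mul, PowerSeries.coeff_C_mul,
    hXw w h0, h2, hsq, hXw (w ^ 2) hsq0, hsq, hcube]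

lemma Fn_congr (a₁ a₂ a₃ a₄ a₆ : ℤ) (n : ℕ) (hn : 1 ≤ n) (s t : ℕ → ℤ)
    (h : ∀ m, m < n → s m = t m) : Fn a₁ a₂ a₃ a₄ a₆ n s = Fn a₁ a₂ a₃ a₄ a₆ n t := by
  have hA : ∑ k ∈ Finset.Ico 1 n, s k * s (n - k) =
      ∑ k ∈ Finset.Ico 1 n, t k * t (n - k) := by
    refine Finset.sum_congr rfl fun k hk => ?_
    simp only [Finset.mem_Ico] at hk
    rw [h k (by omega), h (n - k) (by omega)]
  have hB : ∑ k ∈ Finset.Ico 1 (n - 1), s k * s (n - 1 - k) =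
      ∑ k ∈ Finset.Ico 1 (n - 1), t k * t (n - 1 - k) := by
    refine Finset.sum_congr rfl fun k hk => ?_
    simp only [Finset.mem_Ico] at hk
    rw [h k (by omega), h (n - 1 - k) (by omega)]
  have hC : ∑ k ∈ Finset.Ico 1 n, s k * ∑ l ∈ Finset.Ico 1 (n - k), s l * s (n - k - l) =
      ∑ k ∈ Finset.Ico 1 n, t k * ∑ l ∈ Finset.Ico 1 (n - k), t l * t (n - k - l) := by
    refine Finset.sum_congr rfl fun k hk => ?_
    simp only [Finset.mem_Ico] at hk
    rw [h k (by omega)]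
    congr 1
    refine Finset.sum_congr rfl fun l hl => ?_
    simp only [Finset.mem_Ico] at hl
    rw [h l (by omega), h (n - k - l) (by omega)]
  unfold Fn
  rw [h (n - 1) (by omega), h (n - 2) (by omega), hA, hB, hC]

lemma small_vals (a₁ a₂ a₃ a₄ a₆ : ℤ) (s : ℕ → ℤ) (h0 : s 0 = 0)
    (h : ∀ n, 1 ≤ n → s n = Fn a₁ a₂ a₃ a₄ a₆ n s) :
    s 1 = 0 ∧ s 2 = 0 ∧ s 3 = 1 := by
  have e1 : Finset.Ico 1 1 = (∅ : Finset ℕ) := rfl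
  have e2 : Finset.Ico 1 2 = ({1} : Finset ℕ) := rfl
  have e3 : Finset.Ico 1 3 = ({1, 2} : Finset ℕ) := by decide
  have h1 : s 1 = 0 := by
    have := h 1 (by omega); simp [Fn, e1, h0] at this; exact this
  have h2 : s 2 = 0 := by
    have := h 2 (by omega); simp [Fn, e1, e2, h0, h1] at this; exact this
  have h3 : s 3 = 1 := by
    have := h 3 (by omega); simp [Fn, e1, e2, e3, h0, h1, h2] at this; exact this
  exact ⟨h1, h2, h3⟩

def sw (a₁ a₂ a₃ a₄ a₆ : ℤ) : ℕ → ℤ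
  | 0 => 0
  | n + 1 =>
    (if n + 1 = 3 then 1 else 0) + a₁ * sw a₁ a₂ a₃ a₄ a₆ n +
      a₂ * sw a₁ a₂ a₃ a₄ a₆ (n - 1) +
      a₃ * ∑ k ∈ (Finset.Ico 1 (n + 1)).attach,
        sw a₁ a₂ a₃ a₄ a₆ k.1 * sw a₁ a₂ a₃ a₄ a₆ (n + 1 - k.1) +
      a₄ * ∑ k ∈ (Finset.Ico 1 n).attach,
        sw a₁ a₂ a₃ a₄ a₆ k.1 * sw a₁ a₂ a₃ a₄ a₆ (n - k.1) +
      a₆ * ∑ k ∈ (Finset.Ico 1 (n + 1)).attach,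
        sw a₁ a₂ a₃ a₄ a₆ k.1 *
          ∑ l ∈ (Finset.Ico 1 (n + 1 - k.1)).attach,
            sw a₁ a₂ a₃ a₄ a₆ l.1 * sw a₁ a₂ a₃ a₄ a₆ (n + 1 - k.1 - l.1)
  decreasing_by
    all_goals first
      | omega
      | (have := k.2; simp only [Finset.mem_Ico] at this; omega)
      | (have hk := k.2; have hl := l.2; simp only [Finset.mem_Ico] at hk hl; omega)

lemma sw_eq_Fn (a₁ a₂ a₃ a₄ a₆ : ℤ) (n : ℕ) :
    sw a₁ a₂ a₃ a₄ a₆ n = Fn a₁ a₂ a₃ a₄ a₆ n (sw a₁ a₂ a₃ a₄ a₆) := by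
  cases n with
  | zero => simp [sw, Fn]
  | succ m =>
      rw [sw, Fn]
      rw [Finset.sum_attach (Finset.Ico 1 (m + 1))
          (fun k => sw a₁ a₂ a₃ a₄ a₆ k * sw a₁ a₂ a₃ a₄ a₆ (m + 1 - k)),
        Finset.sum_attach (Finset.Ico 1 m)
          (fun k => sw a₁ a₂ a₃ a₄ a₆ k * sw a₁ a₂ a₃ a₄ a₆ (m - k)),
        Finset.sum_attach (Finset.Ico 1 (m + 1))
          (fun k => sw a₁ a₂ a₃ a₄ a₆ k *
            ∑ l ∈ (Finset.Ico 1 (m + 1 - k)).attach,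
              sw a₁ a₂ a₃ a₄ a₆ l.1 * sw a₁ a₂ a₃ a₄ a₆ (m + 1 - k - l.1))]
      have hinner : ∀ k ∈ Finset.Ico 1 (m + 1),
          sw a₁ a₂ a₃ a₄ a₆ k *
            ∑ l ∈ (Finset.Ico 1 (m + 1 - k)).attach,
              sw a₁ a₂ a₃ a₄ a₆ l.1 * sw a₁ a₂ a₃ a₄ a₆ (m + 1 - k - l.1) =
          sw a₁ a₂ a₃ a₄ a₆ k *
            ∑ l ∈ Finset.Ico 1 (m + 1 - k),
              sw a₁ a₂ a₃ a₄ a₆ l * sw a₁ a₂ a₃ a₄ a₆ (m + 1 - k - l) := by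
        intro k hk
        rw [Finset.sum_attach (Finset.Ico 1 (m + 1 - k))
          (fun l => sw a₁ a₂ a₃ a₄ a₆ l * sw a₁ a₂ a₃ a₄ a₆ (m + 1 - k - l))]
      rw [Finset.sum_congr rfl hinner, show m + 1 - 2 = m - 1 by omega]
      simp only [Nat.add_sub_cancel]

theorem stmt0 (a₁ a₂ a₃ a₄ a₆ : ℤ) :
    (∃! w : PowerSeries ℤ, WeierstrassFunEq a₁ a₂ a₃ a₄ a₆ w) ∧
    ∀ w : PowerSeries ℤ, WeierstrassFunEq a₁ a₂ a₃ a₄ a₆ w →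
      (fun s : ℕ → ℤ =>
        s 0 = 0 ∧ s 1 = 0 ∧ s 2 = 0 ∧ s 3 = 1 ∧
        ∀ n : ℕ, 4 ≤ n →
          s n = a₁ * s (n - 1) + a₂ * s (n - 2) +
            a₃ * (∑ p ∈ Finset.HasAntidiagonal.antidiagonal n, s p.1 * s p.2) +
            a₄ * (∑ p ∈ Finset.HasAntidiagonal.antidiagonal (n - 1), s p.1 * s p.2) +
            a₆ * (∑ p ∈ Finset.HasAntidiagonal.antidiagonal n,
                    ∑ q ∈ Finset.HasAntidiagonal.antidiagonal p.2, s p.1 * s q.1 * s q.2))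
      (fun i => PowerSeries.coeff i w) := by
  -- key facts for any solution
  have key : ∀ w : PowerSeries ℤ, WeierstrassFunEq a₁ a₂ a₃ a₄ a₆ w → ∀ n : ℕ,
      PowerSeries.coeff n w = An a₁ a₂ a₃ a₄ a₆ n (fun i => PowerSeries.coeff i w) := by
    intro w hw n
    conv_lhs => rw [hw.2]
    exact rhs_coeff a₁ a₂ a₃ a₄ a₆ w hw.1 n
  have h0' : ∀ w : PowerSeries ℤ, WeierstrassFunEq a₁ a₂ a₃ a₄ a₆ w →
      (fun i => PowerSeries.coeff i w) 0 = 0 := by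
    intro w hw
    simpa [PowerSeries.coeff_zero_eq_constantCoeff] using hw.1
  have keyF : ∀ w : PowerSeries ℤ, WeierstrassFunEq a₁ a₂ a₃ a₄ a₆ w → ∀ n : ℕ,
      PowerSeries.coeff n w = Fn a₁ a₂ a₃ a₄ a₆ n (fun i => PowerSeries.coeff i w) := by
    intro w hw n
    rw [key w hw n, An_eq_Fn _ _ _ _ _ _ (h0' w hw)]
  -- existence
  have hsw0 : sw a₁ a₂ a₃ a₄ a₆ 0 = 0 := by simp [sw]
  have hex : WeierstrassFunEq a₁ a₂ a₃ a₄ a₆ (PowerSeries.mk (sw a₁ a₂ a₃ a₄ a₆)) := by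
    constructor
    · simp [hsw0]
    · ext n
      rw [PowerSeries.coeff_mk,
        rhs_coeff a₁ a₂ a₃ a₄ a₆ _ (by simp [hsw0]) n]
      have : An a₁ a₂ a₃ a₄ a₆ n (fun i => PowerSeries.coeff i (PowerSeries.mk (sw a₁ a₂ a₃ a₄ a₆)))
          = An a₁ a₂ a₃ a₄ a₆ n (sw a₁ a₂ a₃ a₄ a₆) := by
        simp only [PowerSeries.coeff_mk]
      rw [this, An_eq_Fn _ _ _ _ _ _ hsw0, ← sw_eq_Fn]
  -- uniqueness
  have huniq : ∀ w w' : PowerSeries ℤ, WeierstrassFunEq a₁ a₂ a₃ a₄ a₆ w →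
      WeierstrassFunEq a₁ a₂ a₃ a₄ a₆ w' → w = w' := by
    intro w w' hw hw'
    ext n
    induction n using Nat.strong_induction_on with
    | _ n ih =>
        match n with
        | 0 => simp [PowerSeries.coeff_zero_eq_constantCoeff, hw.1, hw'.1]
        | m + 1 =>
            rw [keyF w hw, keyF w' hw']
            exact Fn_congr a₁ a₂ a₃ a₄ a₆ (m + 1) (by omega) _ _ fun k hk => ih k hk
  refine ⟨⟨PowerSeries.mk (sw a₁ a₂ a₃ a₄ a₆), hex, fun w hw => huniq w _ hw hex⟩, ?_⟩
  intro w hw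
  have hs0 : PowerSeries.coeff 0 w = 0 := h0' w hw
  obtain ⟨hs1, hs2, hs3⟩ := small_vals a₁ a₂ a₃ a₄ a₆ (fun i => PowerSeries.coeff i w)
    hs0 (fun n _ => keyF w hw n)
  refine ⟨hs0, hs1, hs2, hs3, ?_⟩
  intro n hn
  show PowerSeries.coeff n w = _
  rw [key w hw n]
  unfold An
  rw [if_neg (by omega), zero_add]
  congr 1
  simp only [Finset.mul_sum, mul_assoc]
end

section
/- Let a₁, a₂, a₃, a₄ be integers and let F ∈ ℤ⟦z⟧ be the unique formal power series with constant term 1 satisfying F(z)² · ((1 − a₁z − a₂z²)² − 4z³(a₃ + a₄z)) = 1. Then for every n ≥ 0 the coefficient of zⁿ in F equals Σ_{m=⌊n/2⌋}^{n} Σ_{k=0}^{⌊m/2⌋} Σ_{r=0}^{n−m−k} C(m,k)·C(m−k,k)·C(m−2k,r)·C(k, n−m−k−r) · a₁^{m−2k−r} a₂^{r} a₃^{2k−n+m+r} a₄^{n−m−k−r}, where terms with a negative exponent (equivalently, with a vanishing binomial coefficient) are zero. -/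
open PowerSeries Finset

/-- `bCoeff a₁ a₂ a₃ a₄ n = b(n+1)`, the coefficient of `zⁿ` in the `z`-expansion of the
invariant differential of `y² + a₁xy + a₃y = x³ + a₂x² + a₄x`.  The inner sum over `r`
ranges over `0 ≤ r ≤ n - m - k` (and is empty when `m + k > n`); terms with a negative
exponent carry a vanishing binomial coefficient, so truncated subtraction is harmless. -/
def bCoeff (a₁ a₂ a₃ a₄ : ℤ) (n : ℕ) : ℤ :=
  ∑ m ∈ Finset.Icc (n / 2) n, ∑ k ∈ Finset.range (m / 2 + 1),
    ∑ r ∈ Finset.range (n + 1 - m - k),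
      (m.choose k * (m - k).choose k * (m - 2 * k).choose r *
        k.choose (n - m - k - r) : ℤ) *
        a₁ ^ (m - 2 * k - r) * a₂ ^ r * a₃ ^ (2 * k + m + r - n) * a₄ ^ (n - m - k - r)

noncomputable section StmtAux


def Ser (f : ℕ → PowerSeries ℤ) : PowerSeries ℤ :=
  PowerSeries.mk fun n => ∑ j ∈ Finset.range (n+1), PowerSeries.coeff n (f j)

lemma coeff_Ser (f : ℕ → PowerSeries ℤ) (n : ℕ) :
    coeff n (Ser f) = ∑ j ∈ range (n+1), coeff n (f j) := coeff_mk _ _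

def OrdGE (f : ℕ → PowerSeries ℤ) : Prop := ∀ j n, n < j → coeff n (f j) = 0

lemma Ser_mul (f : ℕ → PowerSeries ℤ) (hf : OrdGE f) (g : PowerSeries ℤ) :
    Ser f * g = Ser (fun j => f j * g) := by
  ext n
  rw [coeff_mul, coeff_Ser]
  have : ∀ p ∈ antidiagonal n,
      coeff p.1 (Ser f) * coeff p.2 g
        = ∑ j ∈ range (n+1), coeff p.1 (f j) * coeff p.2 g := by
    intro p hp
    rw [coeff_Ser, sum_mul]
    have hple : p.1 ≤ n := by have := mem_antidiagonal.1 hp; omega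
    apply Finset.sum_subset (Finset.range_subset_range.2 (by omega))
    intro j _ hj
    simp only [mem_range, not_lt] at hj
    rw [hf j p.1 (by omega), zero_mul]
  rw [Finset.sum_congr rfl this, Finset.sum_comm]
  refine Finset.sum_congr rfl fun j _ => ?_
  rw [coeff_mul]

lemma triangle (n : ℕ) (t : ℕ → ℕ → ℤ) (h : ∀ k l, n < k + l → t k l = 0) :
    ∑ k ∈ range (n+1), ∑ l ∈ range (n+1), t k l
      = ∑ K ∈ range (n+1), ∑ p ∈ antidiagonal K, t p.1 p.2 := by
  have step1 : ∀ k ≤ n, ∑ l ∈ range (n+1), t k l = ∑ K ∈ Ico k (n+1), t k (K - k) := by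
    intro k hk
    rw [Finset.sum_Ico_eq_sum_range]
    calc ∑ l ∈ range (n+1), t k l
        = ∑ l ∈ range (n+1-k), t k l := by
          refine (Finset.sum_subset (Finset.range_subset_range.2 (by omega)) ?_).symm
          intro l _ hl
          simp only [mem_range, not_lt] at hl
          exact h k l (by omega)
      _ = ∑ j ∈ range (n+1-k), t k (k + j - k) := by
          exact Finset.sum_congr rfl fun j _ => by congr 1; omega
  calc ∑ k ∈ range (n+1), ∑ l ∈ range (n+1), t k l
      = ∑ k ∈ range (n+1), ∑ K ∈ Ico k (n+1), t k (K - k) := by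
        refine Finset.sum_congr rfl fun k hk => step1 k (by simpa using Nat.lt_succ_iff.1 (mem_range.1 hk))
    _ = ∑ k ∈ Ico 0 (n+1), ∑ K ∈ Ico k (n+1), t k (K - k) := by rw [Finset.range_eq_Ico]
    _ = ∑ K ∈ Ico 0 (n+1), ∑ k ∈ Ico 0 (K+1), t k (K - k) := Finset.sum_Ico_Ico_comm 0 (n+1) _
    _ = ∑ K ∈ range (n+1), ∑ k ∈ range (K+1), t k (K - k) := by
        simp only [Finset.range_eq_Ico]
    _ = ∑ K ∈ range (n+1), ∑ p ∈ antidiagonal K, t p.1 p.2 := by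
        refine Finset.sum_congr rfl fun K _ => ?_
        rw [Finset.Nat.sum_antidiagonal_eq_sum_range_succ_mk]


lemma desc_smeval_eq_prod (q : ℚ) : ∀ k : ℕ,
    Polynomial.smeval (descPochhammer ℤ k) q = ∏ i ∈ range k, (q - i) := by
  intro k
  induction k with
  | zero => simp [descPochhammer_zero, Polynomial.smeval_one]
  | succ k ih =>
    rw [descPochhammer_succ_right, Polynomial.smeval_mul, ih, prod_range_succ,
      Polynomial.smeval_sub, Polynomial.smeval_X, Polynomial.smeval_natCast]
    ring

lemma ring_choose_eq (q : ℚ) (k : ℕ) :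
    Ring.choose q k = (∏ i ∈ range k, (q - i)) / k.factorial := by
  have h := Ring.descPochhammer_eq_factorial_smul_choose q k
  rw [desc_smeval_eq_prod] at h
  have hf : ((k.factorial : ℚ)) ≠ 0 := by exact_mod_cast k.factorial_ne_zero
  rw [eq_div_iff hf, h, nsmul_eq_mul]
  ring

lemma ring_choose_neg_one (K : ℕ) : Ring.choose (-1 : ℚ) K = (-1) ^ K := by
  rw [ring_choose_eq]
  have : ∏ i ∈ range K, ((-1 : ℚ) - i) = (-1)^K * K.factorial := by
    induction K with
    | zero => simp
    | succ K ih => rw [prod_range_succ, ih, Nat.factorial_succ]; push_cast; ring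
  rw [this]
  have hf : ((K.factorial : ℚ)) ≠ 0 := by exact_mod_cast K.factorial_ne_zero
  field_simp

lemma ring_choose_neg_half (k : ℕ) :
    Ring.choose (-(1/2) : ℚ) k = (-(1/4))^k * k.centralBinom := by
  rw [ring_choose_eq]
  have key : ∀ k : ℕ, (∏ i ∈ range k, ((-(1/2) : ℚ) - i)) * (4:ℚ)^k * k.factorial
      = (-1)^k * (2*k).factorial := by
    intro k
    induction k with
    | zero => simp
    | succ k ih =>
      rw [prod_range_succ]
      have h2 : ((2*(k+1)).factorial : ℚ) = (2*k+2) * ((2*k+1) * (2*k).factorial) := by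
        have e : 2*(k+1) = (2*k+1) + 1 := by ring
        rw [e, Nat.factorial_succ, Nat.factorial_succ]; push_cast; ring
      rw [h2, Nat.factorial_succ]
      push_cast
      linear_combination (4*((k:ℚ)+1)*(-(1/2) - k)) * ih
  have hf : ((k.factorial : ℚ)) ≠ 0 := by exact_mod_cast k.factorial_ne_zero
  have h4 : ((4:ℚ))^k ≠ 0 := by positivity
  have hcb : (k.centralBinom : ℚ) * k.factorial * k.factorial = (2*k).factorial := by
    have h1 := Nat.choose_mul_factorial_mul_factorial (show k ≤ 2*k by omega)
    have h' : k.centralBinom * (k.factorial * k.factorial) = (2*k).factorial := by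
      rw [Nat.centralBinom]
      rw [show 2*k - k = k by omega] at h1
      rw [← h1]; ring
    have h'' := congrArg (Nat.cast : ℕ → ℚ) h'
    push_cast at h''
    linarith [h'']
  rw [div_eq_iff hf]
  have key' := key k
  have hneg : ((-(1/4):ℚ))^k * (4:ℚ)^k = (-1)^k := by
    rw [← mul_pow]; norm_num
  apply mul_right_cancel₀ h4
  apply mul_right_cancel₀ hf
  have e1 : (∏ i ∈ range k, ((-(1/2) : ℚ) - i)) * 4 ^ k * ↑k.factorial
      = (-1)^k * (2*k).factorial := key'
  rw [show (∏ i ∈ range k, ((-(1/2) : ℚ) - i)) * 4 ^ k * ↑k.factorial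
      = (∏ i ∈ range k, ((-(1/2) : ℚ) - i)) * 4 ^ k * ↑k.factorial from rfl]
  rw [e1, ← hcb]
  linear_combination ((↑k.centralBinom : ℚ) * ↑k.factorial * ↑k.factorial) * hneg.symm

lemma centralBinom_conv (K : ℕ) :
    ∑ p ∈ antidiagonal K, (Nat.centralBinom p.1 * Nat.centralBinom p.2 : ℤ) = 4 ^ K := by
  have h := Ring.add_choose_eq (r := (-(1/2):ℚ)) (s := -(1/2)) K (Commute.all _ _)
  rw [show (-(1/2) + -(1/2) : ℚ) = -1 by norm_num, ring_choose_neg_one] at h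
  have h2 : ((-1:ℚ))^K
      = ∑ p ∈ antidiagonal K, (-(1/4):ℚ)^K * (p.1.centralBinom * p.2.centralBinom) := by
    rw [h]
    refine sum_congr rfl fun p hp => ?_
    rw [ring_choose_neg_half, ring_choose_neg_half]
    rw [← mem_antidiagonal.1 hp, pow_add]
    ring
  rw [← Finset.mul_sum] at h2
  have h4 : ((-(1/4):ℚ))^K ≠ 0 := by
    apply pow_ne_zero; norm_num
  have hS : (∑ p ∈ antidiagonal K, ((p.1.centralBinom : ℚ) * p.2.centralBinom)) = 4^K := by
    have hneg : ((-1:ℚ))^K = (-(1/4):ℚ)^K * 4^K := by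
      rw [← mul_pow]; norm_num
    rw [hneg] at h2
    exact mul_left_cancel₀ h4 h2.symm
  have := hS
  push_cast at this
  exact_mod_cast this

lemma coeff_zero_of_X_pow_dvd {h : PowerSeries ℤ} {j n : ℕ} (hd : X^j ∣ h) (hn : n < j) :
    coeff n h = 0 := (PowerSeries.X_pow_dvd_iff.mp hd) n hn



lemma N1 (k m : ℕ) : (2*k+m).choose k * (k+m).choose k
    = Nat.centralBinom k * (2*k+m).choose m := by
  have E : 0 < k.factorial * k.factorial * m.factorial * (k+m).factorial := by positivity
  apply Nat.eq_of_mul_eq_mul_right E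
  have h1 : (2*k+m).choose k * k.factorial * (k+m).factorial = (2*k+m).factorial := by
    have := Nat.choose_mul_factorial_mul_factorial (show k ≤ 2*k+m by omega)
    rw [show 2*k+m-k = k+m by omega] at this
    exact this
  have h2 : (k+m).choose k * k.factorial * m.factorial = (k+m).factorial := by
    have := Nat.choose_mul_factorial_mul_factorial (show k ≤ k+m by omega)
    rw [show k+m-k = m by omega] at this
    exact this
  have h3 : Nat.centralBinom k * k.factorial * k.factorial = (2*k).factorial := by
    have := Nat.choose_mul_factorial_mul_factorial (show k ≤ 2*k by omega)
    rw [show 2*k-k = k by omega] at this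
    rw [Nat.centralBinom]
    exact this
  calc (2*k+m).choose k * (k+m).choose k * (k.factorial * k.factorial * m.factorial * (k+m).factorial)
      = ((k+m).choose k * k.factorial * m.factorial) * ((2*k+m).choose k * k.factorial * (k+m).factorial) := by ring
    _ = (k+m).factorial * (2*k+m).factorial := by rw [h1, h2]
    _ = (k+m).factorial * ((2*k+m).choose m * m.factorial * (2*k).factorial) := by
        have h4 := Nat.choose_mul_factorial_mul_factorial (show m ≤ 2*k+m by omega)
        rw [show 2*k+m-m = 2*k by omega] at h4
        rw [h4]
    _ = (k+m).factorial * ((2*k+m).choose m * m.factorial * (Nat.centralBinom k * k.factorial * k.factorial)) := by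
        rw [h3]
    _ = Nat.centralBinom k * (2*k+m).choose m * (k.factorial * k.factorial * m.factorial * (k+m).factorial) := by
        ring

lemma pick (c n : ℕ) (t : ℕ → ℤ) :
    ∑ s ∈ range (n+1), (if c + s = n then t s else 0)
      = if c ≤ n then t (n - c) else 0 := by
  by_cases h : c ≤ n
  · rw [if_pos h, Finset.sum_eq_single (n - c)]
    · rw [if_pos (by omega)]
    · intro s _ hs
      rw [if_neg (by omega)]
    · intro hmem
      exact absurd (mem_range.2 (by omega)) hmem
  · rw [if_neg h]
    exact Finset.sum_eq_zero fun s _ => by rw [if_neg (by omega)]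

section params
variable (a₁ a₂ a₃ a₄ : ℤ)

def xx : PowerSeries ℤ := C a₂ * X + C a₁
def ww : PowerSeries ℤ := C a₄ * X + C a₃
def uu : PowerSeries ℤ := Ser fun m => xx a₁ a₂ ^ m * X ^ m
def GG : PowerSeries ℤ :=
  (1 - C a₁ * X - C a₂ * X ^ 2) ^ 2 - 4 * X ^ 3 * (C a₃ + C a₄ * X)

lemma ordge_xpow : OrdGE (fun m => xx a₁ a₂ ^ m * X ^ m) := by
  intro j n hn
  exact coeff_zero_of_X_pow_dvd ⟨xx a₁ a₂ ^ j, by ring⟩ hn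

lemma uu_spec : uu a₁ a₂ * (1 - xx a₁ a₂ * X) = 1 := by
  rw [uu, Ser_mul _ (ordge_xpow a₁ a₂)]
  ext n
  rw [coeff_Ser]
  have : ∀ m, (xx a₁ a₂ ^ m * X ^ m) * (1 - xx a₁ a₂ * X)
      = xx a₁ a₂ ^ m * X ^ m - xx a₁ a₂ ^ (m+1) * X ^ (m+1) := by intro m; ring
  simp only [this, map_sub]
  rw [Finset.sum_range_sub' (fun m => coeff n (xx a₁ a₂ ^ m * X ^ m))]
  rw [coeff_zero_of_X_pow_dvd (j := n+1) (h := xx a₁ a₂ ^ (n+1) * X ^ (n+1)) ⟨xx a₁ a₂ ^ (n+1), by ring⟩ (by omega)]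
  simp

lemma uu_pow (i : ℕ) : uu a₁ a₂ ^ (i+1)
    = Ser fun m => C ((i+m).choose m : ℤ) * xx a₁ a₂ ^ m * X ^ m := by
  induction i with
  | zero =>
    rw [pow_one, uu]
    congr 1; funext m; simp
  | succ i ih =>
    have hord : OrdGE (fun m => C ((i+m).choose m : ℤ) * xx a₁ a₂ ^ m * X ^ m) := by
      intro j n hn
      exact coeff_zero_of_X_pow_dvd ⟨C ((i+j).choose j : ℤ) * xx a₁ a₂ ^ j, by ring⟩ hn
    have : uu a₁ a₂ ^ (i+2) = uu a₁ a₂ * uu a₁ a₂ ^ (i+1) := by ring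
    rw [this, ih, uu, Ser_mul _ (ordge_xpow a₁ a₂)]
    ext n
    rw [coeff_Ser, coeff_Ser]
    have inner : ∀ m, coeff n ((xx a₁ a₂ ^ m * X ^ m) *
        Ser (fun l => C ((i+l).choose l : ℤ) * xx a₁ a₂ ^ l * X ^ l))
        = ∑ l ∈ range (n+1), ((i+l).choose l : ℤ) * coeff n (xx a₁ a₂ ^ (m+l) * X ^ (m+l)) := by
      intro m
      rw [mul_comm, Ser_mul _ hord, coeff_Ser]
      refine Finset.sum_congr rfl fun l _ => ?_
      rw [show (C ((i+l).choose l : ℤ) * xx a₁ a₂ ^ l * X ^ l) * (xx a₁ a₂ ^ m * X ^ m)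
        = C ((i+l).choose l : ℤ) * (xx a₁ a₂ ^ (m+l) * X ^ (m+l)) by ring, coeff_C_mul]
    simp only [inner]
    rw [triangle n (fun m l => ((i+l).choose l : ℤ) * coeff n (xx a₁ a₂ ^ (m+l) * X ^ (m+l)))
      (by
        intro k l h
        rw [coeff_zero_of_X_pow_dvd (j := k+l) ⟨xx a₁ a₂ ^ (k+l), by ring⟩ (by omega), mul_zero])]
    refine Finset.sum_congr rfl fun K _ => ?_
    rw [mul_assoc, coeff_C_mul]
    rw [Finset.Nat.sum_antidiagonal_eq_sum_range_succ_mk]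
    have : ∀ p ∈ range (K+1), ((i+(K-p)).choose (K-p) : ℤ) * coeff n (xx a₁ a₂ ^ (p+(K-p)) * X ^ (p+(K-p)))
        = ((i+(K-p)).choose (K-p) : ℤ) * coeff n (xx a₁ a₂ ^ K * X ^ K) := by
      intro p hp
      simp only [mem_range] at hp
      have e : p + (K - p) = K := by omega
      rw [e]
    rw [Finset.sum_congr rfl this, ← Finset.sum_mul]
    congr 1
    have hnat : ∑ p ∈ range (K+1), (i+(K-p)).choose (K-p) = (i+1+K).choose K := by
      have h1 : ∑ p ∈ range (K+1), (i+(K-p)).choose (K-p)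
          = ∑ j ∈ range (K+1), (i+j).choose j := by
        rw [← Finset.sum_range_reflect (fun j => (i+j).choose j) (K+1)]
        refine Finset.sum_congr rfl fun j hj => ?_
        simp only [mem_range] at hj
        have e : K + 1 - 1 - j = K - j := by omega
        rw [e]
      rw [h1]
      have h2 : ∀ j, (i+j).choose j = (j+i).choose i := by
        intro j
        rw [Nat.add_comm i j, ← Nat.choose_symm (by omega : i ≤ j+i)]
        congr 1
        omega
      simp only [h2]
      rw [Nat.sum_range_add_choose K i]
      rw [← Nat.choose_symm (by omega : i+1 ≤ K+i+1)]
      congr 1 <;> omega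
    push_cast [← hnat]
    norm_num

def ff (k : ℕ) : PowerSeries ℤ :=
  C (Nat.centralBinom k : ℤ) * ww a₃ a₄ ^ k * uu a₁ a₂ ^ (2*k+1) * X ^ (3*k)

def AA : PowerSeries ℤ := Ser (ff a₁ a₂ a₃ a₄)

def VV (K : ℕ) : PowerSeries ℤ := ww a₃ a₄ ^ K * uu a₁ a₂ ^ (2*K) * X ^ (3*K)

lemma ordge_ff : OrdGE (ff a₁ a₂ a₃ a₄) := by
  intro j n hn
  exact coeff_zero_of_X_pow_dvd (j := j)
    ⟨C (Nat.centralBinom j : ℤ) * ww a₃ a₄ ^ j * uu a₁ a₂ ^ (2*j+1) * X ^ (2*j), by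
      rw [ff]; ring⟩ hn

lemma GG_eq : GG a₁ a₂ a₃ a₄ = (1 - xx a₁ a₂ * X)^2 - 4 * X^3 * ww a₃ a₄ := by
  rw [GG, xx, ww]; ring

lemma uuG : uu a₁ a₂ ^ 2 * GG a₁ a₂ a₃ a₄ = 1 - 4 * (ww a₃ a₄ * X^3 * uu a₁ a₂ ^ 2) := by
  have h := uu_spec a₁ a₂
  calc uu a₁ a₂ ^ 2 * GG a₁ a₂ a₃ a₄
      = (uu a₁ a₂ * (1 - xx a₁ a₂ * X))^2 - 4 * (ww a₃ a₄ * X^3 * uu a₁ a₂ ^2) := by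
        rw [GG_eq]; ring
    _ = 1 - 4 * (ww a₃ a₄ * X^3 * uu a₁ a₂ ^ 2) := by rw [h]; ring

lemma key_term (k l : ℕ) : ff a₁ a₂ a₃ a₄ l * GG a₁ a₂ a₃ a₄ * ff a₁ a₂ a₃ a₄ k
    = C ((Nat.centralBinom k : ℤ) * Nat.centralBinom l) *
        (VV a₁ a₂ a₃ a₄ (k+l) - 4 * VV a₁ a₂ a₃ a₄ (k+l+1)) := by
  have e1 : ff a₁ a₂ a₃ a₄ l * GG a₁ a₂ a₃ a₄ * ff a₁ a₂ a₃ a₄ k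
      = C ((Nat.centralBinom k : ℤ) * Nat.centralBinom l) *
        (ww a₃ a₄ ^ (k+l) * uu a₁ a₂ ^ (2*(k+l)) * X ^ (3*(k+l)))
        * (uu a₁ a₂ ^ 2 * GG a₁ a₂ a₃ a₄) := by
    rw [ff, ff, map_mul]; ring
  rw [e1, uuG, VV, VV]
  ring

lemma coeff_VV_zero {K n : ℕ} (h : n < K) : coeff n (VV a₁ a₂ a₃ a₄ K) = 0 :=
  coeff_zero_of_X_pow_dvd (j := K)
    ⟨ww a₃ a₄ ^ K * uu a₁ a₂ ^ (2*K) * X ^ (2*K), by rw [VV]; ring⟩ h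

lemma AAG : AA a₁ a₂ a₃ a₄ * AA a₁ a₂ a₃ a₄ * GG a₁ a₂ a₃ a₄ = 1 := by
  have hff := ordge_ff a₁ a₂ a₃ a₄
  have hffG : OrdGE (fun l => ff a₁ a₂ a₃ a₄ l * GG a₁ a₂ a₃ a₄) := by
    intro j n hn
    exact coeff_zero_of_X_pow_dvd (j := j)
      ⟨C (Nat.centralBinom j : ℤ) * ww a₃ a₄ ^ j * uu a₁ a₂ ^ (2*j+1) * X ^ (2*j)
        * GG a₁ a₂ a₃ a₄, by simp only [ff]; ring⟩ hn
  rw [mul_assoc, AA, Ser_mul _ hff]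
  ext n
  rw [coeff_Ser]
  have inner : ∀ k, coeff n (ff a₁ a₂ a₃ a₄ k * (Ser (ff a₁ a₂ a₃ a₄) * GG a₁ a₂ a₃ a₄))
      = ∑ l ∈ range (n+1), ((Nat.centralBinom k : ℤ) * Nat.centralBinom l) *
          (coeff n (VV a₁ a₂ a₃ a₄ (k+l)) - 4 * coeff n (VV a₁ a₂ a₃ a₄ (k+l+1))) := by
    intro k
    rw [Ser_mul _ hff, mul_comm, Ser_mul _ hffG, coeff_Ser]
    refine Finset.sum_congr rfl fun l _ => ?_
    rw [key_term, coeff_C_mul, map_sub]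
    have : coeff n (4 * VV a₁ a₂ a₃ a₄ (k+l+1)) = 4 * coeff n (VV a₁ a₂ a₃ a₄ (k+l+1)) := by
      rw [show (4 : PowerSeries ℤ) = C 4 by norm_num, coeff_C_mul]
    rw [this]
  simp only [inner]
  rw [triangle n _ (by
    intro k l h
    rw [coeff_VV_zero _ _ _ _ (by omega), coeff_VV_zero _ _ _ _ (by omega)]
    ring)]
  have step : ∀ K ∈ range (n+1),
      (∑ p ∈ antidiagonal K, ((Nat.centralBinom p.1 : ℤ) * Nat.centralBinom p.2) *
          (coeff n (VV a₁ a₂ a₃ a₄ (p.1+p.2)) - 4 * coeff n (VV a₁ a₂ a₃ a₄ (p.1+p.2+1))))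
        = (4:ℤ)^K * coeff n (VV a₁ a₂ a₃ a₄ K)
            - 4^(K+1) * coeff n (VV a₁ a₂ a₃ a₄ (K+1)) := by
    intro K _
    have e1 : ∀ p ∈ antidiagonal K, ((Nat.centralBinom p.1 : ℤ) * Nat.centralBinom p.2) *
          (coeff n (VV a₁ a₂ a₃ a₄ (p.1+p.2)) - 4 * coeff n (VV a₁ a₂ a₃ a₄ (p.1+p.2+1)))
        = ((Nat.centralBinom p.1 : ℤ) * Nat.centralBinom p.2) *
          (coeff n (VV a₁ a₂ a₃ a₄ K) - 4 * coeff n (VV a₁ a₂ a₃ a₄ (K+1))) := by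
      intro p hp
      rw [mem_antidiagonal.1 hp]
    rw [Finset.sum_congr rfl e1, ← Finset.sum_mul, centralBinom_conv]
    ring
  rw [Finset.sum_congr rfl step]
  rw [Finset.sum_range_sub' (fun K => (4:ℤ)^K * coeff n (VV a₁ a₂ a₃ a₄ K))]
  rw [coeff_VV_zero _ _ _ _ (by omega : n < n+1)]
  have : VV a₁ a₂ a₃ a₄ 0 = 1 := by rw [VV]; norm_num
  rw [this]
  ring

lemma coeff_xw (N m k e : ℕ) :
    coeff N (xx a₁ a₂ ^ m * ww a₃ a₄ ^ k * X ^ e)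
      = ∑ r ∈ range (m+1), ∑ s ∈ range (k+1),
          (if e+r+s = N then (m.choose r * k.choose s : ℤ) *
            (a₁^(m-r) * a₂^r * a₃^(k-s) * a₄^s) else 0) := by
  rw [xx, ww, add_pow, add_pow, Finset.sum_mul_sum, Finset.sum_mul, map_sum]
  refine Finset.sum_congr rfl fun r hr => ?_
  rw [Finset.sum_mul, map_sum]
  refine Finset.sum_congr rfl fun s hs => ?_
  have e1 : (C a₂ * X)^r * (C a₁)^(m-r) * ((m.choose r : ℕ) : PowerSeries ℤ) *
      ((C a₄ * X)^s * (C a₃)^(k-s) * ((k.choose s : ℕ) : PowerSeries ℤ)) * X^e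
      = C ((m.choose r * k.choose s : ℤ) * (a₁^(m-r) * a₂^r * a₃^(k-s) * a₄^s)) * X^(e+r+s) := by
    simp only [map_mul, map_pow, map_natCast, mul_pow, pow_add]
    push_cast
    ring
  rw [e1, coeff_C_mul, coeff_X_pow]
  by_cases h : e+r+s = N
  · rw [if_pos h, if_pos h.symm, mul_one]
  · rw [if_neg h, if_neg (fun hh => h hh.symm), mul_zero]

lemma coeff_ff (N k : ℕ) : coeff N (ff a₁ a₂ a₃ a₄ k)
    = ∑ m ∈ range (N+1), (Nat.centralBinom k * (2*k+m).choose m : ℤ) *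
        coeff N (xx a₁ a₂ ^ m * ww a₃ a₄ ^ k * X ^ (3*k+m)) := by
  have hord : OrdGE (fun m => C ((2*k+m).choose m : ℤ) * xx a₁ a₂ ^ m * X ^ m) := by
    intro j n hn
    exact coeff_zero_of_X_pow_dvd (j := j)
      ⟨C ((2*k+j).choose j : ℤ) * xx a₁ a₂ ^ j, by ring⟩ hn
  have e0 : ff a₁ a₂ a₃ a₄ k
      = Ser (fun m => C ((2*k+m).choose m : ℤ) * xx a₁ a₂ ^ m * X ^ m)
          * (C (Nat.centralBinom k : ℤ) * ww a₃ a₄ ^ k * X ^ (3*k)) := by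
    rw [ff, show 2*k+1 = (2*k)+1 from rfl, uu_pow]
    ring
  rw [e0, Ser_mul _ hord, coeff_Ser]
  refine Finset.sum_congr rfl fun m _ => ?_
  have e1 : C ((2*k+m).choose m : ℤ) * xx a₁ a₂ ^ m * X ^ m *
      (C (Nat.centralBinom k : ℤ) * ww a₃ a₄ ^ k * X ^ (3*k))
      = C (Nat.centralBinom k * (2*k+m).choose m : ℤ) *
          (xx a₁ a₂ ^ m * ww a₃ a₄ ^ k * X ^ (3*k+m)) := by
    rw [map_mul, pow_add]
    ring
  rw [e1, coeff_C_mul]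

def Mid (n : ℕ) : ℤ :=
  ∑ k ∈ range (n+1), ∑ m ∈ range (n+1), ∑ r ∈ range (n+1), ∑ s ∈ range (n+1),
    if 3*k+m+r+s = n then
      (Nat.centralBinom k * (2*k+m).choose m * m.choose r * k.choose s : ℤ)
        * (a₁^(m-r) * a₂^r * a₃^(k-s) * a₄^s)
    else 0

lemma coeff_AA_eq_Mid (n : ℕ) : coeff n (AA a₁ a₂ a₃ a₄) = Mid a₁ a₂ a₃ a₄ n := by
  rw [AA, coeff_Ser, Mid]
  refine Finset.sum_congr rfl fun k hk => ?_
  rw [coeff_ff]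
  refine Finset.sum_congr rfl fun m hm => ?_
  simp only [mem_range] at hk hm
  rw [coeff_xw]
  calc (Nat.centralBinom k * (2*k+m).choose m : ℤ) *
        (∑ r ∈ range (m+1), ∑ s ∈ range (k+1),
          (if 3*k+m+r+s = n then (m.choose r * k.choose s : ℤ) *
            (a₁^(m-r) * a₂^r * a₃^(k-s) * a₄^s) else 0))
      = ∑ r ∈ range (m+1), ∑ s ∈ range (k+1),
          (Nat.centralBinom k * (2*k+m).choose m : ℤ) *
          (if 3*k+m+r+s = n then (m.choose r * k.choose s : ℤ) *
            (a₁^(m-r) * a₂^r * a₃^(k-s) * a₄^s) else 0) := by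
        rw [Finset.mul_sum]
        exact Finset.sum_congr rfl fun r _ => Finset.mul_sum _ _ _
    _ = ∑ r ∈ range (n+1), ∑ s ∈ range (k+1),
          (Nat.centralBinom k * (2*k+m).choose m : ℤ) *
          (if 3*k+m+r+s = n then (m.choose r * k.choose s : ℤ) *
            (a₁^(m-r) * a₂^r * a₃^(k-s) * a₄^s) else 0) := by
        apply Finset.sum_subset (Finset.range_subset_range.2 (by omega))
        intro r _ hr
        simp only [mem_range, not_lt] at hr
        apply Finset.sum_eq_zero
        intro s _
        rw [Nat.choose_eq_zero_of_lt (by omega : m < r)]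
        simp
    _ = ∑ r ∈ range (n+1), ∑ s ∈ range (n+1),
          (Nat.centralBinom k * (2*k+m).choose m : ℤ) *
          (if 3*k+m+r+s = n then (m.choose r * k.choose s : ℤ) *
            (a₁^(m-r) * a₂^r * a₃^(k-s) * a₄^s) else 0) := by
        refine Finset.sum_congr rfl fun r _ => ?_
        apply Finset.sum_subset (Finset.range_subset_range.2 (by omega))
        intro s _ hs
        simp only [mem_range, not_lt] at hs
        rw [Nat.choose_eq_zero_of_lt (by omega : k < s)]
        simp
    _ = ∑ r ∈ range (n+1), ∑ s ∈ range (n+1),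
          (if 3*k+m+r+s = n then
            (Nat.centralBinom k * (2*k+m).choose m * m.choose r * k.choose s : ℤ)
              * (a₁^(m-r) * a₂^r * a₃^(k-s) * a₄^s)
          else 0) := by
        refine Finset.sum_congr rfl fun r _ => Finset.sum_congr rfl fun s _ => ?_
        split_ifs with h
        · push_cast
          ring
        · rw [mul_zero]

def bCoeff' (n : ℕ) : ℤ :=
  ∑ m ∈ Finset.Icc (n / 2) n, ∑ k ∈ Finset.range (m / 2 + 1),
    ∑ r ∈ Finset.range (n + 1 - m - k),
      (m.choose k * (m - k).choose k * (m - 2 * k).choose r *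
        k.choose (n - m - k - r) : ℤ) *
        a₁ ^ (m - 2 * k - r) * a₂ ^ r * a₃ ^ (2 * k + m + r - n) * a₄ ^ (n - m - k - r)

lemma inner_eq (n m' k : ℕ) :
    ∑ r ∈ Finset.range (n + 1 - m' - k),
      (m'.choose k * (m' - k).choose k * (m' - 2 * k).choose r *
        k.choose (n - m' - k - r) : ℤ) *
        a₁ ^ (m' - 2 * k - r) * a₂ ^ r * a₃ ^ (2 * k + m' + r - n) * a₄ ^ (n - m' - k - r)
    = ∑ r ∈ range (n+1), ∑ s ∈ range (n+1),
        (if m' + k + r + s = n then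
          (m'.choose k * (m' - k).choose k * (m' - 2 * k).choose r * k.choose s : ℤ) *
            (a₁ ^ (m' - 2 * k - r) * a₂ ^ r * a₃ ^ (k - s) * a₄ ^ s)
        else 0) := by
  symm
  calc ∑ r ∈ range (n+1), ∑ s ∈ range (n+1),
        (if m' + k + r + s = n then
          (m'.choose k * (m' - k).choose k * (m' - 2 * k).choose r * k.choose s : ℤ) *
            (a₁ ^ (m' - 2 * k - r) * a₂ ^ r * a₃ ^ (k - s) * a₄ ^ s)
        else 0)
      = ∑ r ∈ range (n+1),
        (if m' + k + r ≤ n then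
          (m'.choose k * (m' - k).choose k * (m' - 2 * k).choose r *
              k.choose (n - (m' + k + r)) : ℤ) *
            (a₁ ^ (m' - 2 * k - r) * a₂ ^ r * a₃ ^ (k - (n - (m' + k + r))) *
              a₄ ^ (n - (m' + k + r)))
        else 0) := by
        refine Finset.sum_congr rfl fun r _ => ?_
        exact pick (m' + k + r) n _
    _ = ∑ r ∈ Finset.range (n + 1 - m' - k),
        (if m' + k + r ≤ n then
          (m'.choose k * (m' - k).choose k * (m' - 2 * k).choose r *
              k.choose (n - (m' + k + r)) : ℤ) *
            (a₁ ^ (m' - 2 * k - r) * a₂ ^ r * a₃ ^ (k - (n - (m' + k + r))) *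
              a₄ ^ (n - (m' + k + r)))
        else 0) := by
        refine (Finset.sum_subset (Finset.range_subset_range.2 (by omega)) ?_).symm
        intro r _ hr
        simp only [mem_range, not_lt] at hr
        rw [if_neg (by omega)]
    _ = ∑ r ∈ Finset.range (n + 1 - m' - k),
      (m'.choose k * (m' - k).choose k * (m' - 2 * k).choose r *
        k.choose (n - m' - k - r) : ℤ) *
        a₁ ^ (m' - 2 * k - r) * a₂ ^ r * a₃ ^ (2 * k + m' + r - n) * a₄ ^ (n - m' - k - r) := by
        refine Finset.sum_congr rfl fun r hr => ?_
        simp only [mem_range] at hr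
        rw [if_pos (by omega)]
        rw [show n - (m' + k + r) = n - m' - k - r by omega,
          show k - (n - m' - k - r) = 2 * k + m' + r - n by omega]
        ring

/-- quadruple-sum form of bCoeff -/
lemma bCoeff'_eq_Mid (n : ℕ) : bCoeff' a₁ a₂ a₃ a₄ n = Mid a₁ a₂ a₃ a₄ n := by
  -- Notation for the quadruple summand in (m', k) variables
  set Q : ℕ → ℕ → ℤ := fun m' k => ∑ r ∈ range (n+1), ∑ s ∈ range (n+1),
      (if m' + k + r + s = n then
        (m'.choose k * (m' - k).choose k * (m' - 2 * k).choose r * k.choose s : ℤ) *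
          (a₁ ^ (m' - 2 * k - r) * a₂ ^ r * a₃ ^ (k - s) * a₄ ^ s)
      else 0) with hQ
  have hQzero : ∀ m' k, m' < 2*k → Q m' k = 0 := by
    intro m' k h
    rw [hQ]
    refine Finset.sum_eq_zero fun r _ => Finset.sum_eq_zero fun s _ => ?_
    rw [Nat.choose_eq_zero_of_lt (show m' - k < k by omega)]
    simp
  have step1 : bCoeff' a₁ a₂ a₃ a₄ n
      = ∑ m' ∈ Finset.Icc (n / 2) n, ∑ k ∈ Finset.range (m' / 2 + 1), Q m' k := by
    rw [bCoeff']
    exact Finset.sum_congr rfl fun m' _ => Finset.sum_congr rfl fun k _ => inner_eq _ _ _ _ n m' k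
  have step2 : ∀ m' ≤ n, ∑ k ∈ Finset.range (m' / 2 + 1), Q m' k
      = ∑ k ∈ Finset.range (n + 1), Q m' k := by
    intro m' _
    apply Finset.sum_subset (Finset.range_subset_range.2 (by omega))
    intro k _ hk
    simp only [mem_range, not_lt] at hk
    exact hQzero m' k (by omega)
  have step3 : ∑ m' ∈ Finset.Icc (n / 2) n, ∑ k ∈ Finset.range (n+1), Q m' k
      = ∑ m' ∈ Finset.range (n+1), ∑ k ∈ Finset.range (n+1), Q m' k := by
    apply Finset.sum_subset
    · intro m' hm'
      simp only [Finset.mem_Icc] at hm'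
      exact mem_range.2 (by omega)
    · intro m' hm' hm2
      simp only [mem_range] at hm'
      simp only [Finset.mem_Icc, not_and, not_le] at hm2
      have hsmall : 2 * m' < n := by
        have := hm2
        omega
      refine Finset.sum_eq_zero fun k _ => ?_
      rw [hQ]
      refine Finset.sum_eq_zero fun r _ => Finset.sum_eq_zero fun s _ => ?_
      by_cases hc : m' + k + r + s = n
      · rw [if_pos hc]
        by_cases h2k : m' < 2*k
        · rw [Nat.choose_eq_zero_of_lt (show m' - k < k by omega)]
          simp
        · by_cases hr : m' - 2*k < r
          · rw [Nat.choose_eq_zero_of_lt hr]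
            simp
          · rw [Nat.choose_eq_zero_of_lt (show k < s by omega)]
            simp
      · rw [if_neg hc]
  have step4 : ∀ k ≤ n, ∑ m' ∈ Finset.range (n+1), Q m' k
      = ∑ m ∈ Finset.range (n+1), Q (2*k+m) k := by
    intro k _
    have e1 : ∑ m' ∈ Finset.range (n+1), Q m' k
        = ∑ m' ∈ Finset.Ico (2*k) (n+1), Q m' k := by
      refine (Finset.sum_subset ?_ ?_).symm
      · intro m' hm'
        simp only [Finset.mem_Ico] at hm'
        exact mem_range.2 (by omega)
      · intro m' hm' hm2
        simp only [mem_range] at hm'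
        simp only [Finset.mem_Ico, not_and, not_lt] at hm2
        exact hQzero m' k (by omega)
    rw [e1, Finset.sum_Ico_eq_sum_range]
    have e2 : ∀ j, Q (2*k + j) k = Q (2*k+j) k := fun j => rfl
    calc ∑ j ∈ Finset.range (n+1-2*k), Q (2*k+j) k
        = ∑ j ∈ Finset.range (n+1), Q (2*k+j) k := by
          apply Finset.sum_subset (Finset.range_subset_range.2 (by omega))
          intro j _ hj
          simp only [mem_range, not_lt] at hj
          rw [hQ]
          refine Finset.sum_eq_zero fun r _ => Finset.sum_eq_zero fun s _ => ?_
          rw [if_neg (by omega)]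
      _ = ∑ m ∈ Finset.range (n+1), Q (2*k+m) k := rfl
  have step5 : ∀ k m r s : ℕ,
      (if (2*k+m) + k + r + s = n then
        ((2*k+m).choose k * ((2*k+m) - k).choose k * ((2*k+m) - 2 * k).choose r *
          k.choose s : ℤ) *
          (a₁ ^ ((2*k+m) - 2 * k - r) * a₂ ^ r * a₃ ^ (k - s) * a₄ ^ s)
      else 0)
      = (if 3*k+m+r+s = n then
          (Nat.centralBinom k * (2*k+m).choose m * m.choose r * k.choose s : ℤ)
            * (a₁^(m-r) * a₂^r * a₃^(k-s) * a₄^s)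
        else 0) := by
    intro k m r s
    by_cases hc : 3*k+m+r+s = n
    · rw [if_pos (by omega), if_pos hc]
      rw [show (2*k+m) - k = k+m by omega, show (2*k+m) - 2*k = m by omega]
      try rw [show (2*k+m) - 2*k - r = m - r by omega]
      have hN : ((2*k+m).choose k * (k+m).choose k : ℤ)
          = (Nat.centralBinom k : ℤ) * (2*k+m).choose m := by exact_mod_cast N1 k m
      linear_combination ((m.choose r : ℤ) * (k.choose s) *
        (a₁^(m-r) * a₂^r * a₃^(k-s) * a₄^s)) * hN
    · rw [if_neg (by omega), if_neg hc]
  calc bCoeff' a₁ a₂ a₃ a₄ n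
      = ∑ m' ∈ Finset.Icc (n / 2) n, ∑ k ∈ Finset.range (n+1), Q m' k := by
        rw [step1]
        refine Finset.sum_congr rfl fun m' hm' => ?_
        simp only [Finset.mem_Icc] at hm'
        exact step2 m' (by omega)
    _ = ∑ m' ∈ Finset.range (n+1), ∑ k ∈ Finset.range (n+1), Q m' k := step3
    _ = ∑ k ∈ Finset.range (n+1), ∑ m' ∈ Finset.range (n+1), Q m' k := Finset.sum_comm
    _ = ∑ k ∈ Finset.range (n+1), ∑ m ∈ Finset.range (n+1), Q (2*k+m) k := by
        refine Finset.sum_congr rfl fun k hk => ?_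
        simp only [mem_range] at hk
        exact step4 k (by omega)
    _ = Mid a₁ a₂ a₃ a₄ n := by
        rw [Mid]
        refine Finset.sum_congr rfl fun k _ => Finset.sum_congr rfl fun m _ => ?_
        rw [hQ]
        exact Finset.sum_congr rfl fun r _ => Finset.sum_congr rfl fun s _ => step5 k m r s

end params

theorem stmt1 (a₁ a₂ a₃ a₄ : ℤ) (F : PowerSeries ℤ)
    (hF0 : PowerSeries.constantCoeff F = 1)
    (hF : F ^ 2 * ((1 - C a₁ * X - C a₂ * X ^ 2) ^ 2
        - 4 * X ^ 3 * (C a₃ + C a₄ * X)) = 1) :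
    ∀ n : ℕ, PowerSeries.coeff n F = bCoeff a₁ a₂ a₃ a₄ n := by
  have hFG : F ^ 2 * GG a₁ a₂ a₃ a₄ = 1 := by rw [GG]; exact hF
  have hA := AAG a₁ a₂ a₃ a₄
  have hGne : GG a₁ a₂ a₃ a₄ ≠ 0 := by
    intro h
    have h1 : constantCoeff (GG a₁ a₂ a₃ a₄) = 1 := by
      rw [GG]
      simp
    rw [h, map_zero] at h1
    exact one_ne_zero h1.symm
  have hsq : (F - AA a₁ a₂ a₃ a₄) * (F + AA a₁ a₂ a₃ a₄) = 0 := by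
    have h0 : (F^2 - AA a₁ a₂ a₃ a₄ * AA a₁ a₂ a₃ a₄) * GG a₁ a₂ a₃ a₄ = 0 := by
      linear_combination hFG - hA
    have h1 : F^2 - AA a₁ a₂ a₃ a₄ * AA a₁ a₂ a₃ a₄ = 0 :=
      (mul_eq_zero.mp h0).resolve_right hGne
    linear_combination h1
  have hA0 : constantCoeff (AA a₁ a₂ a₃ a₄) = 1 := by
    have h := coeff_AA_eq_Mid a₁ a₂ a₃ a₄ 0
    rw [coeff_zero_eq_constantCoeff] at h
    rw [h, Mid]
    simp [Nat.centralBinom]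
  have hFA : F + AA a₁ a₂ a₃ a₄ ≠ 0 := by
    intro h
    have h1 : constantCoeff (F + AA a₁ a₂ a₃ a₄) = 2 := by
      rw [map_add, hF0, hA0]; norm_num
    rw [h, map_zero] at h1
    exact two_ne_zero h1.symm
  have hFeq : F = AA a₁ a₂ a₃ a₄ :=
    sub_eq_zero.mp ((mul_eq_zero.mp hsq).resolve_right hFA)
  intro n
  rw [hFeq, coeff_AA_eq_Mid, ← bCoeff'_eq_Mid]
  rfl

end StmtAux
end

section
/- Let a₁, a₂, a₃, a₄ be integers, let w ∈ ℤ⟦z⟧ be the unique power series with zero constant term satisfying w = z³ + a₁zw + a₂z²w + a₃w² + a₄zw², and let F ∈ ℤ⟦z⟧ be the unique power series with constant term 1 satisfying F² · ((1 − a₁z − a₂z²)² − 4z³(a₃ + a₄z)) = 1. Then F · (3z² + 2a₂ z w + a₄ w² + a₁ w) = dw/dz, where dw/dz denotes the formal derivative of w. -/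
open PowerSeries

theorem stmt2 (a₁ a₂ a₃ a₄ : ℤ) (w F : PowerSeries ℤ)
    (hw0 : PowerSeries.constantCoeff (R := ℤ) w = 0)
    (hw : w = X ^ 3 + C (R := ℤ) a₁ * X * w + C (R := ℤ) a₂ * X ^ 2 * w + C (R := ℤ) a₃ * w ^ 2 +
        C (R := ℤ) a₄ * X * w ^ 2)
    (hF0 : PowerSeries.constantCoeff (R := ℤ) F = 1)
    (hF : F ^ 2 * ((1 - C (R := ℤ) a₁ * X - C (R := ℤ) a₂ * X ^ 2) ^ 2
        - 4 * X ^ 3 * (C (R := ℤ) a₃ + C (R := ℤ) a₄ * X)) = 1) :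
    F * (3 * X ^ 2 + 2 * C (R := ℤ) a₂ * X * w + C (R := ℤ) a₄ * w ^ 2 + C (R := ℤ) a₁ * w) =
      PowerSeries.derivative ℤ w := by
  set Q : PowerSeries ℤ := 1 - C (R := ℤ) a₁ * X - C (R := ℤ) a₂ * X ^ 2
      - 2 * (C (R := ℤ) a₃ + C (R := ℤ) a₄ * X) * w with hQdef
  have hQ2 : Q ^ 2 = (1 - C (R := ℤ) a₁ * X - C (R := ℤ) a₂ * X ^ 2) ^ 2
      - 4 * X ^ 3 * (C (R := ℤ) a₃ + C (R := ℤ) a₄ * X) := by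
    rw [hQdef]
    linear_combination (-4 * (C (R := ℤ) a₃ + C (R := ℤ) a₄ * X)) * hw
  have hFQ : F * Q = 1 := by
    have hFQ2 : (F * Q) ^ 2 = 1 := by linear_combination F ^ 2 * hQ2 + hF
    rcases mul_eq_zero.mp (show (F * Q - 1) * (F * Q + 1) = 0 by
        linear_combination hFQ2) with h | h
    · exact sub_eq_zero.mp h
    · exfalso
      have : constantCoeff (R := ℤ) (F * Q + 1) = 2 := by
        simp [hQdef, map_add, map_mul, map_sub, hF0, hw0]
      rw [h] at this
      simp at this
  have hd := congrArg (derivative ℤ) hw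
  simp only [map_add, Derivation.leibniz, Derivation.leibniz_pow, derivative_X,
    derivative_C, smul_eq_mul, mul_one, mul_zero, zero_add, add_zero, zero_mul,
    smul_zero] at hd
  -- hd should give derivative in terms of itself
  have hP : Q * derivative ℤ w = 3 * X ^ 2 + 2 * C (R := ℤ) a₂ * X * w + C (R := ℤ) a₄ * w ^ 2
      + C (R := ℤ) a₁ * w := by
    rw [hQdef]
    linear_combination hd
  linear_combination (derivative ℤ w) * hFQ - F * hP
end

section
/- For every nonnegative integer n, the identity Tₙ(x,y) = 2^{−n} Σ_{k=0}^{⌊n/2⌋} (−1)^{k} C(n,k)·C(2n−2k,n) x^{n−2k} (x² − 4y)^{k} holds in ℚ[x,y]; that is, Tₙ(x,y) = (√(x²−4y))ⁿ Pₙ(x/√(x²−4y)), where Pₙ is the n-th Legendre polynomial. -/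
open Finset

/-- The generalized central trinomial polynomial
`Tₙ(x,y) = Σ_{k=0}^{⌊n/2⌋} C(n,k)·C(n−k,k) x^{n−2k} y^k` in `ℚ[x,y]`,
with `x = X 0` and `y = X 1`. -/
noncomputable def genCentralTrinomialQ (n : ℕ) : MvPolynomial (Fin 2) ℚ :=
  ∑ k ∈ Finset.range (n / 2 + 1),
    (n.choose k * (n - k).choose k : ℚ) •
      (MvPolynomial.X 0 ^ (n - 2 * k) * MvPolynomial.X 1 ^ k)

lemma mySubPow {R : Type*} [CommRing R] (x y : R) (n : ℕ) :
    (x - y) ^ n = ∑ j ∈ Finset.range (n + 1),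
      (-1 : R) ^ j * y ^ j * x ^ (n - j) * (n.choose j : R) := by
  rw [show x - y = -(y - x) by ring, neg_pow, sub_pow, Finset.mul_sum]
  refine Finset.sum_congr rfl fun j hj => ?_
  have hsign : (-1 : R) ^ n * (-1) ^ (j + n) = (-1) ^ j := by
    rw [← pow_add, show n + (j + n) = j + 2 * n by omega, pow_add, pow_mul,
      neg_one_sq, one_pow, mul_one]
  calc (-1:R)^n * ((-1)^(j+n) * y^j * x^(n-j) * (n.choose j : R))
      = ((-1:R)^n * (-1)^(j+n)) * y^j * x^(n-j) * (n.choose j : R) := by ring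
    _ = (-1:R)^j * y^j * x^(n-j) * (n.choose j : R) := by rw [hsign]

open Polynomial in
lemma myL1 (a m : ℕ) (ham : a ≤ m) :
    ∑ i ∈ Finset.range (a + 1),
        (-1 : ℚ) ^ i * (a.choose i : ℚ) * ((2 * (a - i)).choose m : ℚ)
      = (a.choose (m - a) : ℚ) * 2 ^ (2 * a - m) := by
  obtain ⟨d, rfl⟩ : ∃ d, m = d + a := ⟨m - a, by omega⟩
  have hpoly : ∑ i ∈ Finset.range (a + 1),
      Polynomial.C ((-1 : ℚ) ^ i * (a.choose i : ℚ)) * (1 + X) ^ (2 * (a - i))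
      = X ^ a * (X + C 2) ^ a := by
    have h1 : (((1 : ℚ[X]) + X) ^ 2 - 1) ^ a
        = ∑ i ∈ Finset.range (a + 1),
            C ((-1 : ℚ) ^ i * (a.choose i : ℚ)) * (1 + X) ^ (2 * (a - i)) := by
      rw [mySubPow (((1 : ℚ[X]) + X) ^ 2) 1 a]
      refine Finset.sum_congr rfl fun i hi => ?_
      rw [← pow_mul]
      simp only [map_mul, map_pow, map_neg, map_one, Polynomial.C_eq_natCast]
      ring
    rw [← h1, show (((1 : ℚ[X]) + X) ^ 2 - 1) = X * (X + C 2) by rw [map_ofNat]; ring, mul_pow]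
  have hc := congrArg (fun p => Polynomial.coeff p (d + a)) hpoly
  simp only [Polynomial.finset_sum_coeff, Polynomial.coeff_C_mul,
    Polynomial.coeff_one_add_X_pow, Polynomial.coeff_X_pow_mul,
    Polynomial.coeff_X_add_C_pow] at hc
  rw [show d + a - a = d by omega, show 2 * a - (d + a) = a - d by omega]
  simpa [mul_comm] using hc

lemma myKey (n j : ℕ) (hj : j ≤ n / 2) :
    ∑ k ∈ Finset.range (n / 2 + 1),
        (-1 : ℚ) ^ k * (n.choose k : ℚ) * ((2 * n - 2 * k).choose n : ℚ)
          * ((k.choose j : ℚ) * (-4 : ℚ) ^ j)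
      = 2 ^ n * (n.choose j : ℚ) * ((n - j).choose j : ℚ) := by
  have hjn : j ≤ n := le_trans hj (Nat.div_le_self n 2)
  set f : ℕ → ℚ := fun k => (-1 : ℚ) ^ k * (n.choose k : ℚ)
      * ((2 * n - 2 * k).choose n : ℚ) * ((k.choose j : ℚ) * (-4 : ℚ) ^ j) with hf
  have step1 : ∑ k ∈ Finset.range (n / 2 + 1), f k = ∑ k ∈ Finset.Ico j (n/2+1), f k := by
    refine (Finset.sum_subset ?_ ?_).symm
    · intro k hk
      rw [Finset.mem_Ico] at hk
      rw [Finset.mem_range]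
      omega
    · intro k hk hk'
      rw [Finset.mem_range] at hk
      rw [Finset.mem_Ico] at hk'
      have : k < j := by omega
      simp [hf, Nat.choose_eq_zero_of_lt this]
  rw [step1, Finset.sum_Ico_eq_sum_range]
  have step2 : ∑ i ∈ Finset.range (n/2 + 1 - j), f (j + i)
      = ∑ i ∈ Finset.range ((n - j) + 1), f (j + i) := by
    refine Finset.sum_subset ?_ ?_
    · intro i hi
      rw [Finset.mem_range] at hi ⊢
      omega
    · intro i hi hi'
      rw [Finset.mem_range] at hi hi'
      have : 2 * n - 2 * (j + i) < n := by omega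
      simp [hf, Nat.choose_eq_zero_of_lt this]
  rw [step2]
  have step3 : ∑ i ∈ Finset.range ((n - j) + 1), f (j + i)
      = (4 : ℚ) ^ j * (n.choose j : ℚ) *
        ∑ i ∈ Finset.range ((n - j) + 1),
          (-1 : ℚ) ^ i * ((n - j).choose i : ℚ) * ((2 * ((n - j) - i)).choose n : ℚ) := by
    rw [Finset.mul_sum]
    refine Finset.sum_congr rfl fun i hi => ?_
    simp only [Finset.mem_range] at hi
    have hmul : (n.choose (j + i) : ℚ) * ((j + i).choose j : ℚ)
        = (n.choose j : ℚ) * ((n - j).choose i : ℚ) := by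
      have := Nat.choose_mul (n := n) (show j ≤ j + i by omega)
      rw [Nat.add_sub_cancel_left] at this
      exact_mod_cast congrArg (Nat.cast : ℕ → ℚ) this
    have hexp : 2 * n - 2 * (j + i) = 2 * ((n - j) - i) := by omega
    have hone : (-1 : ℚ) ^ j * (-1 : ℚ) ^ j = 1 := by
      rw [← pow_add, show j + j = 2 * j by omega, pow_mul, neg_one_sq, one_pow]
    have hsign : (-1 : ℚ) ^ (j + i) * (-4 : ℚ) ^ j = (-1 : ℚ) ^ i * 4 ^ j := by
      calc (-1:ℚ) ^ (j+i) * (-4:ℚ) ^ j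
          = ((-1:ℚ)^j * (-1:ℚ)^j) * ((-1:ℚ)^i * 4^j) := by
            rw [show (-4:ℚ) = (-1) * 4 by norm_num, mul_pow, pow_add]; ring
        _ = (-1:ℚ)^i * 4^j := by rw [hone, one_mul]
    simp only [hf, hexp]
    calc (-1:ℚ)^(j+i) * (n.choose (j+i) : ℚ) * ((2*((n-j)-i)).choose n : ℚ)
          * (((j+i).choose j : ℚ) * (-4:ℚ)^j)
        = ((-1:ℚ)^(j+i) * (-4:ℚ)^j) * ((n.choose (j+i) : ℚ) * ((j+i).choose j : ℚ))
          * ((2*((n-j)-i)).choose n : ℚ) := by ring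
      _ = ((-1:ℚ)^i * 4^j) * ((n.choose j : ℚ) * ((n-j).choose i : ℚ))
          * ((2*((n-j)-i)).choose n : ℚ) := by rw [hmul, hsign]
      _ = (4:ℚ)^j * (n.choose j : ℚ) * ((-1:ℚ)^i * ((n-j).choose i : ℚ)
          * ((2*((n-j)-i)).choose n : ℚ)) := by ring
  rw [step3, myL1 (n - j) n (by omega), show n - (n - j) = j by omega,
    show 2 * (n - j) - n = n - 2 * j by omega]
  have h2 : (4:ℚ)^j * 2^(n-2*j) = 2^n := by
    rw [show (4:ℚ) = 2^2 by norm_num, ← pow_mul, ← pow_add]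
    congr 1
    omega
  linear_combination ((n.choose j : ℚ) * (((n-j).choose j : ℚ))) * h2

/-- `Tₙ(x,y) = 2^{-n} Σ_{k=0}^{⌊n/2⌋} (−1)^k C(n,k) C(2n−2k,n) x^{n−2k} (x²−4y)^k`,
i.e. `Tₙ(x,y) = (√(x²−4y))ⁿ Pₙ(x/√(x²−4y))` with `Pₙ` the `n`-th Legendre polynomial. -/
theorem stmt4 (n : ℕ) :
    genCentralTrinomialQ n =
      ((2 : ℚ) ^ (-(n : ℤ))) •
        ∑ k ∈ Finset.range (n / 2 + 1),
          ((-1 : ℚ) ^ k * n.choose k * (2 * n - 2 * k).choose n) •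
            (MvPolynomial.X 0 ^ (n - 2 * k) *
              (MvPolynomial.X 0 ^ 2 - 4 * MvPolynomial.X 1) ^ k) := by
  unfold genCentralTrinomialQ
  simp only [MvPolynomial.smul_eq_C_mul]
  rw [Finset.mul_sum]
  have expand : ∀ k ∈ Finset.range (n / 2 + 1),
      (MvPolynomial.C ((2 : ℚ) ^ (-(n : ℤ))) : MvPolynomial (Fin 2) ℚ) *
        (MvPolynomial.C ((-1 : ℚ) ^ k * n.choose k * (2 * n - 2 * k).choose n) *
          (MvPolynomial.X 0 ^ (n - 2 * k) *
            (MvPolynomial.X 0 ^ 2 - 4 * MvPolynomial.X 1) ^ k))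
      = ∑ j ∈ Finset.range (n / 2 + 1),
          MvPolynomial.C ((2 : ℚ) ^ (-(n : ℤ)) *
              (((-1 : ℚ) ^ k * n.choose k * (2 * n - 2 * k).choose n) *
                ((k.choose j : ℚ) * (-4 : ℚ) ^ j))) *
            (MvPolynomial.X 0 ^ (n - 2 * j) * MvPolynomial.X 1 ^ j) := by
    intro k hk
    rw [Finset.mem_range] at hk
    have hk' : k ≤ n / 2 := by omega
    rw [mySubPow]
    simp only [Finset.mul_sum]
    rw [← Finset.sum_subset (show Finset.range (k+1) ⊆ Finset.range (n/2+1) by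
        intro j hj; rw [Finset.mem_range] at hj ⊢; omega)
      (fun j hj hj' => by
        rw [Finset.mem_range] at hj hj'
        have : k < j := by omega
        simp [Nat.choose_eq_zero_of_lt this])]
    refine (Finset.sum_congr rfl fun j hj => ?_).symm
    rw [Finset.mem_range] at hj
    rw [show n - 2 * j = (n - 2 * k) + 2 * (k - j) by omega, pow_add, pow_mul]
    rw [show (-4 : ℚ) = (-1) * 4 by norm_num, mul_pow]
    simp only [map_mul, map_pow, map_neg, map_one, map_ofNat, map_natCast]
    ring
  have expand' :
      (∑ k ∈ Finset.range (n / 2 + 1),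
        (MvPolynomial.C ((2 : ℚ) ^ (-(n : ℤ))) : MvPolynomial (Fin 2) ℚ) *
          (MvPolynomial.C ((-1 : ℚ) ^ k * n.choose k * (2 * n - 2 * k).choose n) *
            (MvPolynomial.X 0 ^ (n - 2 * k) *
              (MvPolynomial.X 0 ^ 2 - 4 * MvPolynomial.X 1) ^ k)))
      = ∑ k ∈ Finset.range (n / 2 + 1), ∑ j ∈ Finset.range (n / 2 + 1),
          MvPolynomial.C ((2 : ℚ) ^ (-(n : ℤ)) *
              (((-1 : ℚ) ^ k * n.choose k * (2 * n - 2 * k).choose n) *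
                ((k.choose j : ℚ) * (-4 : ℚ) ^ j))) *
            (MvPolynomial.X 0 ^ (n - 2 * j) * MvPolynomial.X 1 ^ j) :=
    Finset.sum_congr rfl expand
  rw [expand', Finset.sum_comm]
  refine Finset.sum_congr rfl fun j hj => ?_
  rw [Finset.mem_range] at hj
  symm
  rw [← Finset.sum_mul, ← map_sum, ← Finset.mul_sum, myKey n j (by omega)]
  congr 2
  rw [zpow_neg, zpow_natCast]
  have h2 : ((2 : ℚ) ^ n) ≠ 0 := by positivity
  field_simp
end

section
/- Let E: y² + a₁xy + a₃y = x³ + a₂x² + a₄x with a₁,a₂,a₃,a₄ ∈ ℤ be an elliptic curve (nonzero discriminant Δ), and let p be a prime with p ∤ Δ. Let A_p = 1 + #{(x,y) ∈ 𝔽_p × 𝔽_p : y² + a₁xy + a₃y = x³ + a₂x² + a₄x} and t_p = 1 + p − A_p. Then b(p) ≡ t_p (mod p), where b(n+1) = Σ_{m=⌊n/2⌋}^{n} Σ_{k=0}^{⌊m/2⌋} Σ_{r=0}^{n−m−k} C(m,k)C(m−k,k)C(m−2k,r)C(k,n−m−k−r) a₁^{m−2k−r} a₂^{r} a₃^{2k−n+m+r}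 a₄^{n−m−k−r}. -/
open PowerSeries Finset

lemma zsum_pow_one (p : ℕ) [Fact p.Prime] (e : ℕ) (he : e ≠ 0) (hd : (p-1) ∣ e) :
    ∑ x : ZMod p, x^e = -1 := by
  have hp := (Fact.out : p.Prime)
  have h2 := hp.two_le
  have : ∀ x : ZMod p, x ^ e = if x = 0 then 0 else 1 := by
    intro x
    split
    · subst ‹x = 0›; exact zero_pow he
    · obtain ⟨c, rfl⟩ := hd
      rw [pow_mul, ZMod.pow_card_sub_one_eq_one ‹x ≠ 0›, one_pow]
  rw [Finset.sum_congr rfl fun x _ => this x]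
  have h1 : ∑ x : ZMod p, (if x = 0 then (0:ZMod p) else 1)
      = ∑ x : ZMod p, (1 - if x = 0 then 1 else 0) := by
    apply Finset.sum_congr rfl; intro x _; split <;> simp
  rw [h1, Finset.sum_sub_distrib, Finset.sum_const, Finset.sum_ite_eq' Finset.univ (0 : ZMod p) (fun _ => (1:ZMod p)), if_pos (Finset.mem_univ _)]
  simp [ZMod.natCast_self]

lemma zsum_pow (p : ℕ) [Fact p.Prime] (e : ℕ) (he : e ≤ 2*(p-1)) :
    ∑ x : ZMod p, x^e = if e = p-1 ∨ e = 2*(p-1) then -1 else 0 := by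
  have hp := (Fact.out : p.Prime)
  have h2 := hp.two_le
  split
  · refine zsum_pow_one p e (by omega) ?_
    rcases ‹_ ∨ _› with h | h
    · exact h ▸ dvd_refl _
    · exact h ▸ Dvd.intro 2 (mul_comm _ _)
  · push_neg at *
    obtain ⟨h1, h2'⟩ := ‹e ≠ p - 1 ∧ e ≠ 2*(p-1)›
    rcases lt_or_ge e (p-1) with h | h
    · exact FiniteField.sum_pow_lt_card_sub_one (K := ZMod p) e (by rw [ZMod.card]; omega)
    · have : ∀ x : ZMod p, x ^ e = x ^ (e - (p-1)) := by
        intro x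
        by_cases hx : x = 0
        · subst hx; rw [zero_pow (by omega), zero_pow (by omega)]
        · conv_lhs => rw [show e = (e - (p-1)) + (p-1) from by omega]
          rw [pow_add, ZMod.pow_card_sub_one_eq_one hx, mul_one]
      rw [Finset.sum_congr rfl fun x _ => this x]
      exact FiniteField.sum_pow_lt_card_sub_one (K := ZMod p) _ (by rw [ZMod.card]; omega)
lemma zchoose_cast (p : ℕ) [Fact p.Prime] : ∀ m : ℕ, m ≤ p - 1 →
    (((p-1).choose m : ℕ) : ZMod p) = (-1)^m := by
  have hp := (Fact.out : p.Prime)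
  have h2 := hp.two_le
  intro m
  induction m with
  | zero => simp
  | succ m ih =>
    intro hm
    have hdvd : (p : ℕ) ∣ p.choose (m+1) := hp.dvd_choose_self (by omega) (by omega)
    have hrec : p.choose (m+1) = (p-1).choose m + (p-1).choose (m+1) := by
      conv_lhs => rw [show p = p-1+1 from by omega]
      exact Nat.choose_succ_succ' _ _
    have h0 : ((p.choose (m+1) : ℕ) : ZMod p) = 0 :=
      (ZMod.natCast_eq_zero_iff _ _).2 hdvd
    rw [hrec] at h0
    push_cast at h0
    rw [ih (by omega)] at h0
    rw [show ((p-1).choose (m+1) : ZMod p) = -(-1)^m from by linear_combination h0]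
    ring

lemma binident (m j k r : ℕ) (hjm : j ≤ m) (hkr : k + r ≤ j)
    (h1 : 2*k + r ≤ m) (h2 : j ≤ 2*k + r) :
    m.choose j * j.choose k * (j - k).choose r * (m - j).choose (m - (2*k + r)) =
    m.choose k * (m - k).choose k * (m - 2*k).choose r * k.choose (j - (k + r)) := by
  obtain ⟨e4, rfl⟩ : ∃ e4, j = k + r + e4 := ⟨j - (k+r), by omega⟩
  obtain ⟨e3, rfl⟩ : ∃ e3, k = e4 + e3 := ⟨k - e4, by omega⟩
  obtain ⟨e2, rfl⟩ : ∃ e2, m = 2*(e4+e3) + r + e2 := ⟨m - (2*(e4+e3)+r), by omega⟩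
  have cast_eq : ∀ a b : ℕ, a ≤ b → (b.choose a : ℚ) = (b.factorial : ℚ) / (a.factorial * (b-a).factorial) :=
    fun a b h => Nat.cast_choose ℚ h
  apply Nat.cast_injective (R := ℚ)
  push_cast
  rw [cast_eq _ _ (by omega), cast_eq _ _ (by omega), cast_eq _ _ (by omega),
    cast_eq _ _ (by omega), cast_eq _ _ (by omega), cast_eq _ _ (by omega),
    cast_eq _ _ (by omega), cast_eq _ _ (by omega)]
  simp only [show e4+e3+r+e4 - (e4+e3) = r+e4 from by omega,
    show 2*(e4+e3)+r+e2 - (e4+e3+r+e4) = e3+e2 from by omega,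
    show 2*(e4+e3)+r+e2 - (2*(e4+e3)+r) = e2 from by omega,
    show 2*(e4+e3)+r+e2 - (e4+e3) = e4+e3+r+e2 from by omega,
    show 2*(e4+e3)+r+e2 - 2*(e4+e3) = r+e2 from by omega,
    show e4+e3+r+e4 - (e4+e3+r) = e4 from by omega,
    show e3+e2 - e2 = e3 from by omega,
    show r+e4 - r = e4 from by omega,
    show r+e2 - r = e2 from by omega,
    show e4+e3 - e4 = e3 from by omega,
    show e4+e3+r+e4 - (e4+e3) = r+e4 from by omega,
    show e4+e3+r+e2 - (e4+e3) = r+e2 from by omega]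
  have fne : ∀ t : ℕ, (t.factorial : ℚ) ≠ 0 := fun t => Nat.cast_ne_zero.2 (Nat.factorial_ne_zero t)
  field_simp

lemma bCoeff_eq_M (a₁ a₂ a₃ a₄ : ℤ) (n : ℕ) :
    bCoeff a₁ a₂ a₃ a₄ n =
    ∑ m ∈ range (n+1), ∑ k ∈ range (n+1), ∑ r ∈ range (n-m-k+1),
      ∑ s ∈ range (m-(n-m)+1),
        if (n-m) + (2*k+r+s) = n then
          (m.choose (n-m) * (n-m).choose k * (n-m-k).choose r * (m-(n-m)).choose s : ℤ)
          * a₁^s * a₂^r * a₃^(m-(n-m)-s) * a₄^(n-m-k-r)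
        else 0 := by
  rw [bCoeff]
  -- Step 1: extend the m-sum
  rw [Finset.sum_subset (by intro m hm; simp only [mem_Icc, mem_range] at *; omega :
      Finset.Icc (n/2) n ⊆ range (n+1))]
  swap
  · -- extra m (m < n/2, i.e. 2m < n) give zero
    intro m hm hm'
    simp only [mem_Icc, mem_range] at hm hm'
    have h2m : 2*m < n := by omega
    apply Finset.sum_eq_zero; intro k hk
    apply Finset.sum_eq_zero; intro r hr
    simp only [mem_range] at hk hr
    rcases lt_or_ge (m - 2*k) r with h | h
    · simp [Nat.choose_eq_zero_of_lt h]
    · have : k < n - m - k - r := by omega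
      simp [Nat.choose_eq_zero_of_lt this]
  -- Step 2: fix m, extend both k-sums
  apply Finset.sum_congr rfl
  intro m hm
  simp only [mem_range] at hm
  have hmn : m ≤ n := by omega
  rw [Finset.sum_subset (by intro k hk; simp only [mem_range] at *; omega :
      range (m/2+1) ⊆ range (n+1))]
  swap
  · -- extra k (2k > m) : bCoeff terms vanish
    intro k hk hk'
    simp only [mem_range] at hk hk'
    have h2k : m < 2*k := by omega
    apply Finset.sum_eq_zero; intro r hr
    rcases lt_or_ge m k with h | h
    · simp [Nat.choose_eq_zero_of_lt h]
    · have : m - k < k := by omega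
      simp [Nat.choose_eq_zero_of_lt this]
  -- Step 3: fix k, compare r-sums
  apply Finset.sum_congr rfl
  intro k hk
  simp only [mem_range] at hk
  have hkn : k ≤ n := by omega
  rcases le_or_gt (m + k) n with hmk | hmk
  · -- ranges coincide
    rw [show n + 1 - m - k = n - m - k + 1 from by omega]
    apply Finset.sum_congr rfl
    intro r hr
    simp only [mem_range] at hr
    have hrn : r ≤ n - m - k := by omega
    by_cases hA : 2*k + r ≤ m ∧ n ≤ m + (2*k + r)
    · obtain ⟨hA1, hA2⟩ := hA
      rw [Finset.sum_eq_single (m - (2*k + r))]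
      · rw [if_pos (by omega)]
        have hb := binident m (n-m) k r (by omega) (by omega) (by omega) (by omega)
        rw [show n - m - (k + r) = n - m - k - r from by omega] at hb
        have hb' : ((m.choose (n-m)) * ((n-m).choose k) * ((n-m-k).choose r)
            * ((m-(n-m)).choose (m-(2*k+r))) : ℤ)
            = (m.choose k) * ((m-k).choose k) * ((m-2*k).choose r)
            * (k.choose (n-m-k-r)) := by exact_mod_cast hb
        rw [hb', show m - (2*k+r) = m - 2*k - r from by omega,
          show m - (n-m) - (m - 2*k - r) = 2*k + m + r - n from by omega]
      · intro s hs hs'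
        rw [if_neg (by omega)]
      · intro hs
        exact absurd (mem_range.2 (by omega)) hs
    · -- degenerate: both sides zero
      have hL : (m.choose k * (m - k).choose k * (m - 2 * k).choose r *
          k.choose (n - m - k - r) : ℤ) * a₁ ^ (m - 2 * k - r) * a₂ ^ r *
          a₃ ^ (2 * k + m + r - n) * a₄ ^ (n - m - k - r) = 0 := by
        rcases lt_or_ge m (2*k) with h | h
        · rcases lt_or_ge m k with h' | h'
          · simp [Nat.choose_eq_zero_of_lt h']
          · have : m - k < k := by omega
            simp [Nat.choose_eq_zero_of_lt this]
        · rcases lt_or_ge (m - 2*k) r with h' | h'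
          · simp [Nat.choose_eq_zero_of_lt h']
          · have : k < n - m - k - r := by omega
            simp [Nat.choose_eq_zero_of_lt this]
      rw [hL]
      symm
      apply Finset.sum_eq_zero
      intro s hs
      simp only [mem_range] at hs
      rcases le_or_gt n (2*m) with hn2 | hn2
      · rw [if_neg (by omega)]
      · by_cases hc : (n-m) + (2*k+r+s) = n
        · rw [if_pos hc]
          have : m < n - m := by omega
          simp [Nat.choose_eq_zero_of_lt this]
        · rw [if_neg hc]
  · -- m + k > n : left range empty, right terms vanish
    rw [show n + 1 - m - k = 0 from by omega, show n - m - k = 0 from by omega]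
    rw [Finset.range_zero, Finset.sum_empty]
    symm
    apply Finset.sum_eq_zero; intro r hr
    apply Finset.sum_eq_zero; intro s hs
    have : n - m < k := by omega
    split
    · simp [Nat.choose_eq_zero_of_lt this]
    · rfl

lemma ysum (p : ℕ) [Fact p.Prime] (c : ZMod p) (m : ℕ) (hm : m ≤ p - 1) :
    ∑ y : ZMod p, (y * (y + c))^m =
      -((m.choose (p-1-m) : ZMod p) * c^(m-(p-1-m)) + (if m = p-1 then 1 else 0)) := by
  have hp := (Fact.out : p.Prime)
  have h2 := hp.two_le
  set n := p - 1 with hn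
  have hn1 : 1 ≤ n := by omega
  calc ∑ y : ZMod p, (y * (y + c))^m
      = ∑ y : ZMod p, ∑ j ∈ range (m+1), c^(m-j) * (m.choose j : ZMod p) * y^(m+j) := by
        refine Finset.sum_congr rfl fun y _ => ?_
        rw [mul_pow, add_pow, Finset.mul_sum]
        refine Finset.sum_congr rfl fun j _ => ?_
        rw [pow_add]; ring
    _ = ∑ j ∈ range (m+1), c^(m-j) * (m.choose j : ZMod p) * ∑ y : ZMod p, y^(m+j) := by
        rw [Finset.sum_comm]
        exact Finset.sum_congr rfl fun j _ => (Finset.mul_sum _ _ _).symm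
    _ = ∑ j ∈ range (m+1), c^(m-j) * (m.choose j : ZMod p) *
          ((if m+j = n then -1 else 0) + (if m+j = 2*n then -1 else 0)) := by
        refine Finset.sum_congr rfl fun j hj => ?_
        simp only [mem_range] at hj
        rw [zsum_pow p (m+j) (by omega)]
        congr 1
        by_cases h1 : m + j = n
        · rw [if_pos (Or.inl h1), if_pos h1, if_neg (by omega)]; ring
        · by_cases h2' : m + j = 2*n
          · rw [if_pos (Or.inr h2'), if_neg h1, if_pos h2']; ring
          · rw [if_neg (by tauto), if_neg h1, if_neg h2']; ring
    _ = -((m.choose (n-m) : ZMod p) * c^(m-(n-m)) + (if m = n then 1 else 0)) := by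
        rw [show ∀ S : Finset ℕ, ∀ f g : ℕ → ZMod p,
          (∑ j ∈ S, (fun j => c^(m-j) * (m.choose j : ZMod p)) j * (f j + g j)) =
          (∑ j ∈ S, c^(m-j) * (m.choose j : ZMod p) * f j)
          + ∑ j ∈ S, c^(m-j) * (m.choose j : ZMod p) * g j from
          fun S f g => by rw [← Finset.sum_add_distrib]; exact Finset.sum_congr rfl fun j _ => by ring]
        have hfirst : (∑ j ∈ range (m+1), c^(m-j) * (m.choose j : ZMod p) *
            (if m+j = n then (-1:ZMod p) else 0)) = -((m.choose (n-m) : ZMod p) * c^(m-(n-m))) := by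
          rcases le_or_gt (n-m) m with h | h
          · rw [Finset.sum_eq_single (n-m)]
            · rw [if_pos (by omega)]; ring
            · intro j hj hj'; simp only [mem_range] at hj
              rw [if_neg (by omega), mul_zero]
            · intro habs; exact absurd (mem_range.2 (by omega)) habs
          · rw [Finset.sum_eq_zero, Nat.choose_eq_zero_of_lt h]
            · push_cast; ring
            · intro j hj; simp only [mem_range] at hj
              rw [if_neg (by omega), mul_zero]
        have hsecond : (∑ j ∈ range (m+1), c^(m-j) * (m.choose j : ZMod p) *
            (if m+j = 2*n then (-1:ZMod p) else 0)) = -(if m = n then 1 else 0) := by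
          rcases eq_or_ne m n with h | h
          · subst h
            rw [Finset.sum_eq_single n]
            · rw [if_pos (by omega), if_pos rfl]; simp
            · intro j hj hj'; simp only [mem_range] at hj
              rw [if_neg (by omega), mul_zero]
            · intro habs; exact absurd (mem_range.2 (by omega)) habs
          · rw [Finset.sum_eq_zero, if_neg h, neg_zero]
            intro j hj; simp only [mem_range] at hj
            rw [if_neg (by omega), mul_zero]
        rw [hfirst, hsecond]; ring

lemma coef1 (p : ℕ) [Fact p.Prime] (m : ℕ) (hm : m ≤ p - 1) :
    (((p-1).choose m : ℕ) : ZMod p) * (-1)^(p-1-m) = 1 := by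
  rw [zchoose_cast p m hm, ← pow_add, show m + (p-1-m) = p-1 from by omega]
  exact ZMod.pow_card_sub_one_eq_one (neg_ne_zero.2 one_ne_zero)

lemma xsum (p : ℕ) [Fact p.Prime] (A₁ A₂ A₃ A₄ : ZMod p) (m : ℕ)
    (hm : p - 1 - m ≤ m) (hm1 : 1 ≤ m) (hmn : m ≤ p - 1) :
    ∑ x : ZMod p, x^(p-1-m) * (x^2 + (A₂*x+A₄))^(p-1-m) * (A₁*x+A₃)^(m-(p-1-m)) =
    -∑ k ∈ range (p-1-m+1), ∑ r ∈ range (p-1-m-k+1), ∑ s ∈ range (m-(p-1-m)+1),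
       (if (p-1-m)+(2*k+r+s) = p-1 then
         ((p-1-m).choose k : ZMod p) * ((p-1-m-k).choose r : ZMod p) *
           ((m-(p-1-m)).choose s : ZMod p)
          * A₁^s * A₂^r * A₃^(m-(p-1-m)-s) * A₄^(p-1-m-k-r) else 0) := by
  have hp := (Fact.out : p.Prime)
  have h2 := hp.two_le
  set n := p - 1 with hn
  have hn1 : 1 ≤ n := by omega
  set w := n - m with hw
  set t := m - w with ht
  calc ∑ x : ZMod p, x^w * (x^2 + (A₂*x+A₄))^w * (A₁*x+A₃)^t
      = ∑ x : ZMod p, ∑ s ∈ range (t+1), ∑ k ∈ range (w+1), ∑ r ∈ range (w-k+1),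
          ((w.choose k : ZMod p) * ((w-k).choose r : ZMod p) * (t.choose s : ZMod p)
            * A₁^s * A₂^r * A₃^(t-s) * A₄^(w-k-r)) * x^(w+(2*k+r+s)) := by
        refine Finset.sum_congr rfl fun x _ => ?_
        rw [add_pow (x^2) (A₂*x+A₄) w, add_pow (A₁*x) A₃ t, Finset.mul_sum]
        refine Finset.sum_congr rfl fun s hs => ?_
        rw [Finset.mul_sum, Finset.sum_mul]
        refine Finset.sum_congr rfl fun k hk => ?_
        rw [add_pow (A₂*x) A₄ (w-k)]
        simp only [Finset.sum_mul, Finset.mul_sum]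
        refine Finset.sum_congr rfl fun r hr => ?_
        simp only [mem_range] at hr hs hk
        rw [mul_pow A₂ x r, mul_pow A₁ x s,
          show w + (2*k+r+s) = w + 2*k + r + s from by ring, pow_add, pow_add, pow_add,
          pow_mul x 2 k]
        ring
    _ = ∑ s ∈ range (t+1), ∑ k ∈ range (w+1), ∑ r ∈ range (w-k+1),
          ((w.choose k : ZMod p) * ((w-k).choose r : ZMod p) * (t.choose s : ZMod p)
            * A₁^s * A₂^r * A₃^(t-s) * A₄^(w-k-r)) * ∑ x : ZMod p, x^(w+(2*k+r+s)) := by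
        rw [Finset.sum_comm]
        refine Finset.sum_congr rfl fun s _ => ?_
        rw [Finset.sum_comm]
        refine Finset.sum_congr rfl fun k _ => ?_
        rw [Finset.sum_comm]
        refine Finset.sum_congr rfl fun r _ => ?_
        rw [Finset.mul_sum]
    _ = ∑ s ∈ range (t+1), ∑ k ∈ range (w+1), ∑ r ∈ range (w-k+1),
          -(if w+(2*k+r+s) = n then
            ((w.choose k : ZMod p) * ((w-k).choose r : ZMod p) * (t.choose s : ZMod p)
            * A₁^s * A₂^r * A₃^(t-s) * A₄^(w-k-r)) else 0) := by
        refine Finset.sum_congr rfl fun s hs => Finset.sum_congr rfl fun k hk =>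
          Finset.sum_congr rfl fun r hr => ?_
        simp only [mem_range] at hk hr hs
        rw [zsum_pow p (w+(2*k+r+s)) (by omega)]
        by_cases hc : w+(2*k+r+s) = n
        · rw [if_pos (Or.inl hc), if_pos hc]; ring
        · rw [if_neg (by omega), if_neg hc]; ring
    _ = -∑ k ∈ range (w+1), ∑ r ∈ range (w-k+1), ∑ s ∈ range (t+1),
          (if w+(2*k+r+s) = n then
            ((w.choose k : ZMod p) * ((w-k).choose r : ZMod p) * (t.choose s : ZMod p)
            * A₁^s * A₂^r * A₃^(t-s) * A₄^(w-k-r)) else 0) := by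
        simp only [Finset.sum_neg_distrib]
        rw [neg_inj, Finset.sum_comm]
        exact Finset.sum_congr rfl fun k _ => Finset.sum_comm

lemma Esum (a₁ a₂ a₃ a₄ : ℤ) (p : ℕ) [Fact p.Prime] :
    ∑ x : ZMod p, ∑ y : ZMod p,
      (y * (y + ((a₁:ZMod p) * x + (a₃:ZMod p))) +
        -(x * (x^2 + ((a₂:ZMod p)*x + (a₄:ZMod p)))))^(p-1)
    = ((bCoeff a₁ a₂ a₃ a₄ (p-1) : ℤ) : ZMod p) := by
  have hp := (Fact.out : p.Prime)
  have h2 := hp.two_le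
  rw [bCoeff_eq_M]
  push_cast [apply_ite (fun z : ℤ => (z : ZMod p))]
  set n := p - 1 with hn
  have hn1 : 1 ≤ n := by omega
  set A₁ := (a₁ : ZMod p)
  set A₂ := (a₂ : ZMod p)
  set A₃ := (a₃ : ZMod p)
  set A₄ := (a₄ : ZMod p)
  calc ∑ x : ZMod p, ∑ y : ZMod p, (y * (y + (A₁*x+A₃)) + -(x * (x^2 + (A₂*x+A₄))))^n
      = ∑ x : ZMod p, ∑ m ∈ range (n+1),
          (∑ y : ZMod p, (y * (y + (A₁*x+A₃)))^m) *
            ((-(x * (x^2 + (A₂*x+A₄))))^(n-m) * (n.choose m : ZMod p)) := by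
        refine Finset.sum_congr rfl fun x _ => ?_
        rw [show (∑ y : ZMod p, (y * (y + (A₁*x+A₃)) + -(x * (x^2 + (A₂*x+A₄))))^n)
          = ∑ y : ZMod p, ∑ m ∈ range (n+1),
            (y * (y + (A₁*x+A₃)))^m * ((-(x * (x^2 + (A₂*x+A₄))))^(n-m) * (n.choose m : ZMod p))
          from Finset.sum_congr rfl fun y _ => by
            rw [add_pow]; exact Finset.sum_congr rfl fun m _ => by ring]
        rw [Finset.sum_comm]
        exact Finset.sum_congr rfl fun m _ => (Finset.sum_mul _ _ _).symm
    _ = ∑ m ∈ range (n+1), ∑ x : ZMod p,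
          (-((m.choose (n-m) : ZMod p) * (A₁*x+A₃)^(m-(n-m)) + (if m = n then 1 else 0))) *
            ((-(x * (x^2 + (A₂*x+A₄))))^(n-m) * (n.choose m : ZMod p)) := by
        rw [Finset.sum_comm]
        refine Finset.sum_congr rfl fun m hm => Finset.sum_congr rfl fun x _ => ?_
        simp only [mem_range] at hm
        rw [ysum p (A₁*x+A₃) m (by omega)]
    _ = (∑ m ∈ range (n+1), ∑ x : ZMod p, ((n.choose m : ZMod p) * (-1)^(n-m)) *
          -((m.choose (n-m) : ZMod p) * ((A₁*x+A₃)^(m-(n-m)) *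
            (x^(n-m) * (x^2+(A₂*x+A₄))^(n-m)))))
        + ∑ m ∈ range (n+1), ∑ x : ZMod p,
            -((if m = n then 1 else 0) * ((-(x * (x^2 + (A₂*x+A₄))))^(n-m) * (n.choose m : ZMod p))) := by
        rw [← Finset.sum_add_distrib]
        refine Finset.sum_congr rfl fun m _ => ?_
        rw [← Finset.sum_add_distrib]
        refine Finset.sum_congr rfl fun x _ => ?_
        rw [neg_pow (x * (x^2+(A₂*x+A₄))) (n-m), mul_pow x (x^2+(A₂*x+A₄)) (n-m)]
        ring
    _ = ∑ m ∈ range (n+1), ∑ x : ZMod p, ((n.choose m : ZMod p) * (-1)^(n-m)) *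
          -((m.choose (n-m) : ZMod p) * ((A₁*x+A₃)^(m-(n-m)) *
            (x^(n-m) * (x^2+(A₂*x+A₄))^(n-m)))) := by
        rw [add_eq_left]
        rw [Finset.sum_eq_single n]
        · have : ∀ x : ZMod p, -((if n = n then (1:ZMod p) else 0) *
              ((-(x * (x^2 + (A₂*x+A₄))))^(n-n) * (n.choose n : ZMod p))) = -1 := by
            intro x; simp
          rw [Finset.sum_congr rfl fun x _ => this x, Finset.sum_const, card_univ, ZMod.card,
            nsmul_eq_mul, ZMod.natCast_self, zero_mul]
        · intro m _ hm; simp [hm]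
        · intro h; exact absurd (self_mem_range_succ n) h
    _ = ∑ m ∈ range (n+1),
          -((m.choose (n-m) : ZMod p) *
            ∑ x : ZMod p, x^(n-m) * (x^2+(A₂*x+A₄))^(n-m) * (A₁*x+A₃)^(m-(n-m))) := by
        refine Finset.sum_congr rfl fun m hm => ?_
        simp only [mem_range] at hm
        rw [← Finset.mul_sum, coef1 p m (by omega), one_mul, Finset.mul_sum,
          ← Finset.sum_neg_distrib]
        exact Finset.sum_congr rfl fun x _ => by ring
    _ = ∑ m ∈ range (n+1), ∑ k ∈ range (n+1), ∑ r ∈ range (n-m-k+1), ∑ s ∈ range (m-(n-m)+1),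
          (if (n-m) + (2*k+r+s) = n then
            (m.choose (n-m) : ZMod p) * ((n-m).choose k : ZMod p) * ((n-m-k).choose r : ZMod p)
              * ((m-(n-m)).choose s : ZMod p)
              * A₁^s * A₂^r * A₃^(m-(n-m)-s) * A₄^(n-m-k-r)
          else 0) := by
        refine Finset.sum_congr rfl fun m hm => ?_
        simp only [mem_range] at hm
        rcases le_or_gt (n-m) m with hcase | hcase
        · -- main case: use xsum
          have hm1 : 1 ≤ m := by omega
          have hx := xsum p A₁ A₂ A₃ A₄ m (by omega) hm1 (by omega)
          rw [← hn] at hx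
          rw [hx, mul_neg, neg_neg]
          -- extend k-range from n-m+1 to n+1
          rw [Finset.mul_sum]
          rw [Finset.sum_subset (by intro k hk; simp only [mem_range] at *; omega :
              range (n-m+1) ⊆ range (n+1))]
          · refine Finset.sum_congr rfl fun k _ => ?_
            rw [Finset.mul_sum]
            refine Finset.sum_congr rfl fun r _ => ?_
            rw [Finset.mul_sum]
            refine Finset.sum_congr rfl fun s _ => ?_
            rw [mul_ite, mul_zero]
            split
            · ring
            · rfl
          · intro k hk hk'
            simp only [mem_range] at hk hk'
            have hck : (n-m).choose k = 0 := Nat.choose_eq_zero_of_lt (by omega)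
            rw [Finset.mul_sum]
            apply Finset.sum_eq_zero; intro r _
            rw [Finset.mul_sum]
            apply Finset.sum_eq_zero; intro s _
            rw [mul_ite, mul_zero]
            split
            · rw [hck]; push_cast; ring
            · rfl
        · -- degenerate: C(m, n-m) = 0
          have hcm : m.choose (n-m) = 0 := Nat.choose_eq_zero_of_lt hcase
          rw [hcm]
          push_cast
          rw [zero_mul, neg_zero]
          symm
          apply Finset.sum_eq_zero; intro k _
          apply Finset.sum_eq_zero; intro r _
          apply Finset.sum_eq_zero; intro s _
          split
          · ring
          · rfl

theorem stmt5 (a₁ a₂ a₃ a₄ : ℤ)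
    (hΔ : (WeierstrassCurve.mk a₁ a₂ a₃ a₄ 0).Δ ≠ 0)
    (p : ℕ) (hp : p.Prime) (hpΔ : ¬ ((p : ℤ) ∣ (WeierstrassCurve.mk a₁ a₂ a₃ a₄ 0).Δ))
    (b : ℕ → ℤ) (hb : ∀ n : ℕ, 1 ≤ n → b n = bCoeff a₁ a₂ a₃ a₄ (n - 1))
    (Ap : ℕ)
    (hAp : Ap = 1 + Nat.card {P : ZMod p × ZMod p //
      P.2 ^ 2 + (a₁ : ZMod p) * P.1 * P.2 + (a₃ : ZMod p) * P.2 =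
        P.1 ^ 3 + (a₂ : ZMod p) * P.1 ^ 2 + (a₄ : ZMod p) * P.1})
    (tp : ℤ) (htp : tp = 1 + (p : ℤ) - (Ap : ℤ)) :
    b p ≡ tp [ZMOD p] := by
  haveI : Fact p.Prime := ⟨hp⟩
  have h2 := hp.two_le
  rw [← ZMod.intCast_eq_intCast_iff]
  rw [hb p (by omega), htp, hAp]
  set N := Nat.card {P : ZMod p × ZMod p //
      P.2 ^ 2 + (a₁ : ZMod p) * P.1 * P.2 + (a₃ : ZMod p) * P.2 =
        P.1 ^ 3 + (a₂ : ZMod p) * P.1 ^ 2 + (a₄ : ZMod p) * P.1} with hN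
  have hcount : (N : ZMod p) = - ∑ P : ZMod p × ZMod p,
      (P.2 * (P.2 + ((a₁:ZMod p) * P.1 + (a₃:ZMod p))) +
        -(P.1 * (P.1^2 + ((a₂:ZMod p)*P.1 + (a₄:ZMod p)))))^(p-1) := by
    rw [hN, Nat.card_eq_fintype_card, Fintype.card_subtype]
    have key : ∀ P : ZMod p × ZMod p,
        (if P.2 ^ 2 + (a₁ : ZMod p) * P.1 * P.2 + (a₃ : ZMod p) * P.2 =
          P.1 ^ 3 + (a₂ : ZMod p) * P.1 ^ 2 + (a₄ : ZMod p) * P.1 then (1 : ZMod p) else 0)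
        = 1 - (P.2 * (P.2 + ((a₁:ZMod p) * P.1 + (a₃:ZMod p))) +
            -(P.1 * (P.1^2 + ((a₂:ZMod p)*P.1 + (a₄:ZMod p)))))^(p-1) := by
      intro P
      set g := P.2 * (P.2 + ((a₁:ZMod p) * P.1 + (a₃:ZMod p))) +
            -(P.1 * (P.1^2 + ((a₂:ZMod p)*P.1 + (a₄:ZMod p)))) with hg
      have heq : (P.2 ^ 2 + (a₁ : ZMod p) * P.1 * P.2 + (a₃ : ZMod p) * P.2 =
          P.1 ^ 3 + (a₂ : ZMod p) * P.1 ^ 2 + (a₄ : ZMod p) * P.1) ↔ g = 0 := by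
        rw [hg, ← sub_eq_zero]
        constructor <;> intro h <;> [linear_combination h; linear_combination h]
      by_cases hc : g = 0
      · rw [if_pos (heq.2 hc), hc, zero_pow (by omega), sub_zero]
      · rw [if_neg (fun h => hc (heq.1 h)), ZMod.pow_card_sub_one_eq_one hc, sub_self]
    rw [Finset.card_eq_sum_ones, Nat.cast_sum, Finset.sum_filter]
    push_cast
    rw [Finset.sum_congr rfl fun P _ => key P, Finset.sum_sub_distrib, Finset.sum_const,
      card_univ, Fintype.card_prod, ZMod.card, nsmul_eq_mul]
    push_cast
    rw [ZMod.natCast_self]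
    ring
  calc ((bCoeff a₁ a₂ a₃ a₄ (p-1) : ℤ) : ZMod p)
      = ∑ x : ZMod p, ∑ y : ZMod p,
        (y * (y + ((a₁:ZMod p) * x + (a₃:ZMod p))) +
          -(x * (x^2 + ((a₂:ZMod p)*x + (a₄:ZMod p)))))^(p-1) := (Esum a₁ a₂ a₃ a₄ p).symm
    _ = ∑ P : ZMod p × ZMod p,
        (P.2 * (P.2 + ((a₁:ZMod p) * P.1 + (a₃:ZMod p))) +
          -(P.1 * (P.1^2 + ((a₂:ZMod p)*P.1 + (a₄:ZMod p)))))^(p-1) := by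
        rw [Fintype.sum_prod_type]
    _ = ((1 + (p:ℤ) - ((1:ℕ) + N : ℕ) : ℤ) : ZMod p) := by
        have h0 : ((1 + (p:ℤ) - ((1:ℕ) + N : ℕ) : ℤ) : ZMod p) = -(N : ZMod p) := by
          push_cast
          rw [ZMod.natCast_self]
          ring
        rw [h0, hcount, neg_neg]
end

section
/- Let a be a nonzero integer and p a prime with p ∤ 2a. Set A_p = 1 + #{(x,y) ∈ 𝔽_p × 𝔽_p : y² = x³ + ax} and t_p = 1 + p − A_p. If p ≡ 3 (mod 4), then t_p = 0. -/
open Finset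

theorem stmt9 (a : ℤ) (ha : a ≠ 0) (p : ℕ) (hp : p.Prime)
    (hpa : ¬ ((p : ℤ) ∣ 2 * a)) (hp4 : p % 4 = 3)
    (Ap : ℕ)
    (hAp : Ap = 1 + Nat.card {P : ZMod p × ZMod p //
      P.2 ^ 2 = P.1 ^ 3 + (a : ZMod p) * P.1})
    (tp : ℤ) (htp : tp = 1 + (p : ℤ) - (Ap : ℤ)) :
    tp = 0 := by
  haveI : Fact p.Prime := ⟨hp⟩
  have hp2 : p ≠ 2 := by
    rintro rfl; exact hpa (Dvd.intro a rfl)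
  have hchar : ringChar (ZMod p) ≠ 2 := by
    rw [ZMod.ringChar_zmod_n]; exact hp2
  classical
  set χ := quadraticChar (ZMod p)
  set f : ZMod p → ZMod p := fun x => x ^ 3 + (a : ZMod p) * x with hf
  -- character sum vanishes
  have hodd : ∀ x : ZMod p, χ (f (-x)) = -χ (f x) := by
    intro x
    have h1 : f (-x) = -1 * f x := by simp [hf]; ring
    have hm1 : χ (-1) = -1 := by
      rw [quadraticChar_neg_one hchar, ZMod.card]
      exact ZMod.χ₄_nat_three_mod_four hp4
    rw [h1, map_mul, hm1]; ring
  have hsum : ∑ x : ZMod p, χ (f x) = 0 := by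
    have h2 : ∑ x : ZMod p, χ (f (-x)) = ∑ x : ZMod p, χ (f x) :=
      Fintype.sum_equiv (Equiv.neg (ZMod p)) (fun x => χ (f (-x))) (fun x => χ (f x)) (fun x => rfl)
    simp_rw [hodd, Finset.sum_neg_distrib] at h2
    linarith
  -- count the points
  have hcard : (Nat.card {P : ZMod p × ZMod p //
      P.2 ^ 2 = P.1 ^ 3 + (a : ZMod p) * P.1} : ℤ) = p := by
    rw [Nat.card_eq_fintype_card]
    have e : {P : ZMod p × ZMod p // P.2 ^ 2 = P.1 ^ 3 + (a : ZMod p) * P.1} ≃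
        Σ x : ZMod p, {y : ZMod p // y ^ 2 = f x} :=
      Equiv.subtypeProdEquivSigmaSubtype fun x y => y ^ 2 = f x
    rw [Fintype.card_congr e, Fintype.card_sigma]
    have hx : ∀ x : ZMod p,
        (Fintype.card {y : ZMod p // y ^ 2 = f x} : ℤ) = χ (f x) + 1 := by
      intro x
      have := quadraticChar_card_sqrts hchar (f x)
      rw [← this]
      congr 1
      rw [Set.toFinset_card]
      exact Fintype.card_congr (Equiv.setCongr rfl)
    push_cast
    rw [Finset.sum_congr rfl (fun x _ => hx x), Finset.sum_add_distrib, hsum]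
    simp [ZMod.card]
  rw [htp, hAp]
  push_cast
  rw [show ((Nat.card {P : ZMod p × ZMod p //
      P.2 ^ 2 = P.1 ^ 3 + (a : ZMod p) * P.1} : ℕ) : ℤ) = p from hcard]
  ring
end

section
/- Let a be a nonzero integer and p a prime with p ∤ 2a and p ≡ 1 (mod 4). Set A_p = 1 + #{(x,y) ∈ 𝔽_p × 𝔽_p : y² = x³ + ax} and t_p = 1 + p − A_p. Then t_p ≡ C((p−1)/2, (p−1)/4) · a^{(p−1)/4} (mod p). -/
open Finset

lemma sumPowZMod (p : ℕ) [Fact p.Prime] (n : ℕ) (hn : n ≠ 0) :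
    ∑ x : ZMod p, x ^ n = if (p - 1) ∣ n then -1 else 0 := by
  classical
  let φ : (ZMod p)ˣ ↪ ZMod p := ⟨fun x ↦ x, Units.val_injective⟩
  have huniv : univ.map φ = univ \ {0} := by
    ext x
    simpa only [mem_map, mem_univ, Function.Embedding.coeFn_mk, true_and, mem_sdiff,
      mem_singleton, φ, IsUnit] using isUnit_iff_ne_zero
  calc
    ∑ x : ZMod p, x ^ n = ∑ x ∈ univ \ {(0 : ZMod p)}, x ^ n := by
      rw [← sum_sdiff ({0} : Finset (ZMod p)).subset_univ, sum_singleton, zero_pow hn, add_zero]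
    _ = ∑ x : (ZMod p)ˣ, (x ^ n : ZMod p) := by simp [φ, ← huniv, univ.sum_map φ]
    _ = if (p - 1) ∣ n then -1 else 0 := by
      rw [FiniteField.sum_pow_units (ZMod p) n, ZMod.card]

lemma sqCount (p : ℕ) [Fact p.Prime] (hp2 : p ≠ 2) (c : ZMod p) :
    ∑ y : ZMod p, (if y ^ 2 = c then (1 : ZMod p) else 0) = c ^ (p / 2) + 1 := by
  classical
  have hchar : ringChar (ZMod p) ≠ 2 := by
    rw [ZMod.ringChar_zmod_n]; exact hp2
  have h := quadraticChar_card_sqrts hchar c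
  have h2 := quadraticChar_eq_pow_of_char_ne_two' hchar c
  rw [ZMod.card] at h2
  have hcard : (#(univ.filter (fun y : ZMod p => y ^ 2 = c)) : ZMod p)
      = ((quadraticChar (ZMod p) c : ℤ) : ZMod p) + 1 := by
    rw [Set.toFinset_setOf] at h
    exact_mod_cast congrArg (fun z : ℤ => (z : ZMod p)) h
  rw [Finset.sum_boole, hcard, h2]

lemma mainSum (p : ℕ) [Fact p.Prime] (hp4 : p % 4 = 1) (b : ZMod p) :
    ∑ x : ZMod p, (x ^ 3 + b * x) ^ (p / 2)
      = -((((p - 1) / 2).choose ((p - 1) / 4) : ZMod p) * b ^ ((p - 1) / 4)) := by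
  have hp2 : 2 ≤ p := (Fact.out : p.Prime).two_le
  set t := (p - 1) / 4 with ht
  set m := (p - 1) / 2 with hm
  have hfacts : p = 4 * t + 1 ∧ m = 2 * t ∧ p / 2 = m ∧ 1 ≤ t ∧ m + 2 * t = p - 1 := by
    constructor <;> omega
  obtain ⟨hpt, hm2, hpm, ht1, hmt⟩ := hfacts
  have hiff : ∀ k ∈ range (m + 1), ((p - 1) ∣ (m + 2 * k)) ↔ k = t := by
    intro k hk
    rw [mem_range] at hk
    constructor
    · rintro ⟨j, hj⟩
      have hj1 : j = 1 := by nlinarith [hj, hk, hm2, ht1, hmt]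
      subst hj1
      omega
    · rintro rfl
      exact ⟨1, by omega⟩
  calc
    ∑ x : ZMod p, (x ^ 3 + b * x) ^ (p / 2)
        = ∑ x : ZMod p, ∑ k ∈ range (m + 1),
            b ^ (m - k) * (m.choose k : ZMod p) * x ^ (m + 2 * k) := by
      refine Finset.sum_congr rfl fun x _ => ?_
      have h1 : x ^ 3 + b * x = x * (x ^ 2 + b) := by ring
      rw [hpm, h1, mul_pow, add_pow, mul_sum]
      refine Finset.sum_congr rfl fun k hk => ?_
      rw [← pow_mul, pow_add]
      ring
    _ = ∑ k ∈ range (m + 1),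
            b ^ (m - k) * (m.choose k : ZMod p) * ∑ x : ZMod p, x ^ (m + 2 * k) := by
      rw [Finset.sum_comm]
      exact Finset.sum_congr rfl fun k _ => by rw [mul_sum]
    _ = ∑ k ∈ range (m + 1),
            (if k = t then -(b ^ (m - k) * (m.choose k : ZMod p)) else 0) := by
      refine Finset.sum_congr rfl fun k hk => ?_
      rw [sumPowZMod p _ (by omega), if_congr (hiff k hk) rfl rfl]
      split_ifs <;> ring
    _ = -((m.choose t : ZMod p) * b ^ t) := by
      rw [Finset.sum_ite_eq' (range (m + 1)) t]
      have : t ∈ range (m + 1) := by rw [mem_range]; omega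
      rw [if_pos this]
      have : m - t = t := by omega
      rw [this]; ring

theorem stmt10 (a : ℤ) (ha : a ≠ 0) (p : ℕ) (hp : p.Prime)
    (hpa : ¬ ((p : ℤ) ∣ 2 * a)) (hp4 : p % 4 = 1)
    (Ap : ℕ)
    (hAp : Ap = 1 + Nat.card {P : ZMod p × ZMod p //
      P.2 ^ 2 = P.1 ^ 3 + (a : ZMod p) * P.1})
    (tp : ℤ) (htp : tp = 1 + (p : ℤ) - (Ap : ℤ)) :
    tp ≡ (((p - 1) / 2).choose ((p - 1) / 4) : ℤ) * a ^ ((p - 1) / 4) [ZMOD p] := by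
  haveI : Fact p.Prime := ⟨hp⟩
  classical
  have hp2 : p ≠ 2 := by omega
  set b : ZMod p := (a : ZMod p) with hb
  have hcard : ((Nat.card {P : ZMod p × ZMod p //
      P.2 ^ 2 = P.1 ^ 3 + (a : ZMod p) * P.1} : ℕ) : ZMod p)
      = -((((p - 1) / 2).choose ((p - 1) / 4) : ZMod p) * b ^ ((p - 1) / 4)) := by
    rw [Nat.card_eq_fintype_card, Fintype.card_subtype, ← Finset.sum_boole]
    calc
      (∑ P : ZMod p × ZMod p, if P.2 ^ 2 = P.1 ^ 3 + b * P.1 then (1 : ZMod p) else 0)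
          = ∑ x : ZMod p, ∑ y : ZMod p, (if y ^ 2 = x ^ 3 + b * x then (1 : ZMod p) else 0) := by
        rw [Fintype.sum_prod_type]
      _ = ∑ x : ZMod p, ((x ^ 3 + b * x) ^ (p / 2) + 1) := by
        exact Finset.sum_congr rfl fun x _ => sqCount p hp2 _
      _ = ∑ x : ZMod p, (x ^ 3 + b * x) ^ (p / 2) := by
        rw [Finset.sum_add_distrib, Finset.sum_const, Finset.card_univ, ZMod.card,
          nsmul_eq_mul, mul_one, ZMod.natCast_self, add_zero]
      _ = _ := mainSum p hp4 b
  rw [← ZMod.intCast_eq_intCast_iff]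
  push_cast
  rw [htp, hAp]
  push_cast
  rw [hcard]
  simp [ZMod.natCast_self, hb]
end

section
/- Let p be an odd prime with p ≡ 1 (mod 4) and let n be a positive integer with n ≡ 1 (mod 4) and p ∤ n. Then C((np−1)/2, (np−1)/4) ≡ C((n−1)/2, (n−1)/4) · C((p−1)/2, (p−1)/4) (mod p). -/
theorem stmt11 (p : ℕ) (hp : p.Prime) (hp4 : p % 4 = 1)
    (n : ℕ) (hn : 0 < n) (hn4 : n % 4 = 1) (hpn : ¬ p ∣ n) :
    ((n * p - 1) / 2).choose ((n * p - 1) / 4) ≡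
      ((n - 1) / 2).choose ((n - 1) / 4) * ((p - 1) / 2).choose ((p - 1) / 4) [MOD p] := by
  haveI : Fact p.Prime := ⟨hp⟩
  obtain ⟨a, rfl⟩ : ∃ a, n = 4 * a + 1 := ⟨n / 4, by omega⟩
  obtain ⟨b, rfl⟩ : ∃ b, p = 4 * b + 1 := ⟨p / 4, by omega⟩
  have key : (4 * a + 1) * (4 * b + 1) - 1 = (a * (4 * b + 1) + b) * 4 := by
    have : (4 * a + 1) * (4 * b + 1) = (a * (4 * b + 1) + b) * 4 + 1 := by ring
    omega
  have h2 : ((4 * a + 1) * (4 * b + 1) - 1) / 2 = 2 * a * (4 * b + 1) + 2 * b := by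
    rw [key]; have : (a * (4 * b + 1) + b) * 4 = (2 * a * (4 * b + 1) + 2 * b) * 2 := by ring
    rw [this, Nat.mul_div_cancel _ (by norm_num)]
  have h4 : ((4 * a + 1) * (4 * b + 1) - 1) / 4 = a * (4 * b + 1) + b := by
    rw [key, Nat.mul_div_cancel _ (by norm_num)]
  rw [h2, h4]
  have hb1 : 1 ≤ b := by
    rcases Nat.eq_zero_or_pos b with h | h
    · exfalso; subst h; exact Nat.not_prime_one (by simpa using hp)
    · exact h
  have := Choose.choose_modEq_choose_mod_mul_choose_div_nat (p := 4 * b + 1)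
    (n := 2 * a * (4 * b + 1) + 2 * b) (k := a * (4 * b + 1) + b)
  have e1 : (2 * a * (4 * b + 1) + 2 * b) % (4 * b + 1) = 2 * b := by
    rw [Nat.add_comm, Nat.add_mul_mod_self_right, Nat.mod_eq_of_lt (by omega)]
  have e2 : (a * (4 * b + 1) + b) % (4 * b + 1) = b := by
    rw [Nat.add_comm, Nat.add_mul_mod_self_right, Nat.mod_eq_of_lt (by omega)]
  have e3 : (2 * a * (4 * b + 1) + 2 * b) / (4 * b + 1) = 2 * a := by
    rw [Nat.add_comm, Nat.add_mul_div_right _ _ (by omega : 0 < 4 * b + 1),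
      Nat.div_eq_of_lt (by omega), Nat.zero_add]
  have e4 : (a * (4 * b + 1) + b) / (4 * b + 1) = a := by
    rw [Nat.add_comm, Nat.add_mul_div_right _ _ (by omega : 0 < 4 * b + 1),
      Nat.div_eq_of_lt (by omega), Nat.zero_add]
  rw [e1, e2, e3, e4] at this
  have g1 : (4 * a + 1 - 1) / 2 = 2 * a := by omega
  have g2 : (4 * a + 1 - 1) / 4 = a := by omega
  have g3 : (4 * b + 1 - 1) / 2 = 2 * b := by omega
  have g4 : (4 * b + 1 - 1) / 4 = b := by omega
  rw [g1, g2, g3, g4, mul_comm ((2 * a).choose a)]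
  exact this
end

section
/- Let a be a nonzero integer and p a prime with p ∤ 3a and p ≡ 1 (mod 3). Set A_p = 1 + #{(x,y) ∈ 𝔽_p × 𝔽_p : y² + ay = x³} and t_p = 1 + p − A_p. Then t_p ≡ C(2(p−1)/3, (p−1)/3) · a^{(p−1)/3} (mod p). -/
open Finset

private lemma fact2 : ∀ m : ℕ, (2*m).factorial = m.factorial * ∏ i ∈ range m, (2*(2*i+1))
  | 0 => rfl
  | (m+1) => by
    rw [prod_range_succ, show 2*(m+1) = (2*m+1)+1 from rfl]
    simp only [Nat.factorial_succ, fact2 m]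
    ring

private lemma sum_pow_zmod (p : ℕ) [Fact p.Prime] (n : ℕ) :
    (∑ x : ZMod p, x ^ n) = if n ≠ 0 ∧ (p - 1) ∣ n then -1 else 0 := by
  classical
  rcases eq_or_ne n 0 with rfl | hn
  · simp [Finset.card_univ, ZMod.card, ZMod.natCast_self]
  · have key : (∑ x : ZMod p, x ^ n) = ∑ x : (ZMod p)ˣ, ((x : ZMod p)) ^ n := by
      rw [Finset.sum_eq_sum_sdiff_singleton_add (mem_univ (0 : ZMod p)), zero_pow hn, add_zero]
      refine (Finset.sum_bij' (fun (x : (ZMod p)ˣ) _ => (x : ZMod p))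
        (fun x hx => Units.mk0 x (by simpa using (Finset.mem_sdiff.mp hx).2)) ?_ ?_ ?_ ?_ ?_).symm
      · intro x _; simp [Finset.mem_sdiff, Units.ne_zero]
      · intro x hx; simp
      · intro x hx; simp
      · intro x hx; simp
      · intro x hx; simp
    rw [key, FiniteField.sum_pow_units (ZMod p) n, ZMod.card]
    simp [hn]

private lemma card_sqrts (p : ℕ) [Fact p.Prime] (hp2 : p ≠ 2) (d : ZMod p) :
    ((Nat.card {z : ZMod p // z ^ 2 = d} : ℕ) : ZMod p) = 1 + d ^ (p / 2) := by
  classical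
  have hp := (Fact.out : p.Prime)
  have hchar : ringChar (ZMod p) ≠ 2 := by
    rw [ZMod.ringChar_zmod_n]; exact hp2
  have h2 : (2 : ZMod p) ≠ 0 := by
    have : ((2 : ℕ) : ZMod p) ≠ 0 := by
      rw [Ne, ZMod.natCast_eq_zero_iff]
      intro h
      exact hp2 ((Nat.prime_dvd_prime_iff_eq hp Nat.prime_two).mp h)
    simpa using this
  have hodd : p % 2 = 1 := Nat.odd_iff.mp (hp.odd_of_ne_two hp2)
  have hp2' : 2 < p := by have := hp.two_le; omega
  rcases eq_or_ne d 0 with rfl | hd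
  · have hcard : Nat.card {z : ZMod p // z ^ 2 = 0} = 1 := by
      rw [Nat.card_eq_fintype_card, Fintype.card_subtype]
      have : (univ.filter fun z : ZMod p => z ^ 2 = 0) = {0} := by
        ext z
        simp [pow_eq_zero_iff]
      rw [this, card_singleton]
    rw [hcard]
    rw [zero_pow (by have := hp.two_le; omega : p / 2 ≠ 0)]
    simp
  · have := FiniteField.pow_dichotomy hchar hd
    rw [ZMod.card] at this
    rcases this with h1 | h1
    · obtain ⟨c, rfl⟩ := (ZMod.euler_criterion p hd).mpr h1
      have hc : c ≠ 0 := by rintro rfl; simp at hd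
      have hcc : c ≠ -c := by
        intro h
        apply hc
        have : (2 : ZMod p) * c = 0 := by linear_combination h
        exact (mul_eq_zero.mp this).resolve_left h2
      have hcard : Nat.card {z : ZMod p // z ^ 2 = c * c} = 2 := by
        rw [Nat.card_eq_fintype_card, Fintype.card_subtype]
        have : (univ.filter fun z : ZMod p => z ^ 2 = c * c) = {c, -c} := by
          ext z
          simp only [mem_filter, mem_univ, true_and, mem_insert, mem_singleton]
          rw [show c * c = c ^ 2 by ring, sq_eq_sq_iff_eq_or_eq_neg]
        rw [this, card_insert_of_notMem (by simpa using hcc), card_singleton]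
      rw [hcard, h1]
      norm_num
    · have hcard : Nat.card {z : ZMod p // z ^ 2 = d} = 0 := by
        rw [Nat.card_eq_zero]
        left
        refine ⟨fun zz => ?_⟩
        obtain ⟨z, hz⟩ := zz
        have hz0 : z ≠ 0 := by rintro rfl; simp at hz; exact hd hz.symm
        have hd1 : d ^ (p / 2) = 1 := by
          rw [← hz, ← pow_mul, show 2 * (p / 2) = p - 1 by omega,
            ZMod.pow_card_sub_one_eq_one hz0]
        rw [h1] at hd1
        haveI : Fact (2 < p) := ⟨hp2'⟩
        exact CharP.neg_one_ne_one (ZMod p) p hd1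
      rw [hcard, h1]
      simp

theorem stmt14 (a : ℤ) (ha : a ≠ 0) (p : ℕ) (hp : p.Prime)
    (hpa : ¬ ((p : ℤ) ∣ 3 * a)) (hp3 : p % 3 = 1)
    (Ap : ℕ)
    (hAp : Ap = 1 + Nat.card {P : ZMod p × ZMod p //
      P.2 ^ 2 + (a : ZMod p) * P.2 = P.1 ^ 3})
    (tp : ℤ) (htp : tp = 1 + (p : ℤ) - (Ap : ℤ)) :
    tp ≡ ((2 * ((p - 1) / 3)).choose ((p - 1) / 3) : ℤ) * a ^ ((p - 1) / 3) [ZMOD p] := by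
  classical
  haveI : Fact p.Prime := ⟨hp⟩
  have hp2 : p ≠ 2 := by rintro rfl; omega
  have hp3' : p ≠ 3 := by rintro rfl; exact hpa ⟨a, by ring⟩
  have hodd : p % 2 = 1 := Nat.odd_iff.mp (hp.odd_of_ne_two hp2)
  have hple : 2 ≤ p := hp.two_le
  have hp7 : 7 ≤ p := by omega
  set m := (p - 1) / 3 with hm
  set s := p / 2 with hs
  have h3m : 3 * m = p - 1 := by omega
  have h2s : 2 * s = p - 1 := by omega
  have hmeven : m % 2 = 0 := by omega
  have hmp : m < p := by omega
  have hms : m ≤ s := by omega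
  have ha' : (a : ZMod p) ≠ 0 := by
    rw [Ne, ZMod.intCast_zmod_eq_zero_iff_dvd]
    intro h
    exact hpa (h.mul_left 3)
  have h2 : (2 : ZMod p) ≠ 0 := by
    have : ((2 : ℕ) : ZMod p) ≠ 0 := by
      rw [Ne, ZMod.natCast_eq_zero_iff]
      intro h
      exact hp2 ((Nat.prime_dvd_prime_iff_eq hp Nat.prime_two).mp h)
    simpa using this
  have h4 : (4 : ZMod p) ≠ 0 := by
    have : (4 : ZMod p) = 2 * 2 := by norm_num
    rw [this]
    exact mul_ne_zero h2 h2
  -- point count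
  have hN : ((Nat.card {P : ZMod p × ZMod p //
      P.2 ^ 2 + (a : ZMod p) * P.2 = P.1 ^ 3} : ℕ) : ZMod p)
      = - ((s.choose m : ZMod p) * 4 ^ m * (a : ZMod p) ^ m) := by
    rw [Nat.card_congr (Equiv.subtypeProdEquivSigmaSubtype
      (fun x y : ZMod p => y ^ 2 + (a : ZMod p) * y = x ^ 3))]
    rw [Nat.card_eq_fintype_card, Fintype.card_sigma, Nat.cast_sum]
    have fiber : ∀ x : ZMod p,
        ((Fintype.card {y : ZMod p // y ^ 2 + (a : ZMod p) * y = x ^ 3} : ℕ) : ZMod p)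
        = 1 + ((a : ZMod p) ^ 2 + 4 * x ^ 3) ^ s := by
      intro x
      rw [← Nat.card_eq_fintype_card]
      have e : {y : ZMod p // y ^ 2 + (a : ZMod p) * y = x ^ 3}
          ≃ {z : ZMod p // z ^ 2 = (a : ZMod p) ^ 2 + 4 * x ^ 3} := by
        refine Equiv.subtypeEquiv ((Equiv.mulLeft₀ (2 : ZMod p) h2).trans
          (Equiv.addRight (a : ZMod p))) ?_
        intro y
        simp only [Equiv.trans_apply, Equiv.mulLeft₀_apply, Equiv.coe_addRight]
        constructor
        · intro h; linear_combination 4 * h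
        · intro h
          apply mul_left_cancel₀ h4
          linear_combination h
      rw [Nat.card_congr e, card_sqrts p hp2]
    rw [Finset.sum_congr rfl (fun x _ => fiber x), Finset.sum_add_distrib]
    have hsum1 : (∑ _x : ZMod p, (1 : ZMod p)) = 0 := by
      simp [Finset.card_univ, ZMod.card, ZMod.natCast_self]
    rw [hsum1, zero_add]
    have expand : ∀ x : ZMod p, ((a : ZMod p) ^ 2 + 4 * x ^ 3) ^ s
        = ∑ k ∈ range (s + 1),
          ((s.choose k : ZMod p) * ((a : ZMod p) ^ 2) ^ (s - k) * 4 ^ k) * x ^ (3 * k) := by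
      intro x
      rw [add_comm, add_pow]
      refine Finset.sum_congr rfl fun k _ => ?_
      rw [mul_pow, ← pow_mul]
      ring
    rw [Finset.sum_congr rfl (fun x _ => expand x), Finset.sum_comm]
    have hterm : ∀ k ∈ range (s + 1), k ≠ m →
        (∑ x : ZMod p, ((s.choose k : ZMod p) * ((a : ZMod p) ^ 2) ^ (s - k) * 4 ^ k) * x ^ (3 * k)) = 0 := by
      intro k hk hkm
      rw [← Finset.mul_sum, sum_pow_zmod p (3 * k), if_neg, mul_zero]
      rintro ⟨h3k, hdvd⟩
      have hk' : k ≤ s := by simpa [Nat.lt_succ_iff] using hk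
      have heq : 3 * k = p - 1 :=
        Nat.eq_of_dvd_of_lt_two_mul h3k hdvd (by omega)
      exact hkm (by omega)
    rw [Finset.sum_eq_single_of_mem m (by simp [Nat.lt_succ_iff, hms]) hterm]
    rw [← Finset.mul_sum, sum_pow_zmod p (3 * m), if_pos ⟨by omega, ⟨1, by omega⟩⟩]
    have hpow : (((a : ZMod p)) ^ 2) ^ (s - m) = (a : ZMod p) ^ m := by
      rw [← pow_mul]
      congr 1
      omega
    rw [hpow]
    ring
  -- binomial identity mod p
  have hfact : ((m.factorial : ℕ) : ZMod p) ≠ 0 := by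
    rw [Ne, ZMod.natCast_eq_zero_iff]
    intro h
    exact absurd (hp.dvd_factorial.mp h) (by omega)
  have hD : ((s.choose m : ℕ) : ZMod p) * 4 ^ m = (((2 * m).choose m : ℕ) : ZMod p) := by
    have hrhs : ((2 * m).choose m) * m.factorial * m.factorial = (2 * m).factorial := by
      have := Nat.choose_mul_factorial_mul_factorial (show m ≤ 2 * m by omega)
      simpa [show 2 * m - m = m by omega] using this
    have hdesc : (s.descFactorial m : ℕ) = m.factorial * s.choose m :=
      Nat.descFactorial_eq_factorial_mul_choose s m
    have hs2 : (2 : ZMod p) * (s : ZMod p) = -1 := by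
      have h' : ((2 * s : ℕ) : ZMod p) = ((p - 1 : ℕ) : ZMod p) := by rw [h2s]
      rw [Nat.cast_mul, Nat.cast_sub (by omega : 1 ≤ p), ZMod.natCast_self] at h'
      simpa using h'
    have hkey : ((s.choose m : ℕ) : ZMod p) * 4 ^ m * (m.factorial : ZMod p) * (m.factorial : ZMod p)
        = (((2 * m).choose m : ℕ) : ZMod p) * (m.factorial : ZMod p) * (m.factorial : ZMod p) := by
      calc ((s.choose m : ℕ) : ZMod p) * 4 ^ m * (m.factorial : ZMod p) * (m.factorial : ZMod p)
          = ((m.factorial * s.choose m : ℕ) : ZMod p) * 4 ^ m * (m.factorial : ZMod p) := by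
            push_cast; ring
        _ = ((s.descFactorial m : ℕ) : ZMod p) * 4 ^ m * (m.factorial : ZMod p) := by
            rw [hdesc]
        _ = (∏ i ∈ range m, (4 * ((s - i : ℕ) : ZMod p))) * (m.factorial : ZMod p) := by
            rw [Nat.descFactorial_eq_prod_range, Nat.cast_prod, Finset.prod_mul_distrib,
              Finset.prod_const, card_range]
            ring
        _ = (∏ i ∈ range m, (-(((2 * (2 * i + 1) : ℕ)) : ZMod p))) * (m.factorial : ZMod p) := by
            refine congrArg (· * _) (Finset.prod_congr rfl fun i hi => ?_)
            have him : i < m := mem_range.mp hi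
            rw [Nat.cast_sub (by omega : i ≤ s)]
            push_cast
            linear_combination 2 * hs2
        _ = (((2 * m).factorial : ℕ) : ZMod p) := by
            have hneg : (∏ i ∈ range m, (-(((2 * (2 * i + 1) : ℕ)) : ZMod p)))
                = (-1) ^ m * ∏ i ∈ range m, (((2 * (2 * i + 1) : ℕ)) : ZMod p) := by
              have hc : ((-1 : ZMod p)) ^ m = ∏ _i ∈ range m, (-1 : ZMod p) := by
                rw [Finset.prod_const, card_range]
              rw [hc, ← Finset.prod_mul_distrib]
              exact Finset.prod_congr rfl fun i _ => (neg_one_mul _).symm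
            rw [hneg, Even.neg_one_pow (Nat.even_iff.mpr hmeven), one_mul,
              ← Nat.cast_prod, ← Nat.cast_mul, mul_comm, ← fact2]
        _ = (((2 * m).choose m * m.factorial * m.factorial : ℕ) : ZMod p) := by rw [hrhs]
        _ = (((2 * m).choose m : ℕ) : ZMod p) * (m.factorial : ZMod p) * (m.factorial : ZMod p) := by
            push_cast; ring
    exact mul_right_cancel₀ hfact (mul_right_cancel₀ hfact hkey)
  -- assemble
  apply (ZMod.intCast_eq_intCast_iff _ _ _).mp
  subst htp hAp
  push_cast
  rw [hN, ZMod.natCast_self, ← hD]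
  push_cast
  ring
end

section
/- Let a₃, a₆ be integers and let w ∈ ℚ⟦z⟧ be the unique formal power series with zero constant term satisfying w = z³ + a₃w² + a₆w³. Then w ∈ ℤ⟦z⟧, the coefficient of z^{m} in w is 0 whenever 3 ∤ m, and for every n ≥ 1, n · [z^{3n}] w = Σ_{k=⌊(n−1)/2⌋}^{n−1} C(n+k−1, k)·C(k, n−k−1) · a₃^{2k−n+1} a₆^{n−1−k}. -/
open PowerSeries Finset


private def qq (a₃ a₆ : ℤ) (n m j : ℕ) : ℚ :=
  if j ≤ m ∧ m ≤ 2*j then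
    (((n+j-1).choose j : ℚ) * (j.choose (m-j) : ℚ)) * (a₃:ℚ)^(2*j-m) * (a₆:ℚ)^(m-j)
  else 0

private lemma per1 (a₃ a₆ : ℤ) (n m j : ℕ) :
    qq a₃ a₆ (n+1) (m+2) (j+1) =
      qq a₃ a₆ n (m+2) (j+1) + a₃ * qq a₃ a₆ (n+1) (m+1) j + a₆ * qq a₃ a₆ (n+1) m j := by
  unfold qq
  by_cases h1 : m ≤ 2*j
  · by_cases h2 : j ≤ m + 1
    · rw [if_pos ⟨by omega, by omega⟩, if_pos ⟨by omega, by omega⟩]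
      by_cases h3 : m + 1 ≤ 2*j
      · rw [if_pos ⟨by omega, h3⟩]
        by_cases h4 : j ≤ m
        · rw [if_pos ⟨h4, h1⟩]
          obtain ⟨s, rfl⟩ := Nat.exists_eq_add_of_le h4
          have hs : s + 1 ≤ j := by omega
          have e1 : n + 1 + (j+1) - 1 = n + j + 1 := by omega
          have e2 : (j + s + 2) - (j+1) = s + 1 := by omega
          have e3 : 2*(j+1) - (j + s + 2) = j - s := by omega
          have e4 : n + (j+1) - 1 = n + j := by omega
          have e5 : n + 1 + j - 1 = n + j := by omega
          have e6 : (j + s + 1) - j = s + 1 := by omega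
          have e7 : 2*j - (j + s + 1) = j - s - 1 := by omega
          have e8 : (j + s) - j = s := by omega
          have e9 : 2*j - (j + s) = j - s := by omega
          rw [e1, e2, e3, e4, e5, e6, e7, e8, e9]
          have e10 : j - s = (j - s - 1) + 1 := by omega
          rw [e10, pow_succ]
          have P1 : (n+j+1).choose (j+1) = (n+j).choose j + (n+j).choose (j+1) :=
            Nat.choose_succ_succ _ _
          have P2 : (j+1).choose (s+1) = j.choose s + j.choose (s+1) :=
            Nat.choose_succ_succ _ _
          rw [P1, P2]
          push_cast
          ring
        · -- j = m + 1
          have hj : j = m + 1 := by omega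
          subst hj
          rw [if_neg (by omega)]
          have e1 : n + 1 + (m+1+1) - 1 = n + m + 2 := by omega
          have e2 : (m+2) - (m+1+1) = 0 := by omega
          have e3 : 2*(m+1+1) - (m+2) = m + 2 := by omega
          have e4 : n + (m+1+1) - 1 = n + m + 1 := by omega
          have e5 : n + 1 + (m+1) - 1 = n + m + 1 := by omega
          have e6 : (m+1) - (m+1) = 0 := by omega
          have e7 : 2*(m+1) - (m+1) = m + 1 := by omega
          rw [e1, e2, e3, e4, e5, e6, e7]
          have P1 : (n+m+2).choose (m+2) = (n+m+1).choose (m+1) + (n+m+1).choose (m+2) :=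
            Nat.choose_succ_succ _ _
          rw [P1, Nat.choose_zero_right, Nat.choose_zero_right]
          have e8 : m + 2 = (m + 1) + 1 := rfl
          rw [e8, pow_succ]
          push_cast
          ring
      · -- 2*j = m
        have hm : m = 2*j := by omega
        subst hm
        rw [if_neg (by omega), if_pos ⟨by omega, by omega⟩]
        have e1 : n + 1 + (j+1) - 1 = n + j + 1 := by omega
        have e2 : (2*j+2) - (j+1) = j + 1 := by omega
        have e3 : 2*(j+1) - (2*j+2) = 0 := by omega
        have e4 : n + (j+1) - 1 = n + j := by omega
        have e5 : n + 1 + j - 1 = n + j := by omega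
        have e6 : 2*j - j = j := by omega
        have e7 : 2*j - 2*j = 0 := by omega
        rw [e1, e2, e3, e4, e5, e6, e7]
        have P1 : (n+j+1).choose (j+1) = (n+j).choose j + (n+j).choose (j+1) :=
          Nat.choose_succ_succ _ _
        rw [P1, Nat.choose_self, Nat.choose_self]
        push_cast
        ring
    · rw [if_neg (by omega), if_neg (by omega), if_neg (by omega), if_neg (by omega)]
      ring
  · rw [if_neg (by omega), if_neg (by omega), if_neg (by omega), if_neg (by omega)]
    ring


private lemma perstar (a₃ a₆ : ℤ) (n m j : ℕ) :
    ((m:ℚ)+2) * qq a₃ a₆ (n+1) (m+2) (j+1) =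
      ((n:ℚ)+m+2) * a₃ * qq a₃ a₆ (n+1) (m+1) j
        + (2*(n:ℚ)+m+2) * a₆ * qq a₃ a₆ (n+1) m j := by
  unfold qq
  by_cases h1 : m ≤ 2*j
  · by_cases h2 : j ≤ m + 1
    · rw [if_pos ⟨by omega, by omega⟩]
      by_cases h3 : m + 1 ≤ 2*j
      · rw [if_pos ⟨by omega, h3⟩]
        by_cases h4 : j ≤ m
        · rw [if_pos ⟨h4, h1⟩]
          obtain ⟨s, rfl⟩ := Nat.exists_eq_add_of_le h4
          have hs : s + 1 ≤ j := by omega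
          have e1 : n + 1 + (j+1) - 1 = n + j + 1 := by omega
          have e2 : (j + s + 2) - (j+1) = s + 1 := by omega
          have e3 : 2*(j+1) - (j + s + 2) = j - s := by omega
          have e5 : n + 1 + j - 1 = n + j := by omega
          have e6 : (j + s + 1) - j = s + 1 := by omega
          have e7 : 2*j - (j + s + 1) = j - s - 1 := by omega
          have e8 : (j + s) - j = s := by omega
          have e9 : 2*j - (j + s) = j - s := by omega
          rw [e1, e2, e3, e5, e6, e7, e8, e9]
          have e10 : j - s = (j - s - 1) + 1 := by omega
          rw [e10, pow_succ]
          -- rational identities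
          have hA : ((n:ℚ)+j+1) * ((n+j).choose j : ℕ)
              = (((n+j+1).choose (j+1) : ℕ) : ℚ) * ((j:ℚ)+1) := by
            have h' : (n+j+1) * (n+j).choose j = (n+j+1).choose (j+1) * (j+1) := by
              simpa [Nat.succ_eq_add_one] using Nat.add_one_mul_choose_eq (n+j) j
            exact_mod_cast h'
          have hR : ((j.choose (s+1) : ℕ) : ℚ) * ((s:ℚ)+1)
              = ((j:ℚ) - s) * (j.choose s : ℕ) := by
            have h' := Nat.choose_succ_right_eq j s
            have hjs : ((j - s : ℕ) : ℚ) = (j:ℚ) - s := by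
              push_cast [Nat.cast_sub (by omega : s ≤ j)]; ring
            calc ((j.choose (s+1) : ℕ) : ℚ) * ((s:ℚ)+1)
                = ((j.choose (s+1) * (s+1) : ℕ) : ℚ) := by push_cast; ring
              _ = ((j.choose s * (j - s) : ℕ) : ℚ) := by rw [h']
              _ = ((j:ℚ) - s) * (j.choose s : ℕ) := by push_cast [hjs]; ring
          have hP : (((j+1).choose (s+1) : ℕ) : ℚ)
              = (j.choose s : ℕ) + (j.choose (s+1) : ℕ) := by
            rw [Nat.choose_succ_succ]; push_cast; ring
          push_cast
          apply mul_left_cancel₀ (show ((j:ℚ)+1)*((s:ℚ)+1) ≠ 0 by positivity)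
          linear_combination
            (-(((s:ℚ)+1)*((j:ℚ)+s+2)*(((j+1).choose (s+1) : ℕ) : ℚ)
              *((a₃:ℚ)^(j-s-1)*(a₆:ℚ)^s*(a₃:ℚ)*(a₆:ℚ)))) * hA
            + (((s:ℚ)+1)*((j:ℚ)+s+2)*((n:ℚ)+j+1)*(((n+j).choose j : ℕ) : ℚ)
              *((a₃:ℚ)^(j-s-1)*(a₆:ℚ)^s*(a₃:ℚ)*(a₆:ℚ))) * hP
            + ((n:ℚ)*(((n+j).choose j : ℕ) : ℚ)*((s:ℚ)+1)
              *((a₃:ℚ)^(j-s-1)*(a₆:ℚ)^s*(a₃:ℚ)*(a₆:ℚ))) * hR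
        · -- j = m + 1
          have hj : j = m + 1 := by omega
          subst hj
          rw [if_neg (by omega)]
          have e1 : n + 1 + (m+1+1) - 1 = n + m + 2 := by omega
          have e2 : (m+2) - (m+1+1) = 0 := by omega
          have e3 : 2*(m+1+1) - (m+2) = m + 2 := by omega
          have e5 : n + 1 + (m+1) - 1 = n + m + 1 := by omega
          have e6 : (m+1) - (m+1) = 0 := by omega
          have e7 : 2*(m+1) - (m+1) = m + 1 := by omega
          rw [e1, e2, e3, e5, e6, e7, Nat.choose_zero_right, Nat.choose_zero_right]
          have h' : (n+m+2) * (n+m+1).choose (m+1) = (n+m+2).choose (m+2) * (m+2) := by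
            simpa [Nat.succ_eq_add_one] using Nat.add_one_mul_choose_eq (n+m+1) (m+1)
          have hcast : ((n:ℚ)+m+2) * ((n+m+1).choose (m+1) : ℕ)
              = (((n+m+2).choose (m+2) : ℕ) : ℚ) * ((m:ℚ)+2) := by
            exact_mod_cast h'
          push_cast
          linear_combination (-(a₃:ℚ)^(m+2)) * hcast
      · -- 2*j = m
        have hm : m = 2*j := by omega
        subst hm
        rw [if_neg (by omega), if_pos ⟨by omega, by omega⟩]
        have e1 : n + 1 + (j+1) - 1 = n + j + 1 := by omega
        have e2 : (2*j+2) - (j+1) = j + 1 := by omega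
        have e3 : 2*(j+1) - (2*j+2) = 0 := by omega
        have e5 : n + 1 + j - 1 = n + j := by omega
        have e6 : 2*j - j = j := by omega
        have e7 : 2*j - 2*j = 0 := by omega
        rw [e1, e2, e3, e5, e6, e7, Nat.choose_self, Nat.choose_self]
        have h' : (n+j+1) * (n+j).choose j = (n+j+1).choose (j+1) * (j+1) := by
          simpa [Nat.succ_eq_add_one] using Nat.add_one_mul_choose_eq (n+j) j
        have hcast : ((n:ℚ)+j+1) * ((n+j).choose j : ℕ)
            = (((n+j+1).choose (j+1) : ℕ) : ℚ) * ((j:ℚ)+1) := by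
          exact_mod_cast h'
        push_cast
        linear_combination (-2*(a₆:ℚ)^(j+1)) * hcast
    · rw [if_neg (by omega), if_neg (by omega), if_neg (by omega)]
      ring
  · rw [if_neg (by omega), if_neg (by omega), if_neg (by omega)]
    ring

private def ee (a₃ a₆ : ℤ) (n m : ℕ) : ℚ := ∑ j ∈ Finset.range (m+1), qq a₃ a₆ n m j

private lemma qq_zero {a₃ a₆ : ℤ} {n m j : ℕ} (h : ¬ (j ≤ m ∧ m ≤ 2*j)) :
    qq a₃ a₆ n m j = 0 := if_neg h

private lemma ee_eq {a₃ a₆ : ℤ} (n m J : ℕ) (h : m < J) :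
    ee a₃ a₆ n m = ∑ j ∈ Finset.range J, qq a₃ a₆ n m j := by
  unfold ee
  refine Finset.sum_subset (Finset.range_subset_range.mpr h) fun j _ hj => ?_
  simp only [Finset.mem_range, not_lt] at hj
  exact qq_zero (by omega)

private lemma ee_rec1 (a₃ a₆ : ℤ) (n m : ℕ) :
    ee a₃ a₆ (n+1) (m+2) = ee a₃ a₆ n (m+2) + a₃ * ee a₃ a₆ (n+1) (m+1)
      + a₆ * ee a₃ a₆ (n+1) m := by
  rw [show ee a₃ a₆ (n+1) (m+2) = ∑ j ∈ Finset.range (m+2+1), qq a₃ a₆ (n+1) (m+2) j from rfl,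
    show ee a₃ a₆ n (m+2) = ∑ j ∈ Finset.range (m+2+1), qq a₃ a₆ n (m+2) j from rfl,
    show ee a₃ a₆ (n+1) (m+1) = ∑ j ∈ Finset.range (m+2), qq a₃ a₆ (n+1) (m+1) j from rfl,
    ee_eq (n+1) m (m+2) (by omega), Finset.sum_range_succ', Finset.sum_range_succ'
      (fun j => qq a₃ a₆ n (m+2) j) (m+2)]
  rw [qq_zero (a₃ := a₃) (by omega), qq_zero (a₃ := a₃) (by omega)]
  rw [Finset.mul_sum, Finset.mul_sum, add_zero, add_zero, ← Finset.sum_add_distrib,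
    ← Finset.sum_add_distrib]
  exact Finset.sum_congr rfl fun j _ => per1 a₃ a₆ n m j

private lemma ee_recstar (a₃ a₆ : ℤ) (n m : ℕ) :
    ((m:ℚ)+2) * ee a₃ a₆ (n+1) (m+2) = ((n:ℚ)+m+2) * a₃ * ee a₃ a₆ (n+1) (m+1)
      + (2*(n:ℚ)+m+2) * a₆ * ee a₃ a₆ (n+1) m := by
  rw [show ee a₃ a₆ (n+1) (m+2) = ∑ j ∈ Finset.range (m+2+1), qq a₃ a₆ (n+1) (m+2) j from rfl,
    show ee a₃ a₆ (n+1) (m+1) = ∑ j ∈ Finset.range (m+2), qq a₃ a₆ (n+1) (m+1) j from rfl,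
    ee_eq (n+1) m (m+2) (by omega), Finset.sum_range_succ']
  rw [qq_zero (a₃ := a₃) (by omega)]
  rw [Finset.mul_sum, Finset.mul_sum, add_zero, Finset.mul_sum, ← Finset.sum_add_distrib]
  exact Finset.sum_congr rfl fun j _ => perstar a₃ a₆ n m j

private lemma ee_zero (a₃ a₆ : ℤ) (n : ℕ) : ee a₃ a₆ n 0 = 1 := by
  simp [ee, qq]

private lemma ee_one (a₃ a₆ : ℤ) (n : ℕ) : ee a₃ a₆ (n+1) 1 = (n+1) * a₃ := by
  rw [ee, Finset.sum_range_succ, Finset.sum_range_one, qq, qq]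
  norm_num

private lemma int_sum {α : Type*} (s : Finset α) (f : α → ℚ)
    (h : ∀ x ∈ s, ∃ c : ℤ, f x = c) : ∃ c : ℤ, ∑ x ∈ s, f x = c := by
  classical
  choose g hg using h
  refine ⟨∑ x ∈ s.attach, g x x.2, ?_⟩
  rw [← Finset.sum_attach s f]
  push_cast
  exact Finset.sum_congr rfl fun x _ => hg x x.2


private lemma ee_sum (a₃ a₆ : ℤ) (N : ℕ) :
    ee a₃ a₆ (N+1) N = ∑ k ∈ Finset.Icc (N/2) N,
      (((N+1)+k-1).choose k * k.choose ((N+1)-k-1) : ℚ)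
        * (a₃:ℚ)^(2*k+1-(N+1)) * (a₆:ℚ)^((N+1)-1-k) := by
  have hsub : Finset.Icc (N/2) N ⊆ Finset.range (N+1) := by
    intro x hx
    simp only [Finset.mem_Icc] at hx
    simp only [Finset.mem_range]
    omega
  have h1 : ee a₃ a₆ (N+1) N = ∑ j ∈ Finset.Icc (N/2) N, qq a₃ a₆ (N+1) N j := by
    unfold ee
    refine (Finset.sum_subset hsub fun j _ hj => ?_).symm
    simp only [Finset.mem_Icc, not_and, not_le] at hj
    refine qq_zero ?_
    rcases le_or_gt (N/2) j with h | h
    · have := hj h; omega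
    · omega
  rw [h1]
  refine Finset.sum_congr rfl fun j hj => ?_
  simp only [Finset.mem_Icc] at hj
  unfold qq
  by_cases hg : N ≤ 2*j
  · rw [if_pos ⟨hj.2, hg⟩]
    rw [show (N+1)+j-1 = N+j from by omega, show (N+1)-j-1 = N-j from by omega,
      show 2*j+1-(N+1) = 2*j-N from by omega, show (N+1)-1-j = N-j from by omega]
  · rw [if_neg (by omega)]
    rw [show (N+1)-j-1 = j+1 from by omega,
      Nat.choose_eq_zero_of_lt (show j < j+1 from by omega)]
    simp

section PS
variable (a₃ a₆ : ℤ) (w : PowerSeries ℚ)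
  (hw0 : PowerSeries.constantCoeff w = 0)
  (hw : w = X ^ 3 + C (a₃ : ℚ) * w ^ 2 + C (a₆ : ℚ) * w ^ 3)

include hw0 hw

private lemma dvd3 : (X : ℚ⟦X⟧)^3 ∣ w := by
  have d1 : (X : ℚ⟦X⟧) ∣ w := X_dvd_iff.mpr hw0
  have d2 : (X : ℚ⟦X⟧)^2 ∣ w := by
    rw [hw]
    refine dvd_add (dvd_add ?_ ?_) ?_
    · exact pow_dvd_pow X (by norm_num)
    · exact Dvd.dvd.mul_left (by simpa using pow_dvd_pow_of_dvd d1 2) _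
    · refine Dvd.dvd.mul_left (dvd_trans (pow_dvd_pow X (show 2 ≤ 3 from by norm_num)) ?_) _
      simpa using pow_dvd_pow_of_dvd d1 3
  rw [hw]
  refine dvd_add (dvd_add dvd_rfl ?_) ?_
  · refine Dvd.dvd.mul_left (dvd_trans (pow_dvd_pow X (show 3 ≤ 4 from by norm_num)) ?_) _
    have := pow_dvd_pow_of_dvd d2 2
    rwa [← pow_mul] at this
  · exact Dvd.dvd.mul_left (by simpa using pow_dvd_pow_of_dvd d1 3) _

private lemma Trec (n k : ℕ) :
    coeff (3*(n+1)) (w^(k+1)) = coeff (3*n) (w^k)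
      + a₃ * coeff (3*(n+1)) (w^(k+2)) + a₆ * coeff (3*(n+1)) (w^(k+3)) := by
  have hwk : w^(k+1) = X^3 * w^k + C (a₃:ℚ) * w^(k+2) + C (a₆:ℚ) * w^(k+3) := by
    rw [pow_succ']
    nth_rewrite 1 [hw]
    ring
  rw [hwk, map_add, map_add, coeff_C_mul, coeff_C_mul,
    show 3*(n+1) = 3*n + 3 from by ring, coeff_X_pow_mul]

private lemma Tzero {n k : ℕ} (h : n < k) : coeff (3*n) (w^k) = 0 := by
  obtain ⟨g, hg⟩ := dvd3 a₃ a₆ w hw0 hw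
  rw [hg, mul_pow, ← pow_mul, coeff_X_pow_mul', if_neg (by omega)]

private lemma Tnn : ∀ n : ℕ, coeff (3*n) (w^n) = 1 := by
  intro n
  induction n with
  | zero => simp
  | succ n ih =>
    rw [Trec a₃ a₆ w hw0 hw n n, ih, Tzero a₃ a₆ w hw0 hw (by omega),
      Tzero a₃ a₆ w hw0 hw (by omega)]
    ring

private lemma Tn1 : ∀ n : ℕ, coeff (3*(n+1)) (w^n) = (n : ℚ) * a₃ := by
  intro n
  induction n with
  | zero => simp [coeff_one]
  | succ n ih =>
    rw [Trec a₃ a₆ w hw0 hw (n+1) n, ih, Tnn a₃ a₆ w hw0 hw,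
      Tzero a₃ a₆ w hw0 hw (by omega)]
    push_cast
    ring

private lemma main : ∀ v n k : ℕ, 1 ≤ k → k ≤ n → 2*n - k ≤ v →
    (n:ℚ) * coeff (3*n) (w^k) = (k:ℚ) * ee a₃ a₆ n (n-k) := by
  intro v
  induction v with
  | zero => intro n k h1 h2 h3; omega
  | succ v ih =>
    intro n k hk hkn hv
    by_cases hnk : n = k
    · subst hnk
      rw [Nat.sub_self, ee_zero, Tnn a₃ a₆ w hw0 hw]
    by_cases hnk1 : n = k + 1
    · subst hnk1
      rw [show k+1-k = 1 from by omega, Tn1 a₃ a₆ w hw0 hw k,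
        show (k:ℕ)+1 = k+1 from rfl, ee_one]
      push_cast
      ring
    · -- now n ≥ k + 2
      have hn3 : k + 2 ≤ n := by omega
      have hn1 : ((n:ℚ) - 1) ≠ 0 := by
        have : (1:ℚ) < (n:ℚ) := by exact_mod_cast (by omega : 1 < n)
        intro h; nlinarith
      -- recursion for coefficients
      have hTrec : coeff (3*n) (w^k) = coeff (3*(n-1)) (w^(k-1))
          + a₃ * coeff (3*n) (w^(k+1)) + a₆ * coeff (3*n) (w^(k+2)) := by
        have := Trec a₃ a₆ w hw0 hw (n-1) (k-1)
        rw [show (n-1)+1 = n from by omega, show (k-1)+1 = k from by omega,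
          show (k-1)+2 = k+1 from by omega, show (k-1)+3 = k+2 from by omega] at this
        exact this
      have h1 : ((n:ℚ)-1) * coeff (3*(n-1)) (w^(k-1))
          = ((k:ℚ)-1) * ee a₃ a₆ (n-1) (n-k) := by
        rcases Nat.lt_or_ge k 2 with hk2 | hk2
        · have : k = 1 := by omega
          subst this
          rw [show (1:ℕ)-1 = 0 from rfl, pow_zero, coeff_one, if_neg (by omega)]
          push_cast
          ring
        · have := ih (n-1) (k-1) (by omega) (by omega) (by omega)
          rw [show (n-1)-(k-1) = n-k from by omega] at this
          rw [Nat.cast_sub (by omega : 1 ≤ n), Nat.cast_sub (by omega : 1 ≤ k)] at this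
          simpa using this
      have h2 : (n:ℚ) * coeff (3*n) (w^(k+1)) = ((k:ℚ)+1) * ee a₃ a₆ n (n-(k+1)) := by
        have := ih n (k+1) (by omega) (by omega) (by omega)
        push_cast at this
        exact this
      have h3 : (n:ℚ) * coeff (3*n) (w^(k+2)) = ((k:ℚ)+2) * ee a₃ a₆ n (n-(k+2)) := by
        have := ih n (k+2) (by omega) (by omega) (by omega)
        push_cast at this
        exact this
      rw [show n-(k+1) = n-k-1 from by omega] at h2
      rw [show n-(k+2) = n-k-2 from by omega] at h3
      have hER : ee a₃ a₆ n (n-k) = ee a₃ a₆ (n-1) (n-k) + a₃ * ee a₃ a₆ n (n-k-1)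
          + a₆ * ee a₃ a₆ n (n-k-2) := by
        have := ee_rec1 a₃ a₆ (n-1) (n-k-2)
        rw [show (n-1)+1 = n from by omega, show (n-k-2)+2 = n-k from by omega,
          show (n-k-2)+1 = n-k-1 from by omega] at this
        exact this
      have hES : ((n:ℚ)-k) * ee a₃ a₆ n (n-k)
          = (2*(n:ℚ)-k-1) * a₃ * ee a₃ a₆ n (n-k-1)
            + (3*(n:ℚ)-k-2) * a₆ * ee a₃ a₆ n (n-k-2) := by
        have := ee_recstar a₃ a₆ (n-1) (n-k-2)
        rw [show (n-1)+1 = n from by omega, show (n-k-2)+2 = n-k from by omega,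
          show (n-k-2)+1 = n-k-1 from by omega] at this
        rw [Nat.cast_sub (by omega : 1 ≤ n)] at this
        rw [Nat.cast_sub (by omega : 2 ≤ n-k), Nat.cast_sub (by omega : k ≤ n)] at this
        push_cast at this
        convert this using 2 <;> ring_nf
      refine mul_left_cancel₀ hn1 ?_
      linear_combination ((n:ℚ)*((n:ℚ)-1)) * hTrec + (n:ℚ) * h1
        + ((n:ℚ)-1)*(a₃:ℚ) * h2 + ((n:ℚ)-1)*(a₆:ℚ) * h3
        - ((n:ℚ)*((k:ℚ)-1)) * hER - hES


private lemma key : ∀ m : ℕ, (∃ c : ℤ, coeff m w = c) ∧ (¬ (3 ∣ m) → coeff m w = 0) := by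
  have hc0 : coeff 0 w = 0 := by
    rw [coeff_zero_eq_constantCoeff]; exact hw0
  intro m
  induction m using Nat.strong_induction_on with
  | _ m IH =>
  have hsq : ∀ i, i ≤ m →
      ((∃ c : ℤ, coeff i (w*w) = c) ∧ (¬ (3 ∣ i) → coeff i (w*w) = 0)) := by
    intro i hi
    rw [coeff_mul]
    constructor
    · refine int_sum _ _ fun p hp => ?_
      rw [Finset.HasAntidiagonal.mem_antidiagonal] at hp
      by_cases h1 : p.1 = 0
      · exact ⟨0, by rw [h1, hc0]; simp⟩
      by_cases h2 : p.2 = 0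
      · exact ⟨0, by rw [h2, hc0]; simp⟩
      · obtain ⟨c1, hc1⟩ := (IH p.1 (by omega)).1
        obtain ⟨c2, hc2⟩ := (IH p.2 (by omega)).1
        exact ⟨c1 * c2, by rw [hc1, hc2]; push_cast; ring⟩
    · intro h3
      refine Finset.sum_eq_zero fun p hp => ?_
      rw [Finset.HasAntidiagonal.mem_antidiagonal] at hp
      by_cases h1 : p.1 = 0
      · rw [h1, hc0]; simp
      by_cases h2 : p.2 = 0
      · rw [h2, hc0]; simp
      · rcases (show ¬ (3 ∣ p.1) ∨ ¬ (3 ∣ p.2) from by omega) with h | h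
        · rw [(IH p.1 (by omega)).2 h]; simp
        · rw [(IH p.2 (by omega)).2 h]; simp
  have hsq0 : coeff 0 (w*w) = 0 := by
    rw [coeff_zero_eq_constantCoeff, map_mul, hw0]; ring
  have hcb : ∀ i, i ≤ m →
      ((∃ c : ℤ, coeff i (w*(w*w)) = c) ∧ (¬ (3 ∣ i) → coeff i (w*(w*w)) = 0)) := by
    intro i hi
    rw [coeff_mul]
    constructor
    · refine int_sum _ _ fun p hp => ?_
      rw [Finset.HasAntidiagonal.mem_antidiagonal] at hp
      by_cases h1 : p.1 = 0
      · exact ⟨0, by rw [h1, hc0]; simp⟩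
      by_cases h2 : p.2 = 0
      · exact ⟨0, by rw [h2, hsq0]; simp⟩
      · obtain ⟨c1, hc1⟩ := (IH p.1 (by omega)).1
        obtain ⟨c2, hc2⟩ := (hsq p.2 (by omega)).1
        exact ⟨c1 * c2, by rw [hc1, hc2]; push_cast; ring⟩
    · intro h3
      refine Finset.sum_eq_zero fun p hp => ?_
      rw [Finset.HasAntidiagonal.mem_antidiagonal] at hp
      by_cases h1 : p.1 = 0
      · rw [h1, hc0]; simp
      by_cases h2 : p.2 = 0
      · rw [h2, hsq0]; simp
      · rcases (show ¬ (3 ∣ p.1) ∨ ¬ (3 ∣ p.2) from by omega) with h | h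
        · rw [(IH p.1 (by omega)).2 h]; simp
        · rw [(hsq p.2 (by omega)).2 h]; simp
  have hcoeff : coeff m w = coeff m (X^3 : ℚ⟦X⟧)
      + a₃ * coeff m (w*w) + a₆ * coeff m (w*(w*w)) := by
    have hw' : w = X^3 + C (a₃:ℚ) * (w*w) + C (a₆:ℚ) * (w*(w*w)) := by
      nth_rewrite 1 [hw]; ring
    conv_lhs => rw [hw']
    rw [map_add, map_add, coeff_C_mul, coeff_C_mul]
  constructor
  · obtain ⟨c2, hc2⟩ := (hsq m le_rfl).1
    obtain ⟨c3, hc3⟩ := (hcb m le_rfl).1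
    refine ⟨(if m = 3 then 1 else 0) + a₃ * c2 + a₆ * c3, ?_⟩
    rw [hcoeff, hc2, hc3, coeff_X_pow]
    split_ifs <;> push_cast <;> ring
  · intro h3
    rw [hcoeff, coeff_X_pow, if_neg (by omega), (hsq m le_rfl).2 h3,
      (hcb m le_rfl).2 h3]
    ring


private lemma part3 (n : ℕ) (hn : 1 ≤ n) :
    (n : ℚ) * PowerSeries.coeff (3 * n) w =
      ∑ k ∈ Finset.Icc ((n - 1) / 2) (n - 1),
        ((n + k - 1).choose k * k.choose (n - k - 1) : ℚ) *
          (a₃ : ℚ) ^ (2 * k + 1 - n) * (a₆ : ℚ) ^ (n - 1 - k) := by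
  obtain ⟨N, rfl⟩ : ∃ N, n = N + 1 := ⟨n-1, by omega⟩
  have h := main a₃ a₆ w hw0 hw (2*(N+1)) (N+1) 1 le_rfl (by omega) (by omega)
  rw [pow_one, show (N+1)-1 = N from by omega] at h
  rw [h, show ((1:ℕ):ℚ) = 1 from rfl, one_mul, ee_sum]
  simp only [Nat.add_sub_cancel]

end PS

theorem stmt16 (a₃ a₆ : ℤ) (w : PowerSeries ℚ)
    (hw0 : PowerSeries.constantCoeff w = 0)
    (hw : w = X ^ 3 + C (a₃ : ℚ) * w ^ 2 + C (a₆ : ℚ) * w ^ 3) :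
    (∀ m : ℕ, ∃ c : ℤ, PowerSeries.coeff m w = (c : ℚ)) ∧
    (∀ m : ℕ, ¬ (3 ∣ m) → PowerSeries.coeff m w = 0) ∧
    (∀ n : ℕ, 1 ≤ n →
      (n : ℚ) * PowerSeries.coeff (3 * n) w =
        ∑ k ∈ Finset.Icc ((n - 1) / 2) (n - 1),
          ((n + k - 1).choose k * k.choose (n - k - 1) : ℚ) *
            (a₃ : ℚ) ^ (2 * k + 1 - n) * (a₆ : ℚ) ^ (n - 1 - k)) := by
  exact ⟨fun m => (key a₃ a₆ w hw0 hw m).1, fun m => (key a₃ a₆ w hw0 hw m).2,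
    fun n hn => part3 a₃ a₆ w hw0 hw n hn⟩
end

section
/- Let a₃, a₆ be integers and let w ∈ ℤ⟦z⟧ be the unique formal power series with zero constant term satisfying w = z³ + a₃w² + a₆w³, and let F ∈ ℤ⟦z⟧ be the unique power series with 3z²·F = dw/dz (formal derivative). Then the coefficient of z^{m} in F is 0 unless m = 3n−3 for some n ≥ 1, and [z^{3n−3}] F = Σ_{k=⌊(n−1)/2⌋}^{n−1} C(n+k−1, k)·C(k, n−k−1) · a₃^{2k−n+1} a₆^{n−1−k}. In other words, the invariant differential of E: y² + a₃y = x³ + a₆ has z-expansion ω_E = Σ_{n≥1} (Σ_{k=⌊(n−1)/2⌋}^{n−1} C(n+k−1,k)C(k,n−k−1) a₃^{2k−n+1} a₆^{n−k−1}) z^{3n−3} dz. -/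
open PowerSeries Finset

namespace Stmt17Aux

/-! ### Combinatorial part -/

def trm (a₃ a₆ : ℤ) (n m j : ℕ) : ℤ :=
  ((n + (m - j) - 1).choose (m - j) * (m - j).choose j : ℤ) * a₃ ^ (m - 2*j) * a₆ ^ j

def Ez (a₃ a₆ : ℤ) (n m : ℕ) : ℤ := ∑ j ∈ range (m+1), trm a₃ a₆ n m j

lemma trm_zero (a₃ a₆ : ℤ) (n m j : ℕ) (h : m < 2*j) : trm a₃ a₆ n m j = 0 := by
  have : (m - j).choose j = 0 := Nat.choose_eq_zero_of_lt (by omega)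
  simp [trm, this]

lemma trm_eq (a₃ a₆ : ℤ) (n i j : ℕ) :
    trm a₃ a₆ n (i + 2*j) j =
      ((n + (i+j) - 1).choose (i+j) * (i+j).choose j : ℤ) * a₃ ^ i * a₆ ^ j := by
  simp [trm, show i + 2*j - j = i + j by omega, show i + 2*j - 2*j = i by omega]

lemma trm_a3 (a₃ a₆ : ℤ) (n i j : ℕ) :
    a₃ * trm a₃ a₆ n (i + 2*j + 1) (j+1) =
      ((n + (i+j) - 1).choose (i+j) * (i+j).choose (j+1) : ℤ) * a₃ ^ i * a₆ ^ (j+1) := by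
  cases i with
  | zero =>
    rw [trm_zero _ _ _ _ _ (by omega)]
    simp [Nat.choose_eq_zero_of_lt (by omega : j < j + 1)]
  | succ i' =>
    have h : i' + 1 + 2*j + 1 = i' + 2*(j+1) := by ring
    rw [h, trm_eq]
    have h2 : i' + (j+1) = i' + 1 + j := by ring
    rw [h2]; ring

lemma Ez_zero (a₃ a₆ : ℤ) (n : ℕ) : Ez a₃ a₆ n 0 = 1 := by simp [Ez, trm]

lemma Ez_one (a₃ a₆ : ℤ) (n : ℕ) : Ez a₃ a₆ n 1 = n * a₃ := by
  simp [Ez, trm, Finset.sum_range_succ]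

lemma keyA (n' i j : ℕ) :
    (((n'+i+j+1).choose (i+j+1) * (i+j+1).choose (j+1) : ℕ) : ℤ) =
      ((n'+i+j).choose (i+j+1) * (i+j+1).choose (j+1) : ℕ)
      + ((n'+i+j).choose (i+j) : ℕ) * (((i+j).choose (j+1) : ℕ) + ((i+j).choose j : ℕ)) := by
  have p1 : (n'+i+j+1).choose (i+j+1) = (n'+i+j).choose (i+j) + (n'+i+j).choose (i+j+1) :=
    Nat.choose_succ_succ _ _
  have p2 : (i+j+1).choose (j+1) = (i+j).choose j + (i+j).choose (j+1) :=
    Nat.choose_succ_succ _ _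
  push_cast [p1, p2]; ring

lemma keyB (n' i j : ℕ) :
    ((i+2*j+2 : ℕ) : ℤ) * ((n'+i+j).choose (i+j+1) * (i+j+1).choose (j+1) : ℕ) =
      (n' : ℤ) * (((n'+i+j).choose (i+j) : ℕ) *
        (((i+j).choose (j+1) : ℕ) + 2*((i+j).choose j : ℕ))) := by
  have h1 : (n'+i+j).choose (i+j+1) * (i+j+1) = (n'+i+j).choose (i+j) * n' := by
    rw [Nat.choose_succ_right_eq]; congr 1; omega
  have h2 : (i+j+1) * (i+j).choose j = (i+j+1).choose (j+1) * (j+1) :=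
    Nat.add_one_mul_choose_eq _ _
  have h3 : (i+j+1).choose (j+1) = (i+j).choose j + (i+j).choose (j+1) :=
    Nat.choose_succ_succ _ _
  have h1' : ((n'+i+j).choose (i+j+1) : ℤ) * (i+j+1) = ((n'+i+j).choose (i+j) : ℤ) * n' := by
    exact_mod_cast congrArg (Nat.cast : ℕ → ℤ) h1
  have h2' : ((i:ℤ)+j+1) * ((i+j).choose j : ℕ) = (((i+j+1).choose (j+1) : ℕ) : ℤ) * (j+1) := by
    exact_mod_cast congrArg (Nat.cast : ℕ → ℤ) h2
  have h3' : (((i+j+1).choose (j+1) : ℕ) : ℤ) = ((i+j).choose j : ℕ) + ((i+j).choose (j+1) : ℕ) := by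
    exact_mod_cast congrArg (Nat.cast : ℕ → ℤ) h3
  push_cast
  linear_combination (((i+j).choose (j+1) : ℕ) + 2*((i+j).choose j : ℕ) : ℤ) * h1'
    + (((n'+i+j).choose (i+j+1) : ℕ) : ℤ) * ((i:ℤ)+j+1) * h3'
    - (((n'+i+j).choose (i+j+1) : ℕ) : ℤ) * h2'

lemma EzA (a₃ a₆ : ℤ) (n' m : ℕ) :
    Ez a₃ a₆ (n'+1) (m+2) =
      Ez a₃ a₆ n' (m+2) + a₃ * Ez a₃ a₆ (n'+1) (m+1) + a₆ * Ez a₃ a₆ (n'+1) m := by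
  unfold Ez
  have e2 : ∑ j ∈ range (m+2), trm a₃ a₆ (n'+1) (m+1) j
      = ∑ j ∈ range (m+3), trm a₃ a₆ (n'+1) (m+1) j := by
    rw [Finset.sum_range_succ (f := trm a₃ a₆ (n'+1) (m+1)) (n := m+2),
      trm_zero _ _ _ _ _ (by omega), add_zero]
  have e3 : ∑ j ∈ range (m+1), trm a₃ a₆ (n'+1) m j
      = ∑ j ∈ range (m+2), trm a₃ a₆ (n'+1) m j := by
    rw [Finset.sum_range_succ (f := trm a₃ a₆ (n'+1) m) (n := m+1),
      trm_zero _ _ _ _ _ (by omega), add_zero]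
  rw [e2, e3]
  rw [Finset.sum_range_succ' (trm a₃ a₆ (n'+1) (m+2)) (m+2),
    Finset.sum_range_succ' (trm a₃ a₆ n' (m+2)) (m+2),
    Finset.sum_range_succ' (trm a₃ a₆ (n'+1) (m+1)) (m+2)]
  have hb : trm a₃ a₆ (n'+1) (m+2) 0 =
      trm a₃ a₆ n' (m+2) 0 + a₃ * trm a₃ a₆ (n'+1) (m+1) 0 := by
    simp only [trm, Nat.sub_zero, Nat.mul_zero, pow_zero, mul_one, Nat.choose_zero_right,
      Nat.choose_self]
    have hq : n' + 1 + (m+2) - 1 = n' + (m+2) := by omega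
    have hq2 : n' + 1 + (m+1) - 1 = n' + (m+1) := by omega
    have hq3 : n' + (m+2) = (n' + (m+1)) + 1 := by omega
    rw [hq, hq2, hq3]
    have p2 : ((n' + (m+1) + 1).choose (m+2) : ℤ) =
        (n' + (m+1)).choose (m+1) + (n' + (m+1)).choose (m+2) := by
      exact_mod_cast congrArg (Nat.cast : ℕ → ℤ) (Nat.choose_succ_succ (n' + (m+1)) (m+1))
    push_cast [p2]
    ring
  have ht : ∀ j ∈ range (m+2),
      trm a₃ a₆ (n'+1) (m+2) (j+1) =
        trm a₃ a₆ n' (m+2) (j+1) + a₃ * trm a₃ a₆ (n'+1) (m+1) (j+1)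
          + a₆ * trm a₃ a₆ (n'+1) m j := by
    intro j hj
    by_cases h2j : 2*j ≤ m
    · obtain ⟨i, rfl⟩ : ∃ i, m = i + 2*j := ⟨m - 2*j, by omega⟩
      have hL : i + 2*j + 2 = i + 2*(j+1) := by ring
      rw [hL, trm_eq, trm_eq, trm_a3, trm_eq]
      have q1 : n' + 1 + (i + (j+1)) - 1 = n' + i + j + 1 := by omega
      have q2 : n' + (i + (j+1)) - 1 = n' + i + j := by omega
      have q3 : n' + 1 + (i + j) - 1 = n' + i + j := by omega
      have q4 : i + (j+1) = i + j + 1 := by omega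
      rw [q1, q2, q3, q4]
      have := keyA n' i j
      push_cast at this ⊢
      linear_combination (a₃ ^ i * a₆ ^ (j+1)) * this
    · rw [trm_zero _ _ _ _ _ (by omega), trm_zero _ _ _ _ _ (by omega),
        trm_zero _ _ _ _ _ (by omega), trm_zero _ _ _ _ _ (by omega)]
      ring
  have hsum : ∑ j ∈ range (m+2), trm a₃ a₆ (n'+1) (m+2) (j+1)
      = ∑ j ∈ range (m+2), (trm a₃ a₆ n' (m+2) (j+1) + a₃ * trm a₃ a₆ (n'+1) (m+1) (j+1)
          + a₆ * trm a₃ a₆ (n'+1) m j) := Finset.sum_congr rfl ht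
  simp only [Finset.sum_add_distrib] at hsum
  simp only [Finset.mul_sum, mul_add]
  linear_combination hsum + hb

lemma EzB (a₃ a₆ : ℤ) (n' m : ℕ) :
    ((m:ℤ)+2) * Ez a₃ a₆ n' (m+2) =
      (n':ℤ) * a₃ * Ez a₃ a₆ (n'+1) (m+1) + 2 * n' * a₆ * Ez a₃ a₆ (n'+1) m := by
  unfold Ez
  have e2 : ∑ j ∈ range (m+2), trm a₃ a₆ (n'+1) (m+1) j
      = ∑ j ∈ range (m+3), trm a₃ a₆ (n'+1) (m+1) j := by
    rw [Finset.sum_range_succ (f := trm a₃ a₆ (n'+1) (m+1)) (n := m+2),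
      trm_zero _ _ _ _ _ (by omega), add_zero]
  have e3 : ∑ j ∈ range (m+1), trm a₃ a₆ (n'+1) m j
      = ∑ j ∈ range (m+2), trm a₃ a₆ (n'+1) m j := by
    rw [Finset.sum_range_succ (f := trm a₃ a₆ (n'+1) m) (n := m+1),
      trm_zero _ _ _ _ _ (by omega), add_zero]
  rw [e2, e3]
  rw [Finset.sum_range_succ' (trm a₃ a₆ n' (m+2)) (m+2),
    Finset.sum_range_succ' (trm a₃ a₆ (n'+1) (m+1)) (m+2)]
  have hb : ((m:ℤ)+2) * trm a₃ a₆ n' (m+2) 0 = (n':ℤ) * (a₃ * trm a₃ a₆ (n'+1) (m+1) 0) := by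
    simp only [trm, Nat.sub_zero, Nat.mul_zero, pow_zero, mul_one, Nat.choose_zero_right]
    have hq : n' + (m+2) - 1 = n' + m + 1 := by omega
    have hq2 : n' + 1 + (m+1) - 1 = n' + m + 1 := by omega
    rw [hq, hq2]
    have h1 : (n'+m+1).choose (m+2) * (m+2) = (n'+m+1).choose (m+1) * n' := by
      rw [Nat.choose_succ_right_eq]; congr 1; omega
    have h1' : ((n'+m+1).choose (m+2) : ℤ) * (m+2) = ((n'+m+1).choose (m+1) : ℤ) * n' := by
      exact_mod_cast congrArg (Nat.cast : ℕ → ℤ) h1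
    have hp : (a₃ : ℤ)^(m+2) = a₃^(m+1) * a₃ := by ring
    rw [hp]
    push_cast
    linear_combination (a₃^(m+1) * a₃) * h1'
  have ht : ∀ j ∈ range (m+2),
      ((m:ℤ)+2) * trm a₃ a₆ n' (m+2) (j+1) =
        (n':ℤ) * (a₃ * trm a₃ a₆ (n'+1) (m+1) (j+1))
          + 2 * n' * (a₆ * trm a₃ a₆ (n'+1) m j) := by
    intro j hj
    by_cases h2j : 2*j ≤ m
    · obtain ⟨i, rfl⟩ : ∃ i, m = i + 2*j := ⟨m - 2*j, by omega⟩
      have hL : i + 2*j + 2 = i + 2*(j+1) := by ring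
      rw [hL, trm_eq, trm_a3, trm_eq]
      have q1 : n' + (i + (j+1)) - 1 = n' + i + j := by omega
      have q2 : n' + 1 + (i + j) - 1 = n' + i + j := by omega
      have q3 : i + (j+1) = i + j + 1 := by omega
      rw [q1, q2, q3]
      have := keyB n' i j
      push_cast at this ⊢
      linear_combination (a₃ ^ i * a₆ ^ (j+1)) * this
    · rw [trm_zero _ _ _ _ _ (by omega), trm_zero _ _ _ _ _ (by omega),
        trm_zero _ _ _ _ _ (by omega)]
      ring
  have hsum : ∑ j ∈ range (m+2), ((m:ℤ)+2) * trm a₃ a₆ n' (m+2) (j+1)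
      = ∑ j ∈ range (m+2), ((n':ℤ) * (a₃ * trm a₃ a₆ (n'+1) (m+1) (j+1))
          + 2 * n' * (a₆ * trm a₃ a₆ (n'+1) m j)) := Finset.sum_congr rfl ht
  simp only [Finset.sum_add_distrib] at hsum
  simp only [Finset.mul_sum, mul_add] at hsum ⊢
  simp only [← mul_assoc] at hsum hb ⊢
  linear_combination hsum + hb

lemma EzC (a₃ a₆ : ℤ) (n' m : ℕ) :
    ((m:ℤ)+2) * Ez a₃ a₆ (n'+1) (m+2) =
      ((m:ℤ) + n' + 2) * a₃ * Ez a₃ a₆ (n'+1) (m+1)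
        + ((m:ℤ) + 2*n' + 2) * a₆ * Ez a₃ a₆ (n'+1) m := by
  linear_combination ((m:ℤ)+2) * EzA a₃ a₆ n' m + EzB a₃ a₆ n' m

/-! ### Power series part -/

variable {a₃ a₆ : ℤ} {w : PowerSeries ℤ}

lemma coeff_w_small (hw0 : constantCoeff w = 0)
    (hw : w = X ^ 3 + C a₃ * w ^ 2 + C a₆ * w ^ 3) :
    ∀ m < 3, coeff m w = 0 := by
  have h0 : coeff 0 w = 0 := by rw [coeff_zero_eq_constantCoeff]; exact hw0
  have hw2 : w ^ 2 = w * w := sq w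
  have hw3 : w ^ 3 = w * (w * w) := by ring
  have m00 : coeff 0 (w * w) = 0 := by
    rw [coeff_mul, Finset.Nat.sum_antidiagonal_eq_sum_range_succ_mk]
    simp [h0]
  have m01 : coeff 1 (w * w) = 0 := by
    rw [coeff_mul, Finset.Nat.sum_antidiagonal_eq_sum_range_succ_mk]
    simp [Finset.sum_range_succ, h0]
  have t1 : coeff 1 (w * (w * w)) = 0 := by
    rw [coeff_mul, Finset.Nat.sum_antidiagonal_eq_sum_range_succ_mk]
    simp [Finset.sum_range_succ, h0, m00]
  have h1 : coeff 1 w = 0 := by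
    conv_lhs => rw [hw]
    rw [map_add, map_add, hw2, hw3, coeff_C_mul, coeff_C_mul, m01, t1, coeff_X_pow]
    norm_num
  have m02 : coeff 2 (w * w) = 0 := by
    rw [coeff_mul, Finset.Nat.sum_antidiagonal_eq_sum_range_succ_mk]
    simp [Finset.sum_range_succ, h0, h1]
  have t2 : coeff 2 (w * (w * w)) = 0 := by
    rw [coeff_mul, Finset.Nat.sum_antidiagonal_eq_sum_range_succ_mk]
    simp [Finset.sum_range_succ, h0, h1, m00, m01]
  have h2 : coeff 2 w = 0 := by
    conv_lhs => rw [hw]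
    rw [map_add, map_add, hw2, hw3, coeff_C_mul, coeff_C_mul, m02, t2, coeff_X_pow]
    norm_num
  intro m hm
  interval_cases m <;> assumption

lemma coeff_three (hw0 : constantCoeff w = 0)
    (hw : w = X ^ 3 + C a₃ * w ^ 2 + C a₆ * w ^ 3) :
    coeff 3 w = 1 := by
  have hs := coeff_w_small hw0 hw
  have h0 := hs 0 (by norm_num)
  have h1 := hs 1 (by norm_num)
  have h2 := hs 2 (by norm_num)
  have hw2 : w ^ 2 = w * w := sq w
  have hw3 : w ^ 3 = w * (w * w) := by ring
  have m00 : coeff 0 (w * w) = 0 := by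
    rw [coeff_mul, Finset.Nat.sum_antidiagonal_eq_sum_range_succ_mk]; simp [h0]
  have m01 : coeff 1 (w * w) = 0 := by
    rw [coeff_mul, Finset.Nat.sum_antidiagonal_eq_sum_range_succ_mk]
    simp [Finset.sum_range_succ, h0]
  have m03 : coeff 3 (w * w) = 0 := by
    rw [coeff_mul, Finset.Nat.sum_antidiagonal_eq_sum_range_succ_mk]
    simp [Finset.sum_range_succ, h0, h1, h2]
  have t3 : coeff 3 (w * (w * w)) = 0 := by
    rw [coeff_mul, Finset.Nat.sum_antidiagonal_eq_sum_range_succ_mk]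
    simp [Finset.sum_range_succ, h0, h1, h2, m00, m01]
  conv_lhs => rw [hw]
  rw [map_add, map_add, hw2, hw3, coeff_C_mul, coeff_C_mul, m03, t3, coeff_X_pow]
  norm_num

lemma hvan (hw0 : constantCoeff w = 0)
    (hw : w = X ^ 3 + C a₃ * w ^ 2 + C a₆ * w ^ 3)
    (r n : ℕ) (h : n < r) : coeff (3*n) (w^r) = 0 := by
  have hX : (X : PowerSeries ℤ)^3 ∣ w := X_pow_dvd_iff.mpr (coeff_w_small hw0 hw)
  have hXr : (X : PowerSeries ℤ)^(3*r) ∣ w^r := by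
    rw [pow_mul]; exact pow_dvd_pow_of_dvd hX r
  exact X_pow_dvd_iff.mp hXr _ (by omega)

lemma hrec (hw : w = X ^ 3 + C a₃ * w ^ 2 + C a₆ * w ^ 3)
    (r n : ℕ) (hn : 1 ≤ n) :
    coeff (3*n) (w^(r+1)) = coeff (3*(n-1)) (w^r)
      + a₃ * coeff (3*n) (w^(r+2)) + a₆ * coeff (3*n) (w^(r+3)) := by
  have hws : w^(r+1) = w^r * X^3 + C a₃ * w^(r+2) + C a₆ * w^(r+3) := by
    linear_combination (w^r) * hw
  rw [hws, map_add, map_add, coeff_C_mul, coeff_C_mul]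
  have h3 : 3*n = 3*(n-1) + 3 := by omega
  rw [h3, coeff_mul_X_pow]

lemma main (hw0 : constantCoeff w = 0)
    (hw : w = X ^ 3 + C a₃ * w ^ 2 + C a₆ * w ^ 3) :
    ∀ N t r : ℕ, 1 ≤ r → r + t = N →
      (N:ℤ) * coeff (3*N) (w^r) = r * Ez a₃ a₆ N t := by
  intro N
  induction N using Nat.strong_induction_on with
  | _ N IHN =>
  intro t
  induction t using Nat.strong_induction_on with
  | _ t IHt =>
  intro r hr hrt
  obtain ⟨r', rfl⟩ : ∃ r', r = r' + 1 := ⟨r - 1, by omega⟩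
  have hN1 : 1 ≤ N := by omega
  have hre := hrec hw r' N hN1
  match t, hrt with
  | 0, hrt =>
    -- r' + 1 = N
    have hv2 : coeff (3*N) (w^(r'+2)) = 0 := hvan hw0 hw _ _ (by omega)
    have hv3 : coeff (3*N) (w^(r'+3)) = 0 := hvan hw0 hw _ _ (by omega)
    rw [hv2, hv3, mul_zero, mul_zero, add_zero, add_zero] at hre
    rw [Ez_zero]
    rcases eq_or_ne N 1 with rfl | hNe
    · have hr0 : r' = 0 := by omega
      subst hr0
      rw [hre]
      norm_num [coeff_three hw0 hw]
    · have hN2 : 2 ≤ N := by omega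
      have hT1 : ((N:ℤ) - 1) * coeff (3*(N-1)) (w^r') = (r':ℤ) * Ez a₃ a₆ (N-1) 0 := by
        have h := IHN (N-1) (by omega) 0 r' (by omega) (by omega)
        push_cast [Nat.cast_sub (by omega : 1 ≤ N)] at h
        linear_combination h
      rw [Ez_zero] at hT1
      have hNz : ((N:ℤ) - 1) ≠ 0 := by
        have : (2:ℤ) ≤ (N:ℤ) := by exact_mod_cast hN2
        omega
      have hT1' : coeff (3*(N-1)) (w^r') = 1 := by
        apply mul_left_cancel₀ hNz
        rw [hT1]
        have : (r' : ℤ) = (N:ℤ) - 1 := by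
          have : r' + 1 = N := hrt
          push_cast [← this]; ring
        rw [this]
      rw [hre, hT1', mul_one, mul_one]
      have : r' + 1 = N := hrt
      push_cast [← this]; ring
  | 1, hrt =>
    -- r' + 2 = N
    obtain rfl : N = r' + 2 := by omega
    have hv3 : coeff (3*(r'+2)) (w^(r'+3)) = 0 := hvan hw0 hw _ _ (by omega)
    have hT2 := IHt 0 (by omega) (r'+2) (by omega) (by omega)
    rw [Ez_zero, mul_one] at hT2
    have hT1 : ((r':ℤ)+1) * coeff (3*(r'+1)) (w^r') = (r':ℤ) * Ez a₃ a₆ (r'+1) 1 := by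
      rcases Nat.eq_zero_or_pos r' with rfl | hpos
      · simp [coeff_one]
      · have h := IHN (r'+1) (by omega) 1 r' hpos (by omega)
        push_cast at h
        linear_combination h
    rw [Ez_one] at hT1
    rw [Ez_one]
    have h31 : 3*(r'+2) - 3 = 3*(r'+1) := by omega
    rw [show 3*(r'+2-1) = 3*(r'+1) by omega] at hre
    have hNz : ((r':ℤ) + 1) ≠ 0 := by positivity
    apply mul_left_cancel₀ hNz
    rw [hre, hv3]
    push_cast at hT1 hT2 ⊢
    linear_combination ((r':ℤ)+2) * hT1 + ((r':ℤ)+1) * a₃ * hT2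
  | (s+2), hrt =>
    obtain rfl : N = r' + s + 3 := by omega
    have hT2 := IHt (s+1) (by omega) (r'+2) (by omega) (by omega)
    have hT3 := IHt s (by omega) (r'+3) (by omega) (by omega)
    have hT1 : ((r':ℤ)+s+2) * coeff (3*(r'+s+2)) (w^r')
        = (r':ℤ) * Ez a₃ a₆ (r'+s+2) (s+2) := by
      rcases Nat.eq_zero_or_pos r' with rfl | hpos
      · simp [coeff_one]
      · have h := IHN (r'+s+2) (by omega) (s+2) r' hpos (by omega)
        push_cast at h
        linear_combination h
    have hA := EzA a₃ a₆ (r'+s+2) s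
    have hC := EzC a₃ a₆ (r'+s+2) s
    rw [show r'+s+2+1 = r'+s+3 from by omega] at hA hC
    rw [show 3*(r'+s+3-1) = 3*(r'+s+2) by omega] at hre
    have hNz : ((r':ℤ) + s + 2) ≠ 0 := by positivity
    apply mul_left_cancel₀ hNz
    rw [hre]
    push_cast at hT1 hT2 hT3 hA hC ⊢
    linear_combination ((r':ℤ)+s+3) * hT1 + ((r':ℤ)+s+2) * a₃ * hT2 + ((r':ℤ)+s+2) * a₆ * hT3
      - ((r':ℤ)+s+3) * (r':ℤ) * hA - hC

lemma hsupp (hw0 : constantCoeff w = 0)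
    (hw : w = X ^ 3 + C a₃ * w ^ 2 + C a₆ * w ^ 3) :
    ∀ j : ℕ, ¬ (3 ∣ j) → coeff j w = 0 := by
  have h0 : coeff 0 w = 0 := by rw [coeff_zero_eq_constantCoeff]; exact hw0
  have m00 : coeff 0 (w * w) = 0 := by
    rw [coeff_mul, Finset.Nat.sum_antidiagonal_eq_sum_range_succ_mk]
    simp [h0]
  have hw2 : w ^ 2 = w * w := sq w
  have hw3 : w ^ 3 = w * (w * w) := by ring
  intro j
  induction j using Nat.strong_induction_on with
  | _ j IH =>
  intro hj
  have h2 : coeff j (w * w) = 0 := by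
    rw [coeff_mul]
    apply Finset.sum_eq_zero
    rintro ⟨p1, p2⟩ hp
    rw [Finset.HasAntidiagonal.mem_antidiagonal] at hp
    by_cases d1 : 3 ∣ p1
    · have d2 : ¬ 3 ∣ p2 := by omega
      rcases eq_or_lt_of_le (show p2 ≤ j by omega) with heq | hlt
      · have hp1 : p1 = 0 := by omega
        simp [hp1, h0]
      · rw [IH p2 hlt d2, mul_zero]
    · rcases eq_or_lt_of_le (show p1 ≤ j by omega) with heq | hlt
      · have hp2 : p2 = 0 := by omega
        simp [hp2, h0]
      · rw [IH p1 hlt d1, zero_mul]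
  have hmul : ∀ b, b < j → ¬ 3 ∣ b → coeff b (w * w) = 0 := by
    intro b hb hdb
    rw [coeff_mul]
    apply Finset.sum_eq_zero
    rintro ⟨q1, q2⟩ hq
    rw [Finset.HasAntidiagonal.mem_antidiagonal] at hq
    by_cases d1 : 3 ∣ q1
    · have d2 : ¬ 3 ∣ q2 := by omega
      rw [IH q2 (by omega) d2, mul_zero]
    · rw [IH q1 (by omega) d1, zero_mul]
  have h3 : coeff j (w * (w * w)) = 0 := by
    rw [coeff_mul]
    apply Finset.sum_eq_zero
    rintro ⟨p1, p2⟩ hp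
    rw [Finset.HasAntidiagonal.mem_antidiagonal] at hp
    by_cases d1 : 3 ∣ p1
    · have d2 : ¬ 3 ∣ p2 := by omega
      rcases eq_or_lt_of_le (show p2 ≤ j by omega) with heq | hlt
      · have hp1 : p1 = 0 := by omega
        simp [hp1, h0]
      · rw [hmul p2 hlt d2, mul_zero]
    · rcases eq_or_lt_of_le (show p1 ≤ j by omega) with heq | hlt
      · have hp2 : p2 = 0 := by omega
        simp [hp2, m00]
      · rw [IH p1 hlt d1, zero_mul]
  conv_lhs => rw [hw]
  rw [map_add, map_add, hw2, hw3, coeff_C_mul, coeff_C_mul, h2, h3, coeff_X_pow]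
  have hj3 : j ≠ 3 := by omega
  simp [hj3]

lemma Ez_final (a₃ a₆ : ℤ) (n' : ℕ) :
    Ez a₃ a₆ (n'+1) n' = ∑ k ∈ Icc (n'/2) n',
      ((n'+k).choose k * k.choose (n'-k) : ℤ) * a₃^(2*k - n') * a₆^(n'-k) := by
  have step1 : Ez a₃ a₆ (n'+1) n' = ∑ j ∈ range (n'+1),
      (fun k => ((n'+k).choose k * k.choose (n'-k) : ℤ) * a₃^(2*k - n') * a₆^(n'-k)) (n'+1-1-j) := by
    unfold Ez
    apply Finset.sum_congr rfl
    intro j hj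
    rw [Finset.mem_range] at hj
    simp only [trm]
    have e0 : n' + 1 - 1 - j = n' - j := by omega
    have e1 : n' + 1 + (n' - j) - 1 = n' + (n' - j) := by omega
    have e2 : n' - (n' - j) = j := by omega
    have e3 : 2*(n' - j) - n' = n' - 2*j := by omega
    rw [e0, e2, e3, e1]
  rw [step1, Finset.sum_range_reflect
    (fun k => ((n'+k).choose k * k.choose (n'-k) : ℤ) * a₃^(2*k - n') * a₆^(n'-k)) (n'+1)]
  symm
  apply Finset.sum_subset
  · intro k hk
    rw [Finset.mem_Icc] at hk
    rw [Finset.mem_range]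
    omega
  · intro k hk hnk
    rw [Finset.mem_range] at hk
    rw [Finset.mem_Icc] at hnk
    have hklt : k < n'/2 := by omega
    have : k.choose (n'-k) = 0 := Nat.choose_eq_zero_of_lt (by omega)
    simp [this]

end Stmt17Aux

open Stmt17Aux in
theorem stmt17 (a₃ a₆ : ℤ) (w F : PowerSeries ℤ)
    (hw0 : PowerSeries.constantCoeff w = 0)
    (hw : w = X ^ 3 + C a₃ * w ^ 2 + C a₆ * w ^ 3)
    (hF : 3 * X ^ 2 * F = PowerSeries.derivative ℤ w) :
    (∀ m : ℕ, (∀ n : ℕ, 1 ≤ n → m ≠ 3 * n - 3) → PowerSeries.coeff m F = 0) ∧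
    (∀ n : ℕ, 1 ≤ n →
      PowerSeries.coeff (3 * n - 3) F =
        ∑ k ∈ Finset.Icc ((n - 1) / 2) (n - 1),
          ((n + k - 1).choose k * k.choose (n - k - 1) : ℤ) *
            a₃ ^ (2 * k + 1 - n) * a₆ ^ (n - 1 - k)) := by
  have hC3 : (3 : PowerSeries ℤ) * X^2 * F = C 3 * (X^2 * F) := by
    rw [mul_assoc]
    norm_num
  constructor
  · intro m hm
    have h3m : ¬ (3 ∣ m) := by
      rintro ⟨q, rfl⟩
      exact hm (q+1) (by omega) (by omega)
    have hd := congrArg (coeff (m+2)) hF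
    rw [coeff_derivative, hC3, coeff_C_mul, coeff_X_pow_mul] at hd
    rw [hsupp hw0 hw (m+2+1) (by omega)] at hd
    have : (3:ℤ) * coeff m F = 0 := by rw [hd]; ring
    omega
  · intro n hn
    obtain ⟨n', rfl⟩ : ∃ n', n = n'+1 := ⟨n-1, by omega⟩
    have hM := main hw0 hw (n'+1) n' 1 le_rfl (by omega)
    simp only [pow_one, Nat.cast_one, one_mul] at hM
    have hd := congrArg (coeff (3*n'+2)) hF
    rw [coeff_derivative, hC3, coeff_C_mul, coeff_X_pow_mul] at hd
    rw [show 3*n'+2+1 = 3*(n'+1) by ring] at hd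
    have hFv : coeff (3*n') F = Ez a₃ a₆ (n'+1) n' := by
      have h3 : (3:ℤ) ≠ 0 := by norm_num
      apply mul_left_cancel₀ h3
      rw [hd]
      push_cast at hM ⊢
      linear_combination 3 * hM
    rw [show 3*(n'+1) - 3 = 3*n' by omega, hFv, Ez_final]
    apply Finset.sum_congr
    · congr 1 <;> omega
    · intro k hk
      rw [Finset.mem_Icc] at hk
      have e1 : n'+1+k-1 = n'+k := by omega
      have e2 : n'+1-k-1 = n'-k := by omega
      have e3 : 2*k+1-(n'+1) = 2*k - n' := by omega
      have e4 : n'+1-1-k = n'-k := by omega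
      rw [e1, e2, e3, e4]
end
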